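/- arXiv:2504.13342 — 9 statements merged into one kernel-verified Lean document; each statement's English description precedes it below -/
import Mathlib

section
/- Let C = Z_q^n, let n ≥ t, and suppose at most t erasures may occur in each channel, with all N output words distinct. If V_2(n-a-1, t-a-1) + 1 ≤ N ≤ V_2(n-a, t-a) for some integer a ∈ [0, t-1], then the maximum list size is L = q^a. In particular, L = 1 when N ≥ V_2(n-1, t-1) + 1. -/
open Finset

/-- `V_2(m,r) = Σ_{i=0}^{r} C(m,i)`. -/
def V2 (m r : ℕ) : ℕ := ∑ i ∈ Finset.range (r + 1), m.choose i

/-- `y` (a word over `Z_q ∪ {*}`) is obtainable from `x ∈ (Z_q)^n` by at most `t` erasures. -/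
def ErasureOutput (n q t : ℕ) (x : Fin n → Fin q) (y : Fin n → Option (Fin q)) : Prop :=
  (∀ i, y i = some (x i) ∨ y i = none) ∧
    (Finset.univ.filter (fun i => y i = none)).card ≤ t

instance (n q t : ℕ) (x : Fin n → Fin q) (y : Fin n → Option (Fin q)) :
    Decidable (ErasureOutput n q t x y) := by
  unfold ErasureOutput; infer_instance

lemma count_small_subsets {ι : Type*} [DecidableEq ι] (u : Finset ι) (r : ℕ) :
    (u.powerset.filter (fun e => e.card ≤ r)).card = V2 u.card r := by
  have h : u.powerset.filter (fun e => e.card ≤ r)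
      = (Finset.range (r + 1)).biUnion (fun i => u.powersetCard i) := by
    ext e
    simp only [mem_filter, mem_powerset, mem_biUnion, mem_range, Finset.mem_powersetCard,
      Nat.lt_succ_iff]
    constructor
    · rintro ⟨h1, h2⟩; exact ⟨e.card, h2, h1, rfl⟩
    · rintro ⟨i, hi, h1, h2⟩; exact ⟨h1, h2 ▸ hi⟩
  rw [h, Finset.card_biUnion]
  · simp [V2, Finset.card_powersetCard]
  · intro i hi j hj hij
    rw [Function.onFun, Finset.disjoint_left]
    intro e he1 he2
    rw [Finset.mem_powersetCard] at he1 he2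
    omega

lemma card_filter_val_lt (n a : ℕ) (h : a ≤ n) :
    ((univ : Finset (Fin n)).filter (fun i : Fin n => (i : ℕ) < a)).card = a := by
  have himg : Finset.image Fin.val ((univ : Finset (Fin n)).filter (fun i : Fin n => (i : ℕ) < a))
      = Finset.range a := by
    ext m
    simp only [Finset.mem_image, mem_filter, mem_univ, true_and, Finset.mem_range]
    constructor
    · rintro ⟨i, hi, rfl⟩; exact hi
    · intro hm; exact ⟨⟨m, lt_of_lt_of_le hm h⟩, hm, rfl⟩
  calc ((univ : Finset (Fin n)).filter (fun i : Fin n => (i : ℕ) < a)).card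
      = (Finset.image Fin.val ((univ : Finset (Fin n)).filter (fun i : Fin n => (i : ℕ) < a))).card :=
        (Finset.card_image_of_injective _ Fin.val_injective).symm
    _ = a := by rw [himg, Finset.card_range]

/-- For `C = (Z_q)^n`, at most `t` erasures per channel and `N` distinct output words with
`V_2(n-a-1,t-a-1) + 1 ≤ N ≤ V_2(n-a,t-a)` for some `a ∈ [0,t-1]`, the maximum list size is
exactly `q^a`. -/
theorem stmt3 (q n t a N : ℕ) (hq : 2 ≤ q) (htn : t ≤ n) (ha : a + 1 ≤ t)
    (hN1 : V2 (n - a - 1) (t - a - 1) + 1 ≤ N) (hN2 : N ≤ V2 (n - a) (t - a)) :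
    (∀ (x : Fin n → Fin q) (Y : Finset (Fin n → Option (Fin q))),
        Y.card = N → (∀ y ∈ Y, ErasureOutput n q t x y) →
        (univ.filter (fun c : Fin n → Fin q => ∀ y ∈ Y, ErasureOutput n q t c y)).card ≤ q ^ a)
    ∧ (∃ (x : Fin n → Fin q) (Y : Finset (Fin n → Option (Fin q))),
        Y.card = N ∧ (∀ y ∈ Y, ErasureOutput n q t x y) ∧
        (univ.filter (fun c : Fin n → Fin q => ∀ y ∈ Y, ErasureOutput n q t c y)).card = q ^ a) := by
  have hq0 : 0 < q := by omega
  -- Part 1: the upper bound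
  have key : ∀ (x : Fin n → Fin q) (Y : Finset (Fin n → Option (Fin q))),
      Y.card = N → (∀ y ∈ Y, ErasureOutput n q t x y) →
      (univ.filter (fun c : Fin n → Fin q => ∀ y ∈ Y, ErasureOutput n q t c y)).card ≤ q ^ a := by
    intro x Y hcard hY
    set S := (univ : Finset (Fin n)).filter (fun i => ∀ y ∈ Y, y i = none) with hSdef
    -- the set of commonly erased positions has size at most a
    have hScard : S.card ≤ a := by
      by_contra hS
      push_neg at hS
      obtain ⟨S', hS'sub, hS'card⟩ := Finset.exists_subset_card_eq hS
      have hS'E : ∀ y ∈ Y, S' ⊆ univ.filter (fun i => y i = none) := by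
        intro y hy i hi
        have h1 := hS'sub hi
        rw [hSdef, mem_filter] at h1
        simp only [mem_filter, mem_univ, true_and]
        exact h1.2 y hy
      have hinj : Set.InjOn (fun y : Fin n → Option (Fin q) =>
          (univ.filter (fun i => y i = none)) \ S') ↑Y := by
        intro y₁ hy₁ y₂ hy₂ heq
        have hE : (univ.filter (fun i => y₁ i = none)) = (univ.filter (fun i => y₂ i = none)) := by
          have h1 := hS'E y₁ hy₁
          have h2 := hS'E y₂ hy₂
          rw [← Finset.sdiff_union_of_subset h1, ← Finset.sdiff_union_of_subset h2]
          simp only at heq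
          rw [heq]
        funext i
        by_cases hi : y₁ i = none
        · have h2 : i ∈ univ.filter (fun i => y₂ i = none) := by
            rw [← hE]; simp [hi]
          rw [mem_filter] at h2
          rw [hi, h2.2]
        · have hi2 : ¬ y₂ i = none := by
            intro h2
            have h3 : i ∈ univ.filter (fun i => y₁ i = none) := by
              rw [hE]; simp [h2]
            rw [mem_filter] at h3
            exact hi h3.2
          have e1 := ((hY y₁ hy₁).1 i).resolve_right hi
          have e2 := ((hY y₂ hy₂).1 i).resolve_right hi2
          rw [e1, e2]
      have hmaps : ∀ y ∈ Y, (univ.filter (fun i => y i = none)) \ S'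
          ∈ ((univ \ S').powerset.filter (fun e => e.card ≤ t - (a + 1))) := by
        intro y hy
        rw [mem_filter, mem_powerset]
        constructor
        · exact Finset.sdiff_subset_sdiff (Finset.subset_univ _) le_rfl
        · rw [Finset.card_sdiff_of_subset (hS'E y hy), hS'card]
          have h4 := (hY y hy).2
          omega
      have hle := Finset.card_le_card_of_injOn _ hmaps hinj
      rw [count_small_subsets] at hle
      have hcard_u : (univ \ S').card = n - (a + 1) := by
        rw [Finset.card_sdiff_of_subset (Finset.subset_univ _), hS'card, Finset.card_univ, Fintype.card_fin]
      rw [hcard_u] at hle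
      have h5 : n - (a + 1) = n - a - 1 := by omega
      have h6 : t - (a + 1) = t - a - 1 := by omega
      rw [h5, h6, hcard] at hle
      omega
    -- candidates are determined outside S
    have hmaps : ∀ c ∈ univ.filter (fun c : Fin n → Fin q => ∀ y ∈ Y, ErasureOutput n q t c y),
        (fun i : {i // i ∈ S} => c i.1) ∈ (univ : Finset ({i // i ∈ S} → Fin q)) :=
      fun _ _ => mem_univ _
    have hinj : Set.InjOn (fun (c : Fin n → Fin q) (i : {i // i ∈ S}) => c i.1)
        (↑(univ.filter (fun c : Fin n → Fin q => ∀ y ∈ Y, ErasureOutput n q t c y)) :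
          Set (Fin n → Fin q)) := by
      intro c₁ hc₁ c₂ hc₂ heq
      simp only [Finset.coe_filter, Set.mem_setOf_eq, mem_univ, true_and] at hc₁ hc₂
      funext i
      by_cases hi : i ∈ S
      · exact congrFun heq ⟨i, hi⟩
      · rw [hSdef, mem_filter] at hi
        push_neg at hi
        obtain ⟨y, hy, hyi⟩ := hi (mem_univ i)
        have e1 := ((hc₁ y hy).1 i).resolve_right hyi
        have e2 := ((hc₂ y hy).1 i).resolve_right hyi
        rw [e1] at e2
        exact Option.some_injective _ e2
    have hle2 := Finset.card_le_card_of_injOn _ hmaps hinj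
    have hcardfun : (univ : Finset ({i // i ∈ S} → Fin q)).card = q ^ S.card := by
      rw [Finset.card_univ, Fintype.card_fun, Fintype.card_coe, Fintype.card_fin]
    rw [hcardfun] at hle2
    exact hle2.trans (Nat.pow_le_pow_right hq0 hScard)
  refine ⟨key, ?_⟩
  -- Part 2: the construction
  set z : Fin q := ⟨0, hq0⟩ with hz
  set x : Fin n → Fin q := fun _ => z with hx
  set A : Finset (Fin n) := univ.filter (fun i => (i : ℕ) < a) with hAdef
  have hA : A.card = a := card_filter_val_lt n a (by omega)
  set B : Finset (Fin n) := univ \ A with hBdef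
  have hB : B.card = n - a := by
    rw [hBdef, Finset.card_sdiff_of_subset (Finset.subset_univ _), Finset.card_univ, Fintype.card_fin, hA]
  have hF : ((B.powerset.filter (fun e => e.card ≤ t - a))).card = V2 (n - a) (t - a) := by
    rw [count_small_subsets, hB]
  have hN2' : N ≤ (B.powerset.filter (fun e => e.card ≤ t - a)).card := by rw [hF]; exact hN2
  obtain ⟨Y', hY'sub, hY'card⟩ := Finset.exists_subset_card_eq hN2'
  set yf : Finset (Fin n) → (Fin n → Option (Fin q)) :=
    fun e i => if i ∈ A ∪ e then none else some z with hyf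
  have hdisj : ∀ e ∈ Y', Disjoint A e := by
    intro e he
    have hsub : e ⊆ B := Finset.mem_powerset.mp (mem_filter.mp (hY'sub he)).1
    exact Disjoint.mono_right hsub Finset.disjoint_sdiff
  have hEset : ∀ e : Finset (Fin n), univ.filter (fun i => yf e i = none) = A ∪ e := by
    intro e
    have hiff : ∀ i, (yf e i = none) ↔ i ∈ A ∪ e := by
      intro i
      by_cases h : i ∈ A ∪ e
      · show (if i ∈ A ∪ e then (none : Option (Fin q)) else some z) = none ↔ i ∈ A ∪ e
        rw [if_pos h]; simp [h]
      · show (if i ∈ A ∪ e then (none : Option (Fin q)) else some z) = none ↔ i ∈ A ∪ e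
        rw [if_neg h]; simp [h]
    ext i
    simp only [mem_filter, mem_univ, true_and, hiff]
  have hcount : ∀ e ∈ Y', (A ∪ e).card ≤ t := by
    intro e he
    have h1 := (mem_filter.mp (hY'sub he)).2
    rw [Finset.card_union_of_disjoint (hdisj e he), hA]
    omega
  have hEO : ∀ e ∈ Y', ErasureOutput n q t x (yf e) := by
    intro e he
    refine ⟨fun i => ?_, ?_⟩
    · by_cases h : i ∈ A ∪ e
      · right
        show (if i ∈ A ∪ e then (none : Option (Fin q)) else some z) = none
        rw [if_pos h]
      · left
        show (if i ∈ A ∪ e then (none : Option (Fin q)) else some z) = some (x i)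
        rw [if_neg h]
    · rw [hEset e]; exact hcount e he
  have hinjY : Set.InjOn yf ↑Y' := by
    intro e₁ he₁ e₂ he₂ heq
    have h1 : A ∪ e₁ = A ∪ e₂ := by
      rw [← hEset e₁, ← hEset e₂, heq]
    calc e₁ = (A ∪ e₁) \ A := (Finset.union_sdiff_cancel_left (hdisj e₁ he₁)).symm
      _ = (A ∪ e₂) \ A := by rw [h1]
      _ = e₂ := Finset.union_sdiff_cancel_left (hdisj e₂ he₂)
  set Y := Y'.image yf with hYdef
  have hYcard : Y.card = N := by
    rw [hYdef, Finset.card_image_of_injOn hinjY, hY'card]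
  have hYout : ∀ y ∈ Y, ErasureOutput n q t x y := by
    intro y hy
    obtain ⟨e, he, rfl⟩ := Finset.mem_image.mp hy
    exact hEO e he
  refine ⟨x, Y, hYcard, hYout, ?_⟩
  refine le_antisymm (key x Y hYcard hYout) ?_
  set g : ({i // i ∈ A} → Fin q) → (Fin n → Fin q) :=
    fun f i => if h : i ∈ A then f ⟨i, h⟩ else z with hg
  have hginj : Function.Injective g := by
    intro f₁ f₂ hEq
    funext i
    have h1 := congrFun hEq i.1
    simpa [hg, i.2] using h1
  have hgmem : ∀ f, g f ∈ univ.filter (fun c : Fin n → Fin q => ∀ y ∈ Y, ErasureOutput n q t c y) := by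
    intro f
    rw [mem_filter]
    refine ⟨mem_univ _, ?_⟩
    intro y hy
    obtain ⟨e, he, rfl⟩ := Finset.mem_image.mp hy
    refine ⟨fun i => ?_, ?_⟩
    · by_cases h : i ∈ A ∪ e
      · right
        show (if i ∈ A ∪ e then (none : Option (Fin q)) else some z) = none
        rw [if_pos h]
      · left
        have hiA : i ∉ A := fun hh => h (Finset.mem_union_left _ hh)
        show (if i ∈ A ∪ e then (none : Option (Fin q)) else some z) = some (g f i)
        rw [if_neg h]
        congr 1
        show z = if h : i ∈ A then f ⟨i, h⟩ else z
        rw [dif_neg hiA]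
    · rw [hEset e]; exact hcount e he
  calc q ^ a = (univ : Finset ({i // i ∈ A} → Fin q)).card := by
        rw [Finset.card_univ, Fintype.card_fun, Fintype.card_coe, Fintype.card_fin, hA]
    _ = (Finset.image g univ).card := (Finset.card_image_of_injective _ hginj).symm
    _ ≤ _ := Finset.card_le_card (by
        intro c hc
        obtain ⟨f, _, rfl⟩ := Finset.mem_image.mp hc
        exact hgmem f)
end

section
/- Let C ⊆ Z_q^n be a code with minimum Hamming distance d, n ≥ t, and suppose at most t erasures occur in each channel with all N output words distinct. If V_2(n-a-1, t-a-1) + 1 ≤ N ≤ V_2(n-a, t-a) for some integer a ∈ [1, t-1], then the maximum list size equals A_q(a, d), the maximum size of a q-ary code of length a with minimum distance d (where A_q(a,d) = 1 when d > a). -/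
open Finset

/-- A code of length `m` over `Z_q` has minimum Hamming distance (exactly) `d`. -/
def HasMinDist {m q : ℕ} (C : Finset (Fin m → Fin q)) (d : ℕ) : Prop :=
  (∀ c1 ∈ C, ∀ c2 ∈ C, c1 ≠ c2 → d ≤ hammingDist c1 c2) ∧
    (∃ c1 ∈ C, ∃ c2 ∈ C, c1 ≠ c2 ∧ hammingDist c1 c2 = d)

/-- `A_q(m,d)`: the maximum size of a code in `(Z_q)^m` with minimum distance `d`
(where any code with fewer than two codewords has minimum distance at least `d` vacuously,
so `A_q(m,d) = 1` when `d > m`). -/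
noncomputable def Aq (q m d : ℕ) : ℕ :=
  sSup {k : ℕ | ∃ C : Finset (Fin m → Fin q),
    (∀ c1 ∈ C, ∀ c2 ∈ C, c1 ≠ c2 → d ≤ hammingDist c1 c2) ∧ C.card = k}

/-! ### Auxiliary lemmas -/

lemma aq_bdd (q m d : ℕ) : BddAbove {k : ℕ | ∃ C : Finset (Fin m → Fin q),
    (∀ c1 ∈ C, ∀ c2 ∈ C, c1 ≠ c2 → d ≤ hammingDist c1 c2) ∧ C.card = k} := by
  refine ⟨Fintype.card (Fin m → Fin q), ?_⟩
  rintro k ⟨C, -, rfl⟩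
  exact Finset.card_le_univ C

lemma card_le_aq {q m d : ℕ} (D : Finset (Fin m → Fin q))
    (h : ∀ c1 ∈ D, ∀ c2 ∈ D, c1 ≠ c2 → d ≤ hammingDist c1 c2) : D.card ≤ Aq q m d :=
  le_csSup (aq_bdd q m d) ⟨D, h, rfl⟩

lemma aq_exists (q m d : ℕ) : ∃ D : Finset (Fin m → Fin q),
    (∀ c1 ∈ D, ∀ c2 ∈ D, c1 ≠ c2 → d ≤ hammingDist c1 c2) ∧ D.card = Aq q m d := by
  have hne : {k : ℕ | ∃ C : Finset (Fin m → Fin q),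
      (∀ c1 ∈ C, ∀ c2 ∈ C, c1 ≠ c2 → d ≤ hammingDist c1 c2) ∧ C.card = k}.Nonempty :=
    ⟨0, ∅, by simp, by simp⟩
  exact Nat.sSup_mem hne (aq_bdd q m d)

/-- counting subsets of `M` of cardinality at most `r` -/
lemma count_small_subsets_s4 {α : Type*} [DecidableEq α] (M : Finset α) (r : ℕ) :
    (M.powerset.filter (fun T => T.card ≤ r)).card = V2 M.card r := by
  have : M.powerset.filter (fun T => T.card ≤ r)
      = (Finset.range (r+1)).biUnion (fun i => M.powersetCard i) := by
    ext T
    simp only [mem_filter, mem_powerset, mem_biUnion, mem_range, mem_powersetCard]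
    constructor
    · rintro ⟨h1, h2⟩; exact ⟨T.card, by omega, h1, rfl⟩
    · rintro ⟨i, hi, hT, rfl⟩; exact ⟨hT, by omega⟩
  rw [this, Finset.card_biUnion, V2]
  · exact Finset.sum_congr rfl fun i _ => Finset.card_powersetCard i M
  · intro i _ j _ hij
    simp only [Finset.disjoint_left, mem_powersetCard]
    rintro T ⟨-, rfl⟩ ⟨-, h⟩
    exact hij (h ▸ rfl)

lemma card_filter_lt (n k : ℕ) (h : k ≤ n) :
    ((Finset.univ : Finset (Fin n)).filter (fun i : Fin n => (i : ℕ) < k)).card = k := by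
  have himg : (Finset.univ : Finset (Fin n)).filter (fun i : Fin n => (i : ℕ) < k)
      = (Finset.univ : Finset (Fin k)).image (Fin.castLE h) := by
    ext i
    simp only [mem_filter, mem_univ, true_and, mem_image]
    constructor
    · intro hi; exact ⟨⟨(i : ℕ), hi⟩, by ext; simp⟩
    · rintro ⟨j, rfl⟩; exact j.isLt
  rw [himg, Finset.card_image_of_injective _ (Fin.castLE_injective h), card_univ,
    Fintype.card_fin]

def embedW {q : ℕ} (n a : ℕ) (z : Fin q) (c : Fin a → Fin q) : Fin n → Fin q :=
  fun i => if h : (i : ℕ) < a then c ⟨i, h⟩ else z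

lemma embedW_dist {q : ℕ} (n a : ℕ) (han : a ≤ n) (z : Fin q) (c1 c2 : Fin a → Fin q) :
    hammingDist (embedW n a z c1) (embedW n a z c2) = hammingDist c1 c2 := by
  unfold hammingDist
  have himg : ({i | embedW n a z c1 i ≠ embedW n a z c2 i} : Finset (Fin n))
      = ({j | c1 j ≠ c2 j} : Finset (Fin a)).image (Fin.castLE han) := by
    ext i
    simp only [mem_filter, mem_univ, true_and, mem_image]
    simp only [embedW]
    constructor
    · intro hi
      by_cases h : (i : ℕ) < a
      · refine ⟨⟨(i : ℕ), h⟩, ?_, by ext; simp⟩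
        simpa [h] using hi
      · simp [h] at hi
    · rintro ⟨j, hj, rfl⟩
      simpa [j.isLt] using hj
  rw [himg, Finset.card_image_of_injective _ (Fin.castLE_injective han)]

lemma embedW_inj {q : ℕ} (n a : ℕ) (han : a ≤ n) (z : Fin q) :
    Function.Injective (embedW (q := q) n a z) := by
  intro c1 c2 h
  have := embedW_dist n a han z c1 c2
  rw [h, hammingDist_self] at this
  exact (hammingDist_eq_zero.mp this.symm)

/-- the collection of erasure-pattern sets containing the first `a` coordinates -/
lemma coll_card (n t a : ℕ) (hat : a ≤ t) (htn : t ≤ n) :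
    ((Finset.univ : Finset (Fin n)).powerset.filter
      (fun S => (Finset.univ.filter (fun i : Fin n => (i : ℕ) < a)) ⊆ S ∧ S.card ≤ t)).card
      = V2 (n - a) (t - a) := by
  classical
  set I : Finset (Fin n) := Finset.univ.filter (fun i : Fin n => (i : ℕ) < a) with hI
  have hIcard : I.card = a := card_filter_lt n a (by omega)
  have hcompl : ((Finset.univ : Finset (Fin n)) \ I).card = n - a := by
    rw [Finset.card_sdiff_of_subset (Finset.subset_univ _), hIcard, card_univ, Fintype.card_fin]
  have := count_small_subsets_s4 ((Finset.univ : Finset (Fin n)) \ I) (t - a)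
  rw [hcompl] at this
  rw [← this]
  apply Finset.card_bij' (fun S _ => S \ I) (fun T _ => T ∪ I)
  · intro S hS
    simp only [mem_filter, mem_powerset] at hS
    obtain ⟨-, hIS, hScard⟩ := hS
    simp only [mem_filter, mem_powerset]
    constructor
    · intro i hi
      simp only [mem_sdiff] at hi ⊢
      exact ⟨mem_univ _, hi.2⟩
    · rw [Finset.card_sdiff_of_subset hIS, hIcard]
      omega
  · intro T hT
    simp only [mem_filter, mem_powerset] at hT
    obtain ⟨hTsub, hTcard⟩ := hT
    have hdisj : Disjoint T I := by
      intro U hUT hUI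
      intro u hu
      have h1 := hTsub (hUT hu)
      simp only [mem_sdiff] at h1
      exact absurd (hUI hu) h1.2
    simp only [mem_filter, mem_powerset]
    refine ⟨Finset.subset_univ _, Finset.subset_union_right, ?_⟩
    rw [Finset.card_union_of_disjoint hdisj, hIcard]
    omega
  · intro S hS
    simp only [mem_filter, mem_powerset] at hS
    exact Finset.sdiff_union_of_subset hS.2.1
  · intro T hT
    simp only [mem_filter, mem_powerset] at hT
    have hdisj : Disjoint T I := by
      intro U hUT hUI u hu
      have h1 := hT.1 (hUT hu)
      simp only [mem_sdiff] at h1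
      exact absurd (hUI hu) h1.2
    rw [Finset.union_sdiff_right]
    exact Finset.sdiff_eq_self_of_disjoint hdisj

/-- two words at distance exactly d, for d ≤ a, q ≥ 2 -/
lemma exists_pair_dist (q a d : ℕ) (hq : 2 ≤ q) (hda : d ≤ a) :
    ∃ z e : Fin a → Fin q, hammingDist z e = d ∧
      z = (fun _ : Fin a => (⟨0, by omega⟩ : Fin q)) ∧
      e = (fun j : Fin a => if (j : ℕ) < d then (⟨1, by omega⟩ : Fin q)
        else (⟨0, by omega⟩ : Fin q)) := by
  refine ⟨_, _, ?_, rfl, rfl⟩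
  unfold hammingDist
  rw [show ({j | (fun _ => (⟨0, by omega⟩ : Fin q)) j ≠
      (fun j : Fin a => if (j : ℕ) < d then (⟨1, by omega⟩ : Fin q) else ⟨0, by omega⟩) j} :
        Finset (Fin a))
      = Finset.univ.filter (fun j : Fin a => (j : ℕ) < d) from ?_]
  · exact card_filter_lt a d hda
  · ext j
    simp only [mem_filter, mem_univ, true_and]
    by_cases h : (j : ℕ) < d
    · simp [h, Fin.ext_iff]
    · simp [h]

lemma two_le_aq (q a d : ℕ) (hq : 2 ≤ q) (hd1 : 1 ≤ d) (hda : d ≤ a) : 2 ≤ Aq q a d := by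
  obtain ⟨z, e, hzed, hz, he⟩ := exists_pair_dist q a d hq hda
  have hzne : z ≠ e := by
    intro h
    rw [h, hammingDist_self] at hzed
    omega
  have h2 : ({z, e} : Finset (Fin a → Fin q)).card = 2 := Finset.card_pair hzne
  calc 2 = ({z, e} : Finset (Fin a → Fin q)).card := h2.symm
    _ ≤ Aq q a d := by
      apply card_le_aq
      intro c1 h1 c2 h2 hne
      simp only [mem_insert, mem_singleton] at h1 h2
      rcases h1 with rfl | rfl <;> rcases h2 with rfl | rfl
      · exact absurd rfl hne
      · omega
      · rw [hammingDist_comm]; omega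
      · exact absurd rfl hne

/-- an optimal code containing a pair at distance exactly d, when 1 ≤ d ≤ a, q ≥ 2 -/
lemma exists_good_code (q a d : ℕ) (hq : 2 ≤ q) (hd1 : 1 ≤ d) (hda : d ≤ a) :
    ∃ D : Finset (Fin a → Fin q),
      (∀ c1 ∈ D, ∀ c2 ∈ D, c1 ≠ c2 → d ≤ hammingDist c1 c2) ∧ D.card = Aq q a d ∧
      ∃ c1 ∈ D, ∃ c2 ∈ D, c1 ≠ c2 ∧ hammingDist c1 c2 = d := by
  classical
  obtain ⟨D0, hD0, hD0card⟩ := aq_exists q a d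
  have h2 : 2 ≤ D0.card := hD0card ▸ two_le_aq q a d hq hd1 hda
  set P := (D0 ×ˢ D0).filter (fun p => p.1 ≠ p.2) with hP
  have hPne : P.Nonempty := by
    obtain ⟨c1, h1, c2, h2, hne⟩ := Finset.one_lt_card.mp (show 1 < D0.card by omega)
    exact ⟨(c1, c2), by simp [hP, Finset.mem_product, h1, h2, hne]⟩
  obtain ⟨⟨c1, c2⟩, hmem, hmin⟩ := Finset.exists_min_image P (fun p => hammingDist p.1 p.2) hPne
  simp only [hP, mem_filter, Finset.mem_product] at hmem
  obtain ⟨⟨hc1, hc2⟩, hne⟩ := hmem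
  set d' := hammingDist c1 c2 with hd'
  have hdd' : d ≤ d' := hD0 c1 hc1 c2 hc2 hne
  have hminall : ∀ c ∈ D0, c ≠ c2 → d' ≤ hammingDist c c2 := by
    intro c hc hcne
    exact hmin (c, c2) (by simp [hP, Finset.mem_product, hc, hc2, hcne])
  set Δ : Finset (Fin a) := {j | c1 j ≠ c2 j} with hΔ
  have hΔcard : Δ.card = d' := rfl
  obtain ⟨K, hKΔ, hKcard⟩ := Finset.exists_subset_card_eq
    (show d' - d ≤ Δ.card by omega)
  set c2' : Fin a → Fin q := fun j => if j ∈ K then c1 j else c2 j with hc2'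
  have hd22' : hammingDist c2 c2' = d' - d := by
    unfold hammingDist
    rw [show ({j | c2 j ≠ c2' j} : Finset (Fin a)) = K from ?_]
    · exact hKcard
    · ext j
      simp only [mem_filter, mem_univ, true_and, hc2']
      by_cases h : j ∈ K
      · have := hKΔ h
        simp only [hΔ, mem_filter, mem_univ, true_and] at this
        simp [h]
        exact fun heq => this heq.symm
      · simp [h]
  have hd12' : hammingDist c1 c2' = d := by
    unfold hammingDist
    rw [show ({j | c1 j ≠ c2' j} : Finset (Fin a)) = Δ \ K from ?_]
    · rw [Finset.card_sdiff_of_subset hKΔ, hΔcard, hKcard]; omega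
    · ext j
      simp only [mem_filter, mem_univ, true_and, hc2', mem_sdiff, hΔ]
      by_cases h : j ∈ K
      · simp [h]
      · simp [h]
  have hfar : ∀ c ∈ D0, c ≠ c2 → d ≤ hammingDist c c2' := by
    intro c hc hcne
    have htri := hammingDist_triangle c c2' c2
    have h1 := hminall c hc hcne
    have h2 : hammingDist c2' c2 = d' - d := by rw [hammingDist_comm]; exact hd22'
    omega
  have hc2'notin : c2' ∉ D0.erase c2 := by
    intro h
    have h1 := Finset.mem_of_mem_erase h
    have h2 := Finset.ne_of_mem_erase h
    have := hfar c2' h1 h2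
    rw [hammingDist_self] at this
    omega
  refine ⟨insert c2' (D0.erase c2), ?_, ?_, c1, ?_, c2', Finset.mem_insert_self _ _, ?_, hd12'⟩
  · intro b1 hb1 b2 hb2 hbne
    rcases Finset.mem_insert.mp hb1 with rfl | hb1' <;>
      rcases Finset.mem_insert.mp hb2 with rfl | hb2'
    · exact absurd rfl hbne
    · rw [hammingDist_comm]
      exact hfar b2 (Finset.mem_of_mem_erase hb2') (Finset.ne_of_mem_erase hb2')
    · exact hfar b1 (Finset.mem_of_mem_erase hb1') (Finset.ne_of_mem_erase hb1')
    · exact hD0 b1 (Finset.mem_of_mem_erase hb1') b2 (Finset.mem_of_mem_erase hb2') hbne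
  · rw [Finset.card_insert_of_notMem hc2'notin, Finset.card_erase_of_mem hc2, hD0card]
    have : 1 ≤ Aq q a d := by
      have := two_le_aq q a d hq hd1 hda
      omega
    omega
  · apply Finset.mem_insert_of_mem
    exact Finset.mem_erase_of_ne_of_mem hne hc1
  · intro h
    rw [h, hammingDist_self] at hd12'
    omega

lemma aq_eq_one (q a d : ℕ) (hq : 1 ≤ q) (had : a < d) : Aq q a d = 1 := by
  apply le_antisymm
  · have hne : {k : ℕ | ∃ C : Finset (Fin a → Fin q),
        (∀ c1 ∈ C, ∀ c2 ∈ C, c1 ≠ c2 → d ≤ hammingDist c1 c2) ∧ C.card = k}.Nonempty :=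
      ⟨0, ∅, by simp, by simp⟩
    apply csSup_le hne
    rintro k ⟨D, hD, rfl⟩
    by_contra hcon
    push_neg at hcon
    obtain ⟨c1, h1, c2, h2, hne⟩ := Finset.one_lt_card.mp (show 1 < D.card by omega)
    have hle := hD c1 h1 c2 h2 hne
    have : hammingDist c1 c2 ≤ a := by
      have := hammingDist_le_card_fintype (x := c1) (y := c2)
      rwa [Fintype.card_fin] at this
    omega
  · apply le_csSup (aq_bdd q a d)
    refine ⟨{fun _ => (⟨0, by omega⟩ : Fin q)}, ?_, Finset.card_singleton _⟩
    intro c1 h1 c2 h2 hne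
    simp only [mem_singleton] at h1 h2
    exact absurd (h1.trans h2.symm) hne

def yof {q : ℕ} (n : ℕ) (x : Fin n → Fin q) (S : Finset (Fin n)) : Fin n → Option (Fin q) :=
  fun i => if i ∈ S then none else some (x i)

lemma yof_none_set {q n : ℕ} (x : Fin n → Fin q) (S : Finset (Fin n)) :
    Finset.univ.filter (fun i => yof n x S i = none) = S := by
  ext i
  simp only [mem_filter, mem_univ, true_and, yof]
  by_cases h : i ∈ S <;> simp [h]

lemma yof_inj {q n : ℕ} (x : Fin n → Fin q) : Function.Injective (yof n x) := by
  intro S1 S2 h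
  rw [← yof_none_set x S1, ← yof_none_set x S2, h]

lemma erasure_yof {q n t : ℕ} (x c : Fin n → Fin q) (S : Finset (Fin n))
    (hS : S.card ≤ t) (hagree : ∀ i, i ∉ S → c i = x i) :
    ErasureOutput n q t c (yof n x S) := by
  constructor
  · intro i
    by_cases h : i ∈ S
    · right; simp [yof, h]
    · left; simp [yof, h, hagree i h]
  · rw [yof_none_set]; exact hS

/-- For a code `C ⊆ (Z_q)^n` of minimum distance `d`, at most `t` erasures per channel and `N`
distinct output words with `V_2(n-a-1,t-a-1) + 1 ≤ N ≤ V_2(n-a,t-a)` for some `a ∈ [1,t-1]`,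
the maximum list size is exactly `A_q(a,d)`. -/
theorem stmt4 (q n t a N d : ℕ) (hq : 2 ≤ q) (htn : t ≤ n) (ha1 : 1 ≤ a) (ha : a + 1 ≤ t)
    (hd1 : 1 ≤ d) (hdn : d ≤ n)
    (hN1 : V2 (n - a - 1) (t - a - 1) + 1 ≤ N) (hN2 : N ≤ V2 (n - a) (t - a)) :
    (∀ (C : Finset (Fin n → Fin q)), HasMinDist C d →
      ∀ x ∈ C, ∀ (Y : Finset (Fin n → Option (Fin q))),
        Y.card = N → (∀ y ∈ Y, ErasureOutput n q t x y) →
        (C.filter (fun c => ∀ y ∈ Y, ErasureOutput n q t c y)).card ≤ Aq q a d)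
    ∧ (∃ (C : Finset (Fin n → Fin q)), HasMinDist C d ∧
        ∃ x ∈ C, ∃ (Y : Finset (Fin n → Option (Fin q))),
          Y.card = N ∧ (∀ y ∈ Y, ErasureOutput n q t x y) ∧
          (C.filter (fun c => ∀ y ∈ Y, ErasureOutput n q t c y)).card = Aq q a d) := by
  classical
  constructor
  · -- upper bound
    intro C hC x hx Y hYcard hYout
    set E : (Fin n → Option (Fin q)) → Finset (Fin n) :=
      fun y => Finset.univ.filter (fun i => y i = none) with hE
    have hydet : ∀ y ∈ Y, ∀ i, i ∉ E y → y i = some (x i) := by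
      intro y hy i hi
      rcases (hYout y hy).1 i with h | h
      · exact h
      · exact absurd (by simp [hE, h]) hi
    have hmemI : ∀ i : Fin n, i ∈ Y.inf E ↔ ∀ y ∈ Y, y i = none := by
      intro i
      rw [Finset.mem_inf]
      constructor
      · intro h y hy; simpa [hE] using h y hy
      · intro h y hy; simp [hE, h y hy]
    set I : Finset (Fin n) := Y.inf E with hI
    have hIle : I.card ≤ a := by
      by_contra hcon
      push_neg at hcon
      obtain ⟨I', hI'I, hI'card⟩ := Finset.exists_subset_card_eq (show a + 1 ≤ I.card by omega)
      have hI'E : ∀ y ∈ Y, I' ⊆ E y := fun y hy => hI'I.trans (Finset.inf_le hy)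
      have hbound : Y.card ≤ (((Finset.univ : Finset (Fin n)) \ I').powerset.filter
          (fun T => T.card ≤ t - a - 1)).card := by
        apply Finset.card_le_card_of_injOn (fun y => E y \ I')
        · intro y hy
          simp only [Finset.mem_coe, mem_filter, mem_powerset]
          constructor
          · intro i hi
            simp only [mem_sdiff] at hi ⊢
            exact ⟨mem_univ i, hi.2⟩
          · have h1 : (E y \ I').card = (E y).card - I'.card :=
              Finset.card_sdiff_of_subset (hI'E y hy)
            have h2 : (E y).card ≤ t := (hYout y hy).2
            omega
        · intro y1 hy1 y2 hy2 heq
          simp only at heq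
          have hEeq : E y1 = E y2 := by
            have h1 : E y1 = (E y1 \ I') ∪ I' := by
              rw [Finset.sdiff_union_of_subset (hI'E y1 hy1)]
            have h2 : E y2 = (E y2 \ I') ∪ I' := by
              rw [Finset.sdiff_union_of_subset (hI'E y2 hy2)]
            rw [h1, h2, heq]
          funext i
          by_cases hi : i ∈ E y1
          · have hi2 : i ∈ E y2 := hEeq ▸ hi
            simp only [hE, mem_filter] at hi hi2
            rw [hi.2, hi2.2]
          · rw [hydet y1 hy1 i hi, hydet y2 hy2 i (hEeq ▸ hi)]
      rw [count_small_subsets_s4] at hbound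
      have hcard' : ((Finset.univ : Finset (Fin n)) \ I').card = n - a - 1 := by
        rw [Finset.card_sdiff_of_subset (Finset.subset_univ _), hI'card, card_univ, Fintype.card_fin]
        omega
      rw [hcard'] at hbound
      omega
    obtain ⟨J, hIJ, hJcard⟩ := Finset.exists_superset_card_eq hIle
      (by rw [Fintype.card_fin]; omega)
    set ψ : Fin a ↪o Fin n := J.orderEmbOfFin hJcard with hψ
    set T := C.filter (fun c => ∀ y ∈ Y, ErasureOutput n q t c y) with hT
    have hagree : ∀ c ∈ T, ∀ i : Fin n, i ∉ I → c i = x i := by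
      intro c hc i hiI
      rw [hmemI] at hiI
      push_neg at hiI
      obtain ⟨y, hy, hyne⟩ := hiI
      have hiE : i ∉ E y := by simp [hE, hyne]
      have h1 := ((mem_filter.mp hc).2 y hy).1 i
      rcases h1 with h | h
      · have h' := hydet y hy i hiE
        exact Option.some_injective _ (h.symm.trans h')
      · exact absurd h hyne
    have hdiffJ : ∀ c1 ∈ T, ∀ c2 ∈ T, ∀ i : Fin n, c1 i ≠ c2 i → i ∈ J := by
      intro c1 h1 c2 h2 i hne
      by_contra hiJ
      have hiI : i ∉ I := fun h => hiJ (hIJ h)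
      exact hne ((hagree c1 h1 i hiI).trans (hagree c2 h2 i hiI).symm)
    have hdist : ∀ c1 ∈ T, ∀ c2 ∈ T,
        hammingDist c1 c2 = hammingDist (fun j => c1 (ψ j)) (fun j => c2 (ψ j)) := by
      intro c1 h1 c2 h2
      unfold hammingDist
      rw [show ({i | c1 i ≠ c2 i} : Finset (Fin n))
          = ({j | c1 (ψ j) ≠ c2 (ψ j)} : Finset (Fin a)).image ψ from ?_]
      · rw [Finset.card_image_of_injective _ ψ.injective]
      · ext i
        simp only [Finset.mem_image, Finset.mem_filter, Finset.mem_univ, true_and,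
          Finset.filter_congr_decidable]
        constructor
        · intro hne
          have hiJ := hdiffJ c1 h1 c2 h2 i hne
          have : i ∈ Set.range ψ := by
            rw [hψ]
            rw [Finset.range_orderEmbOfFin]
            exact hiJ
          obtain ⟨j, hj⟩ := this
          exact ⟨j, hj ▸ hne, hj⟩
        · rintro ⟨j, hne, rfl⟩
          exact hne
    have hinj : Set.InjOn (fun c : Fin n → Fin q => (fun j => c (ψ j))) ↑T := by
      intro c1 h1 c2 h2 heq
      have h1' : c1 ∈ T := h1
      have h2' : c2 ∈ T := h2
      by_contra hne
      have hd := hdist c1 h1' c2 h2'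
      have : hammingDist c1 c2 ≠ 0 := hammingDist_ne_zero.mpr hne
      rw [hd] at this
      have heq' : (fun j => c1 (ψ j)) = (fun j => c2 (ψ j)) := heq
      rw [heq'] at this
      exact this (hammingDist_self _)
    rw [show T.card = (T.image (fun c => (fun j => c (ψ j)))).card from
      (Finset.card_image_of_injOn hinj).symm]
    apply card_le_aq
    intro c1' hc1' c2' hc2' hne
    obtain ⟨c1, h1, rfl⟩ := Finset.mem_image.mp hc1'
    obtain ⟨c2, h2, rfl⟩ := Finset.mem_image.mp hc2'
    have hc12 : c1 ≠ c2 := fun h => hne (by rw [h])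
    rw [← hdist c1 h1 c2 h2]
    exact hC.1 c1 (mem_filter.mp h1).1 c2 (mem_filter.mp h2).1 hc12
  · -- construction
    have hN0 : 1 ≤ N := by omega
    set I : Finset (Fin n) := Finset.univ.filter (fun i : Fin n => (i : ℕ) < a) with hIdef
    have hIcard : I.card = a := card_filter_lt n a (by omega)
    set Coll := (Finset.univ : Finset (Fin n)).powerset.filter
      (fun S => I ⊆ S ∧ S.card ≤ t) with hColl
    have hCollcard : Coll.card = V2 (n - a) (t - a) := coll_card n t a (by omega) htn
    have hICol : I ∈ Coll := by
      simp only [hColl, mem_filter, mem_powerset]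
      exact ⟨Finset.subset_univ _, subset_refl _, by omega⟩
    obtain ⟨𝒮, hS1, hS2, hScard⟩ := Finset.exists_subsuperset_card_eq
      (show ({I} : Finset (Finset (Fin n))) ⊆ Coll by simpa using hICol)
      (by simpa using hN0) (by rw [hCollcard]; exact hN2)
    have hSmem : ∀ S ∈ 𝒮, I ⊆ S ∧ S.card ≤ t := by
      intro S hS
      have := hS2 hS
      simp only [hColl, mem_filter, mem_powerset] at this
      exact this.2
    have hIS : I ∈ 𝒮 := hS1 (Finset.mem_singleton_self I)
    by_cases hcase : d ≤ a
    · -- case d ≤ a : embed an optimal code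
      obtain ⟨D, hD, hDcard, c1, hc1, c2, hc2, hcne, hcd⟩ := exists_good_code q a d hq hd1 hcase
      set z0 : Fin q := ⟨0, by omega⟩ with hz0
      set emb := embedW (q := q) n a z0 with hemb
      have han : a ≤ n := by omega
      set C := D.image emb with hC
      set x := emb c1 with hxdef
      have hxC : x ∈ C := Finset.mem_image_of_mem _ hc1
      set Y := 𝒮.image (yof n x) with hY
      have hYcard : Y.card = N := by
        rw [hY, Finset.card_image_of_injective _ (yof_inj x), hScard]
      have hCagree : ∀ c ∈ C, ∀ i : Fin n, i ∉ I → c i = x i := by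
        intro c hc i hiI
        obtain ⟨c', hc', rfl⟩ := Finset.mem_image.mp hc
        have hia : ¬ ((i : ℕ) < a) := by
          simp only [hIdef, mem_filter, mem_univ, true_and] at hiI
          exact hiI
        simp [hemb, embedW, hia, hxdef]
      have hYallC : ∀ c ∈ C, ∀ y ∈ Y, ErasureOutput n q t c y := by
        intro c hc y hy
        obtain ⟨S, hSmem', rfl⟩ := Finset.mem_image.mp hy
        obtain ⟨hIsub, hScard'⟩ := hSmem S hSmem'
        apply erasure_yof x c S hScard'
        intro i hiS
        exact hCagree c hc i (fun h => hiS (hIsub h))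
      refine ⟨C, ?_, x, hxC, Y, hYcard, fun y hy => hYallC x hxC y hy, ?_⟩
      · constructor
        · intro b1 hb1 b2 hb2 hbne
          obtain ⟨b1', hb1', rfl⟩ := Finset.mem_image.mp hb1
          obtain ⟨b2', hb2', rfl⟩ := Finset.mem_image.mp hb2
          rw [hemb, embedW_dist n a han]
          exact hD b1' hb1' b2' hb2' (fun h => hbne (by rw [h]))
        · refine ⟨emb c1, Finset.mem_image_of_mem _ hc1, emb c2,
            Finset.mem_image_of_mem _ hc2, ?_, ?_⟩
          · intro h
            exact hcne (embedW_inj n a han z0 h)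
          · rw [hemb, embedW_dist n a han, hcd]
      · rw [Finset.filter_true_of_mem hYallC, hC,
          Finset.card_image_of_injective _ (embedW_inj n a han z0), hDcard]
    · -- case a < d : Aq = 1
      push_neg at hcase
      have haq1 : Aq q a d = 1 := aq_eq_one q a d (by omega) hcase
      obtain ⟨z, w, hzw, hz, hw⟩ := exists_pair_dist q n d hq hdn
      have hzwne : z ≠ w := by
        intro h
        rw [h, hammingDist_self] at hzw
        omega
      set C : Finset (Fin n → Fin q) := {z, w} with hC
      set Y := 𝒮.image (yof n z) with hY
      have hYcard : Y.card = N := by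
        rw [hY, Finset.card_image_of_injective _ (yof_inj z), hScard]
      have hYz : ∀ y ∈ Y, ErasureOutput n q t z y := by
        intro y hy
        obtain ⟨S, hSmem', rfl⟩ := Finset.mem_image.mp hy
        exact erasure_yof z z S (hSmem S hSmem').2 (fun _ _ => rfl)
      have hwnot : ¬ (∀ y ∈ Y, ErasureOutput n q t w y) := by
        intro hcon
        have hyI : yof n z I ∈ Y := Finset.mem_image_of_mem _ hIS
        have h := (hcon _ hyI).1 ⟨a, by omega⟩
        have hnotI : (⟨a, by omega⟩ : Fin n) ∉ I := by
          simp [hIdef]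
        have hyval : yof n z I ⟨a, by omega⟩ = some (z ⟨a, by omega⟩) := by
          simp [yof, hnotI]
        rw [hyval] at h
        have hwa : w ⟨a, by omega⟩ = (⟨1, by omega⟩ : Fin q) := by
          rw [hw]
          simp only []
          rw [if_pos (by simpa using hcase)]
        have hza : z ⟨a, by omega⟩ = (⟨0, by omega⟩ : Fin q) := by rw [hz]
        rcases h with h | h
        · rw [hwa, hza] at h
          have := Option.some_injective _ h
          have h01 : (0 : ℕ) = 1 := congrArg Fin.val this
          omega
        · exact absurd h (Option.some_ne_none _)
      refine ⟨C, ?_, z, by simp [hC], Y, hYcard, hYz, ?_⟩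
      · constructor
        · intro b1 hb1 b2 hb2 hbne
          simp only [hC, mem_insert, mem_singleton] at hb1 hb2
          rcases hb1 with rfl | rfl <;> rcases hb2 with rfl | rfl
          · exact absurd rfl hbne
          · omega
          · rw [hammingDist_comm]; omega
          · exact absurd rfl hbne
        · exact ⟨z, by simp [hC], w, by simp [hC], hzwne, hzw⟩
      · rw [haq1]
        rw [show C.filter (fun c => ∀ y ∈ Y, ErasureOutput n q t c y) = {z} from ?_]
        · exact Finset.card_singleton _
        · ext c
          simp only [hC, mem_filter, mem_insert, mem_singleton]
          constructor
          · rintro ⟨rfl | rfl, hall⟩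
            · rfl
            · exact absurd hall hwnot
          · rintro rfl
            exact ⟨Or.inl rfl, hYz⟩
end

section
/- Monotonicity of intersections of Hamming balls: for any x1, x2, x3, x4 ∈ Z_q^n with d(x1,x2) ≤ d(x3,x4), we have |B_t(x1) ∩ B_t(x2)| ≥ |B_t(x3) ∩ B_t(x4)|, where B_t(x) is the Hamming ball of radius t centered at x. -/
open Finset

namespace Stmt5Aux

open Function

variable {q n : ℕ}

/-- The size of the intersection of two Hamming balls of radius `t`. -/
def cnt (t : ℕ) (a b : Fin n → Fin q) : ℕ :=
  (univ.filter (fun y : Fin n → Fin q => hammingDist a y ≤ t ∧ hammingDist b y ≤ t)).card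

lemma card_filter_split {α : Type*} [Fintype α] [DecidableEq α] (p : α → Prop) [DecidablePred p]
    (i : α) :
    (univ.filter p).card = ((univ.erase i).filter p).card + (if p i then 1 else 0) := by
  conv_lhs => rw [← Finset.insert_erase (Finset.mem_univ i)]
  rw [Finset.filter_insert]
  split_ifs with h
  · rw [Finset.card_insert_of_notMem (by simp)]
  · rw [Nat.add_zero]

lemma hamming_eq (x y : Fin n → Fin q) :
    hammingDist x y = (univ.filter fun j => x j ≠ y j).card := rfl

lemma dist_split (x y : Fin n → Fin q) (i : Fin n) :
    hammingDist x y = ((univ.erase i).filter fun j => x j ≠ y j).card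
      + (if x i ≠ y i then 1 else 0) := by
  rw [hamming_eq]; exact card_filter_split _ i

lemma off_congr (i : Fin n) {x x' y y' : Fin n → Fin q}
    (hx : ∀ j, j ≠ i → x j = x' j) (hy : ∀ j, j ≠ i → y j = y' j) :
    ((univ.erase i).filter fun j => x j ≠ y j)
      = ((univ.erase i).filter fun j => x' j ≠ y' j) := by
  apply Finset.filter_congr
  intro j hj
  have hji : j ≠ i := (Finset.mem_erase.mp hj).1
  rw [hx j hji, hy j hji]

/-- Single-coordinate reduction step. -/
lemma step (t : ℕ) (x3 x4 : Fin n → Fin q) (i : Fin n) :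
    cnt t x3 x4 ≤ cnt t x3 (update x4 i (x3 i)) := by
  classical
  set x4' := update x4 i (x3 i) with hx4'
  have hoff4 : ∀ y : Fin n → Fin q,
      ((univ.erase i).filter fun j => x4' j ≠ y j)
        = ((univ.erase i).filter fun j => x4 j ≠ y j) :=
    fun y => off_congr i (fun j hj => Function.update_of_ne hj _ _) (fun _ _ => rfl)
  have hx4'i : x4' i = x3 i := Function.update_self i _ x4
  -- key consequence of being in the source but failing the target ball condition
  have key : ∀ y : Fin n → Fin q, hammingDist x4 y ≤ t → ¬ hammingDist x4' y ≤ t →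
      x4 i = y i ∧ x3 i ≠ y i ∧ ((univ.erase i).filter fun j => x4 j ≠ y j).card = t := by
    intro y h4 hc
    have e4 := dist_split x4 y i
    have e4' := dist_split x4' y i
    rw [hoff4 y, hx4'i] at e4'
    by_cases hxy : x3 i ≠ y i
    · rw [if_pos hxy] at e4'
      by_cases h4y : x4 i ≠ y i
      · rw [if_pos h4y] at e4; omega
      · rw [if_neg h4y] at e4
        exact ⟨not_not.mp h4y, hxy, by omega⟩
    · rw [if_neg hxy] at e4'
      exfalso; omega
  apply Finset.card_le_card_of_injOn
      (fun y => if hammingDist x4' y ≤ t then y else update y i (x3 i))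
  · intro y hy
    simp only [Finset.mem_coe, Finset.mem_filter, Finset.mem_univ, true_and] at hy ⊢
    obtain ⟨h3, h4⟩ := hy
    by_cases hc : hammingDist x4' y ≤ t
    · rw [if_pos hc]; exact ⟨h3, hc⟩
    · rw [if_neg hc]
      set y' := update y i (x3 i) with hy'
      have hoffy : ∀ x : Fin n → Fin q,
          ((univ.erase i).filter fun j => x j ≠ y' j)
            = ((univ.erase i).filter fun j => x j ≠ y j) :=
        fun x => off_congr i (fun _ _ => rfl) (fun j hj => by rw [hy']; exact Function.update_of_ne hj _ _)
      have hy'i : y' i = x3 i := Function.update_self i _ y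
      constructor
      · have e := dist_split x3 y' i
        rw [hoffy x3, hy'i, if_neg (by simp)] at e
        have e3 := dist_split x3 y i
        have : (if x3 i ≠ y i then 1 else 0) ≤ 1 := by split_ifs <;> omega
        omega
      · have e := dist_split x4' y' i
        rw [hoffy x4', hoff4 y, hx4'i, hy'i, if_neg (by simp)] at e
        have e4 := dist_split x4 y i
        have : (if x4 i ≠ y i then 1 else 0) ≤ 1 := by split_ifs <;> omega
        omega
  · intro y1 hy1 y2 hy2 heq
    simp only [Finset.coe_filter, Set.mem_setOf_eq, Finset.mem_univ, true_and] at hy1 hy2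
    dsimp only at heq
    by_cases h1 : hammingDist x4' y1 ≤ t <;> by_cases h2 : hammingDist x4' y2 ≤ t
    · rwa [if_pos h1, if_pos h2] at heq
    · rw [if_pos h1, if_neg h2] at heq
      -- y1 = update y2 i (x3 i); contradiction with hammingDist x4 y1 ≤ t
      exfalso
      obtain ⟨hb, hc, hd⟩ := key y2 hy2.2 h2
      have e := dist_split x4 y1 i
      have hoff : ((univ.erase i).filter fun j => x4 j ≠ y1 j)
          = ((univ.erase i).filter fun j => x4 j ≠ y2 j) :=
        off_congr i (fun _ _ => rfl) (fun j hj => by rw [heq, Function.update_of_ne hj])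
      have h1i : y1 i = x3 i := by rw [heq, Function.update_self]
      rw [hoff, hd, h1i, if_pos (by rw [← hb] at hc; exact fun e => hc e.symm)] at e
      have := hy1.2
      omega
    · rw [if_neg h1, if_pos h2] at heq
      exfalso
      obtain ⟨hb, hc, hd⟩ := key y1 hy1.2 h1
      have e := dist_split x4 y2 i
      have hoff : ((univ.erase i).filter fun j => x4 j ≠ y2 j)
          = ((univ.erase i).filter fun j => x4 j ≠ y1 j) :=
        off_congr i (fun _ _ => rfl) (fun j hj => by rw [← heq, Function.update_of_ne hj])
      have h2i : y2 i = x3 i := by rw [← heq, Function.update_self]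
      rw [hoff, hd, h2i, if_pos (by rw [← hb] at hc; exact fun e => hc e.symm)] at e
      have := hy2.2
      omega
    · rw [if_neg h1, if_neg h2] at heq
      obtain ⟨hb1, -, -⟩ := key y1 hy1.2 h1
      obtain ⟨hb2, -, -⟩ := key y2 hy2.2 h2
      funext j
      by_cases hj : j = i
      · rw [hj, ← hb1, ← hb2]
      · have := congrFun heq j
        rwa [Function.update_of_ne hj, Function.update_of_ne hj] at this

lemma perm_pair {α : Type*} [DecidableEq α] {a b c d : α} (h : (a = b) ↔ (c = d)) :
    ∃ σ : Equiv.Perm α, σ a = c ∧ σ b = d := by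
  by_cases hab : a = b
  · refine ⟨Equiv.swap a c, Equiv.swap_apply_left a c, ?_⟩
    rw [← hab, Equiv.swap_apply_left]
    exact (h.mp hab).symm ▸ rfl
  · have hcd : c ≠ d := fun e => hab (h.mpr e)
    have hb'c : Equiv.swap a c b ≠ c := by
      conv_rhs => rw [← Equiv.swap_apply_left a c]
      exact fun e => hab ((Equiv.swap a c).injective e).symm
    refine ⟨(Equiv.swap a c).trans (Equiv.swap (Equiv.swap a c b) d), ?_, ?_⟩
    · simp only [Equiv.trans_apply, Equiv.swap_apply_left]
      exact Equiv.swap_apply_of_ne_of_ne (Ne.symm hb'c) hcd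
    · simp only [Equiv.trans_apply]
      exact Equiv.swap_apply_left _ _

lemma dist_reindex (x y : Fin n → Fin q) (π : Equiv.Perm (Fin n)) :
    (univ.filter fun i => x (π i) ≠ y (π i)).card = hammingDist x y := by
  rw [hamming_eq]
  apply Finset.card_bij (fun i _ => π i)
  · intro a ha
    simp only [Finset.mem_filter, Finset.mem_univ, true_and] at ha ⊢
    exact ha
  · intro a _ b _ hab
    exact π.injective hab
  · intro b hb
    simp only [Finset.mem_filter, Finset.mem_univ, true_and] at hb
    exact ⟨π.symm b, by simp [hb], π.apply_symm_apply b⟩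

/-- Pairs at equal Hamming distance have comparable (in fact equal) ball-intersection sizes. -/
lemma eqdist (t : ℕ) (x1 x2 x3 x4 : Fin n → Fin q)
    (h : hammingDist x1 x2 = hammingDist x3 x4) : cnt t x3 x4 ≤ cnt t x1 x2 := by
  classical
  have hcard : Fintype.card {i // x1 i ≠ x2 i} = Fintype.card {i // x3 i ≠ x4 i} := by
    simpa only [Fintype.card_subtype, hamming_eq] using h
  have hcard' : Fintype.card {i // ¬ x1 i ≠ x2 i} = Fintype.card {i // ¬ x3 i ≠ x4 i} := by
    have a1 := Fintype.card_subtype_compl (fun i : Fin n => x1 i ≠ x2 i)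
    have a2 := Fintype.card_subtype_compl (fun i : Fin n => x3 i ≠ x4 i)
    rw [a1, a2, hcard]
  set e1 := Fintype.equivOfCardEq hcard with he1
  set e2 := Fintype.equivOfCardEq hcard' with he2
  set π : Equiv.Perm (Fin n) := Equiv.subtypeCongr e1 e2 with hπdef
  have hπ : ∀ i, (x1 i = x2 i) ↔ (x3 (π i) = x4 (π i)) := by
    intro i
    by_cases hp : x1 i ≠ x2 i
    · have hval : π i = (e1 ⟨i, hp⟩).1 := by
        simp [hπdef, Equiv.subtypeCongr, hp]
      exact iff_of_false hp (hval ▸ (e1 ⟨i, hp⟩).2)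
    · have hval : π i = (e2 ⟨i, hp⟩).1 := by
        simp [hπdef, Equiv.subtypeCongr, hp]
      exact iff_of_true (not_not.mp hp) (not_not.mp (hval ▸ (e2 ⟨i, hp⟩).2))
  have hg : ∀ i, ∃ σ : Equiv.Perm (Fin q), σ (x3 (π i)) = x1 i ∧ σ (x4 (π i)) = x2 i :=
    fun i => perm_pair ((hπ i).symm)
  choose g hg1 hg2 using hg
  have dist1 : ∀ y : Fin n → Fin q,
      hammingDist x1 (fun i => g i (y (π i))) = hammingDist x3 y := by
    intro y
    rw [hamming_eq]
    rw [show (univ.filter fun i => x1 i ≠ g i (y (π i)))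
        = (univ.filter fun i => x3 (π i) ≠ y (π i)) from
      Finset.filter_congr fun i _ => by
        rw [← hg1 i]
        exact not_congr (Equiv.injective (g i)).eq_iff]
    exact dist_reindex x3 y π
  have dist2 : ∀ y : Fin n → Fin q,
      hammingDist x2 (fun i => g i (y (π i))) = hammingDist x4 y := by
    intro y
    rw [hamming_eq]
    rw [show (univ.filter fun i => x2 i ≠ g i (y (π i)))
        = (univ.filter fun i => x4 (π i) ≠ y (π i)) from
      Finset.filter_congr fun i _ => by
        rw [← hg2 i]
        exact not_congr (Equiv.injective (g i)).eq_iff]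
    exact dist_reindex x4 y π
  apply Finset.card_le_card_of_injOn (fun y => fun i => g i (y (π i)))
  · intro y hy
    simp only [Finset.mem_coe, Finset.mem_filter, Finset.mem_univ, true_and] at hy ⊢
    rw [dist1 y, dist2 y]
    exact hy
  · intro y1 _ y2 _ heq
    funext j
    have h := congrFun heq (π.symm j)
    dsimp only at h
    have h' := (g (π.symm j)).injective h
    rwa [Equiv.apply_symm_apply] at h'

lemma reduce (t : ℕ) (x3 : Fin n → Fin q) :
    ∀ (k : ℕ) (x4 : Fin n → Fin q) (d : ℕ), hammingDist x3 x4 = d + k →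
      ∃ x4', hammingDist x3 x4' = d ∧ cnt t x3 x4 ≤ cnt t x3 x4' := by
  intro k
  induction k with
  | zero => exact fun x4 d hd => ⟨x4, by omega, le_rfl⟩
  | succ k ih =>
    intro x4 d hd
    have hpos : 0 < (univ.filter fun j => x3 j ≠ x4 j).card := by
      rw [← hamming_eq]; omega
    obtain ⟨i, hi⟩ := Finset.card_pos.mp hpos
    have hi' : x3 i ≠ x4 i := (Finset.mem_filter.mp hi).2
    set x4'' := Function.update x4 i (x3 i) with hx4''
    have hdist : hammingDist x3 x4'' = d + k := by
      have e1 := dist_split x3 x4 i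
      have e2 := dist_split x3 x4'' i
      rw [off_congr i (fun _ _ => rfl) (fun j hj => Function.update_of_ne hj _ _),
        if_neg (by simp [hx4''])] at e2
      rw [if_pos hi'] at e1
      omega
    obtain ⟨x4', h1, h2⟩ := ih x4'' d hdist
    exact ⟨x4', h1, le_trans (step t x3 x4 i) h2⟩

end Stmt5Aux

/-- Monotonicity of intersections of Hamming balls: if `d(x1,x2) ≤ d(x3,x4)` then
`|B_t(x1) ∩ B_t(x2)| ≥ |B_t(x3) ∩ B_t(x4)|`. -/
theorem stmt5 (q n t : ℕ) (x1 x2 x3 x4 : Fin n → Fin q)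
    (h : hammingDist x1 x2 ≤ hammingDist x3 x4) :
    (univ.filter (fun y : Fin n → Fin q => hammingDist x3 y ≤ t ∧ hammingDist x4 y ≤ t)).card ≤
    (univ.filter (fun y : Fin n → Fin q => hammingDist x1 y ≤ t ∧ hammingDist x2 y ≤ t)).card := by
  show Stmt5Aux.cnt t x3 x4 ≤ Stmt5Aux.cnt t x1 x2
  obtain ⟨x4', hd, hle⟩ := Stmt5Aux.reduce t x3 (hammingDist x3 x4 - hammingDist x1 x2) x4
    (hammingDist x1 x2) (by omega)
  exact le_trans hle (Stmt5Aux.eqdist t x1 x2 x3 x4' hd.symm)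
end

section
/- Monotonicity of intersections of erasure-substitution balls: for x1, x2, x3, x4 ∈ Z_q^n with d(x1,x2) ≤ d(x3,x4), we have |B^{e,s}_{t_e,t_s}(x1) ∩ B^{e,s}_{t_e,t_s}(x2)| ≥ |B^{e,s}_{t_e,t_s}(x3) ∩ B^{e,s}_{t_e,t_s}(x4)|. -/
open Finset

lemma offdiag_card {n : ℕ} (P P' : Fin n → Prop) [DecidablePred P] [DecidablePred P'] (j : Fin n)
    (h : ∀ i, i ≠ j → (P i ↔ P' i)) :
    (univ.filter P).card + (if P' j then 1 else 0) =
      (univ.filter P').card + (if P j then 1 else 0) := by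
  rw [Finset.card_filter, Finset.card_filter,
    ← Finset.sum_erase_add _ _ (Finset.mem_univ j),
    ← Finset.sum_erase_add _ _ (Finset.mem_univ j)]
  have hs : ∑ i ∈ univ.erase j, (if P i then 1 else 0)
      = ∑ i ∈ univ.erase j, (if P' i then 1 else 0) :=
    Finset.sum_congr rfl (fun i hi => by
      simp only [if_congr (h i (Finset.ne_of_mem_erase hi)) rfl rfl])
  omega

lemma two_point_perm {q : ℕ} (a b c d : Fin q) (h : a = b ↔ c = d) :
    ∃ g : Equiv.Perm (Fin q), g a = c ∧ g b = d := by
  by_cases hab : a = b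
  · refine ⟨Equiv.swap a c, by simp, ?_⟩
    rw [← hab, Equiv.swap_apply_left, h.mp hab]
  · have hcd : c ≠ d := fun hh => hab (h.mpr hh)
    refine ⟨(Equiv.swap a c).trans (Equiv.swap (Equiv.swap a c b) d), ?_, ?_⟩
    · simp only [Equiv.trans_apply, Equiv.swap_apply_left]
      rw [Equiv.swap_apply_of_ne_of_ne]
      · intro hh
        exact hab ((Equiv.swap a c).injective (by simpa [Equiv.swap_apply_left] using hh))
      · exact hcd
    · simp [Equiv.trans_apply]

lemma subtypeCongr_spec {α} {p q : α → Prop} [DecidablePred p] [DecidablePred q]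
    (e : { x // p x } ≃ { x // q x }) (f : { x // ¬p x } ≃ { x // ¬q x }) (a : α) :
    q (Equiv.subtypeCongr e f a) ↔ p a := by
  by_cases h : p a
  · simp only [Equiv.subtypeCongr, Equiv.trans_apply, Equiv.sumCompl_symm_apply_of_pos h,
      Equiv.sumCongr_apply, Sum.map_inl, Equiv.sumCompl_apply_inl]
    exact iff_of_true (e ⟨a, h⟩).2 h
  · simp only [Equiv.subtypeCongr, Equiv.trans_apply, Equiv.sumCompl_symm_apply_of_neg h,
      Equiv.sumCongr_apply, Sum.map_inr, Equiv.sumCompl_apply_inr]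
    exact iff_of_false (f ⟨a, h⟩).2 h

lemma reindex_card {n : ℕ} (π : Equiv.Perm (Fin n)) (P : Fin n → Prop) [DecidablePred P] :
    (univ.filter fun i => P (π i)).card = (univ.filter P).card := by
  rw [Finset.card_filter, Finset.card_filter]
  exact Equiv.sum_comp π (fun k => if P k then 1 else 0)

/-- `y` (a word over `Z_q ∪ {*}`, with `*` modelled by `none`) is obtainable from
`x ∈ (Z_q)^n` by at most `te` erasures and at most `ts` substitutions. -/
def EraSubOutput (n q te ts : ℕ) (x : Fin n → Fin q) (y : Fin n → Option (Fin q)) : Prop :=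
  (Finset.univ.filter (fun i => y i = none)).card ≤ te ∧
    (Finset.univ.filter (fun i => y i ≠ none ∧ y i ≠ some (x i))).card ≤ ts

instance (n q te ts : ℕ) (x : Fin n → Fin q) (y : Fin n → Option (Fin q)) :
    Decidable (EraSubOutput n q te ts x y) := by
  unfold EraSubOutput; infer_instance

lemma exists_perm {n : ℕ} (p p' : Fin n → Prop) [DecidablePred p] [DecidablePred p']
    (h : (univ.filter p).card = (univ.filter p').card) :
    ∃ π : Equiv.Perm (Fin n), ∀ i, p' (π i) ↔ p i := by
  have hcard : Fintype.card { i // p i } = Fintype.card { i // p' i } := by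
    rw [Fintype.card_subtype, Fintype.card_subtype]; exact h
  have hsplit : (univ.filter p).card + (univ.filter (fun i => ¬ p i)).card = n := by
    rw [Finset.card_filter_add_card_filter_not]; simp
  have hsplit' : (univ.filter p').card + (univ.filter (fun i => ¬ p' i)).card = n := by
    rw [Finset.card_filter_add_card_filter_not]; simp
  have hcard' : Fintype.card { i // ¬ p i } = Fintype.card { i // ¬ p' i } := by
    rw [Fintype.card_subtype, Fintype.card_subtype]
    omega
  exact ⟨Equiv.subtypeCongr (Fintype.equivOfCardEq hcard) (Fintype.equivOfCardEq hcard'),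
    fun i => subtypeCongr_spec _ _ i⟩

set_option maxHeartbeats 1000000 in
lemma eqA (q n te ts : ℕ) (x1 x2 x3 x4 : Fin n → Fin q)
    (h : hammingDist x1 x2 = hammingDist x3 x4) :
    (univ.filter (fun y : Fin n → Option (Fin q) =>
        EraSubOutput n q te ts x3 y ∧ EraSubOutput n q te ts x4 y)).card =
    (univ.filter (fun y : Fin n → Option (Fin q) =>
        EraSubOutput n q te ts x1 y ∧ EraSubOutput n q te ts x2 y)).card := by
  classical
  obtain ⟨π, hqp⟩ := exists_perm (fun i => x1 i ≠ x2 i) (fun i => x3 i ≠ x4 i) h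
  have hqp' : ∀ i, (x3 (π i) = x4 (π i)) ↔ (x1 i = x2 i) := fun i =>
    not_iff_not.mp (by simpa using hqp i)
  -- choose value permutations
  have hg : ∀ i : Fin n, ∃ g : Equiv.Perm (Fin q),
      g (x3 (π i)) = x1 i ∧ g (x4 (π i)) = x2 i :=
    fun i => two_point_perm _ _ _ _ (hqp' i)
  choose g hg3 hg4 using hg
  -- the bijection
  refine Finset.card_nbij'
    (i := fun y => fun i => (y (π i)).map (g i))
    (j := fun z => fun k => (z (π.symm k)).map (g (π.symm k)).symm)
    ?_ ?_ ?_ ?_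
  · -- maps to
    intro y hy
    simp only [Finset.coe_filter, Set.mem_setOf_eq, Finset.mem_filter, Finset.mem_univ, true_and] at hy ⊢
    obtain ⟨⟨he3, hs3⟩, he4, hs4⟩ := hy
    refine ⟨⟨?_, ?_⟩, ?_, ?_⟩
    · calc (univ.filter fun i => (y (π i)).map (g i) = none).card
          = (univ.filter fun i => y (π i) = none).card := by
            apply congrArg; apply Finset.filter_congr; intro i _
            simp
        _ = (univ.filter fun k => y k = none).card := reindex_card π (fun k => y k = none)
        _ ≤ te := he3
    · calc (univ.filter fun i => (y (π i)).map (g i) ≠ none ∧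
              (y (π i)).map (g i) ≠ some (x1 i)).card
          = (univ.filter fun i => y (π i) ≠ none ∧ y (π i) ≠ some (x3 (π i))).card := by
            apply congrArg; apply Finset.filter_congr; intro i _
            cases hyi : y (π i) with
            | none => simp
            | some c =>
              simp only [Option.map_some, ne_eq, reduceCtorEq, not_false_eq_true, true_and,
                Option.some.injEq]
              rw [← hg3 i]
              exact not_congr ⟨fun hh => (g i).injective hh, fun hh => by rw [hh]⟩
        _ = (univ.filter fun k => y k ≠ none ∧ y k ≠ some (x3 k)).card := reindex_card π (fun k => y k ≠ none ∧ y k ≠ some (x3 k))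
        _ ≤ ts := hs3
    · calc (univ.filter fun i => (y (π i)).map (g i) = none).card
          = (univ.filter fun i => y (π i) = none).card := by
            apply congrArg; apply Finset.filter_congr; intro i _
            simp
        _ = (univ.filter fun k => y k = none).card := reindex_card π (fun k => y k = none)
        _ ≤ te := he4
    · calc (univ.filter fun i => (y (π i)).map (g i) ≠ none ∧
              (y (π i)).map (g i) ≠ some (x2 i)).card
          = (univ.filter fun i => y (π i) ≠ none ∧ y (π i) ≠ some (x4 (π i))).card := by
            apply congrArg; apply Finset.filter_congr; intro i _
            cases hyi : y (π i) with
            | none => simp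
            | some c =>
              simp only [Option.map_some, ne_eq, reduceCtorEq, not_false_eq_true, true_and,
                Option.some.injEq]
              rw [← hg4 i]
              exact not_congr ⟨fun hh => (g i).injective hh, fun hh => by rw [hh]⟩
        _ = (univ.filter fun k => y k ≠ none ∧ y k ≠ some (x4 k)).card := reindex_card π (fun k => y k ≠ none ∧ y k ≠ some (x4 k))
        _ ≤ ts := hs4
  · -- maps back
    intro z hz
    simp only [Finset.coe_filter, Set.mem_setOf_eq, Finset.mem_filter, Finset.mem_univ, true_and] at hz ⊢
    obtain ⟨⟨he1, hs1⟩, he2, hs2⟩ := hz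
    have key1 : ∀ k : Fin n, ((z (π.symm k)).map (g (π.symm k)).symm = none) ↔
        z (π.symm k) = none := by intro k; simp
    refine ⟨⟨?_, ?_⟩, ?_, ?_⟩
    · calc (univ.filter fun k => (z (π.symm k)).map (g (π.symm k)).symm = none).card
          = (univ.filter fun k => z (π.symm k) = none).card := by
            apply congrArg; apply Finset.filter_congr; intro k _; simp
        _ = (univ.filter fun i => z i = none).card := reindex_card π.symm (fun i => z i = none)
        _ ≤ te := he1
    · calc (univ.filter fun k => (z (π.symm k)).map (g (π.symm k)).symm ≠ none ∧
              (z (π.symm k)).map (g (π.symm k)).symm ≠ some (x3 k)).card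
          = (univ.filter fun k => z (π.symm k) ≠ none ∧
              z (π.symm k) ≠ some (x1 (π.symm k))).card := by
            apply congrArg; apply Finset.filter_congr; intro k _
            cases hzk : z (π.symm k) with
            | none => simp
            | some c =>
              simp only [Option.map_some, ne_eq, reduceCtorEq, not_false_eq_true, true_and,
                Option.some.injEq]
              have : x3 k = x3 (π (π.symm k)) := by rw [Equiv.apply_symm_apply]
              rw [this, ← hg3 (π.symm k)]
              constructor
              · intro hc hcc; exact hc (by rw [hcc, Equiv.symm_apply_apply])
              · intro hc hcc
                exact hc (by rw [← hcc, Equiv.apply_symm_apply])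
        _ = (univ.filter fun i => z i ≠ none ∧ z i ≠ some (x1 i)).card := reindex_card π.symm (fun i => z i ≠ none ∧ z i ≠ some (x1 i))
        _ ≤ ts := hs1
    · calc (univ.filter fun k => (z (π.symm k)).map (g (π.symm k)).symm = none).card
          = (univ.filter fun k => z (π.symm k) = none).card := by
            apply congrArg; apply Finset.filter_congr; intro k _; simp
        _ = (univ.filter fun i => z i = none).card := reindex_card π.symm (fun i => z i = none)
        _ ≤ te := he2
    · calc (univ.filter fun k => (z (π.symm k)).map (g (π.symm k)).symm ≠ none ∧
              (z (π.symm k)).map (g (π.symm k)).symm ≠ some (x4 k)).card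
          = (univ.filter fun k => z (π.symm k) ≠ none ∧
              z (π.symm k) ≠ some (x2 (π.symm k))).card := by
            apply congrArg; apply Finset.filter_congr; intro k _
            cases hzk : z (π.symm k) with
            | none => simp
            | some c =>
              simp only [Option.map_some, ne_eq, reduceCtorEq, not_false_eq_true, true_and,
                Option.some.injEq]
              have : x4 k = x4 (π (π.symm k)) := by rw [Equiv.apply_symm_apply]
              rw [this, ← hg4 (π.symm k)]
              constructor
              · intro hc hcc; exact hc (by rw [hcc, Equiv.symm_apply_apply])
              · intro hc hcc
                exact hc (by rw [← hcc, Equiv.apply_symm_apply])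
        _ = (univ.filter fun i => z i ≠ none ∧ z i ≠ some (x2 i)).card := reindex_card π.symm (fun i => z i ≠ none ∧ z i ≠ some (x2 i))
        _ ≤ ts := hs2
  · -- left inverse
    intro y _
    funext k
    simp [Option.map_map, Equiv.apply_symm_apply]
  · -- right inverse
    intro z _
    funext i
    simp [Option.map_map, Equiv.symm_apply_apply]

lemma stepB (q n te ts : ℕ) (x x' : Fin n → Fin q) (j : Fin n) (hj : x j ≠ x' j) :
    (univ.filter (fun y : Fin n → Option (Fin q) =>
        EraSubOutput n q te ts x y ∧ EraSubOutput n q te ts x' y)).card ≤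
    (univ.filter (fun y : Fin n → Option (Fin q) =>
        EraSubOutput n q te ts x y ∧
          EraSubOutput n q te ts (Function.update x' j (x j)) y)).card := by
  classical
  set x'' := Function.update x' j (x j) with hx''
  have hx''j : x'' j = x j := Function.update_self _ _ _
  have hx''ne : ∀ i, i ≠ j → x'' i = x' i := fun i hi => Function.update_of_ne hi _ _
  -- counts
  set sE : (Fin n → Option (Fin q)) → ℕ :=
    fun y => (univ.filter (fun i => y i = none)).card with hsE
  set sX : (Fin n → Fin q) → (Fin n → Option (Fin q)) → ℕ :=
    fun z y => (univ.filter (fun i => y i ≠ none ∧ y i ≠ some (z i))).card with hsX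
  have hESO : ∀ (z : Fin n → Fin q) y, EraSubOutput n q te ts z y ↔ sE y ≤ te ∧ sX z y ≤ ts :=
    fun z y => Iff.rfl
  -- relation between sX x'' y and sX x' y when y j = some (x' j)
  have key : ∀ y : Fin n → Option (Fin q), y j = some (x' j) → sX x'' y = sX x' y + 1 := by
    intro y hyj
    have := offdiag_card (fun i => y i ≠ none ∧ y i ≠ some (x'' i))
      (fun i => y i ≠ none ∧ y i ≠ some (x' i)) j
      (fun i hi => by simp only [hx''ne i hi])
    have h1 : (y j ≠ none ∧ y j ≠ some (x' j)) = False := by simp [hyj]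
    have h2 : (y j ≠ none ∧ y j ≠ some (x'' j)) = True := by
      simp [hyj, hx''j]; exact fun hh => hj hh.symm
    simp only [h1, h2, if_true, if_false] at this
    simpa [hsX] using this
  -- the injection
  set φ : (Fin n → Option (Fin q)) → (Fin n → Option (Fin q)) :=
    fun y => if y j = some (x' j) ∧ ts < sX x'' y then Function.update y j (some (x j)) else y
    with hφ
  -- counts of updated word
  have upd_sE : ∀ y : Fin n → Option (Fin q), y j = some (x' j) →
      sE (Function.update y j (some (x j))) = sE y := by
    intro y hyj
    have := offdiag_card (fun i => Function.update y j (some (x j)) i = none)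
      (fun i => y i = none) j
      (fun i hi => by simp only [Function.update_of_ne hi])
    simp only [hyj] at this
    simpa [hsE] using this
  have upd_sXx : ∀ y : Fin n → Option (Fin q), y j = some (x' j) →
      sX x (Function.update y j (some (x j))) + 1 = sX x y := by
    intro y hyj
    have := offdiag_card
      (fun i => Function.update y j (some (x j)) i ≠ none ∧
        Function.update y j (some (x j)) i ≠ some (x i))
      (fun i => y i ≠ none ∧ y i ≠ some (x i)) j
      (fun i hi => by simp only [Function.update_of_ne hi])
    have h1 : (y j ≠ none ∧ y j ≠ some (x j)) = True := by
      simp [hyj]; exact fun hh => hj hh.symm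
    have h2 : (Function.update y j (some (x j)) j ≠ none ∧
        Function.update y j (some (x j)) j ≠ some (x j)) = False := by
      simp
    simp only [h1, h2, if_true, if_false] at this
    simpa [hsX] using this
  have upd_sXx'' : ∀ y : Fin n → Option (Fin q), y j = some (x' j) →
      sX x'' (Function.update y j (some (x j))) + 1 = sX x'' y := by
    intro y hyj
    have := offdiag_card
      (fun i => Function.update y j (some (x j)) i ≠ none ∧
        Function.update y j (some (x j)) i ≠ some (x'' i))
      (fun i => y i ≠ none ∧ y i ≠ some (x'' i)) j
      (fun i hi => by simp only [Function.update_of_ne hi])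
    have h1 : (y j ≠ none ∧ y j ≠ some (x'' j)) = True := by
      simp [hyj, hx''j]; exact fun hh => hj hh.symm
    have h2 : (Function.update y j (some (x j)) j ≠ none ∧
        Function.update y j (some (x j)) j ≠ some (x'' j)) = False := by
      simp [hx''j]
    simp only [h1, h2, if_true, if_false] at this
    simpa [hsX] using this
  have upd_sXx' : ∀ y : Fin n → Option (Fin q), y j = some (x' j) →
      sX x' (Function.update y j (some (x j))) = sX x' y + 1 := by
    intro y hyj
    have := offdiag_card
      (fun i => Function.update y j (some (x j)) i ≠ none ∧
        Function.update y j (some (x j)) i ≠ some (x' i))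
      (fun i => y i ≠ none ∧ y i ≠ some (x' i)) j
      (fun i hi => by simp only [Function.update_of_ne hi])
    have h1 : (y j ≠ none ∧ y j ≠ some (x' j)) = False := by simp [hyj]
    have h2 : (Function.update y j (some (x j)) j ≠ none ∧
        Function.update y j (some (x j)) j ≠ some (x' j)) = True := by
      simp; exact hj
    simp only [h1, h2, if_true, if_false] at this
    simpa [hsX] using this
  -- monotonicity when y j ≠ some (x' j)
  have mono : ∀ y : Fin n → Option (Fin q), y j ≠ some (x' j) → sX x'' y ≤ sX x' y := by
    intro y hyj
    apply Finset.card_le_card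
    intro i hi
    simp only [Finset.mem_filter, Finset.mem_univ, true_and] at hi ⊢
    by_cases hij : i = j
    · subst hij
      exact ⟨hi.1, hyj⟩
    · rw [← hx''ne i hij]; exact hi
  apply Finset.card_le_card_of_injOn φ
  · -- maps to
    intro y hy
    simp only [Finset.coe_filter, Set.mem_setOf_eq, Finset.mem_filter, Finset.mem_univ, true_and, hESO] at hy ⊢
    obtain ⟨⟨he, hsx⟩, _, hsx'⟩ := hy
    by_cases hc : y j = some (x' j) ∧ ts < sX x'' y
    · have hφy : φ y = Function.update y j (some (x j)) := if_pos hc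
      rw [hφy]
      refine ⟨⟨?_, ?_⟩, ?_, ?_⟩
      · rw [upd_sE y hc.1]; exact he
      · have := upd_sXx y hc.1; omega
      · rw [upd_sE y hc.1]; exact he
      · have h3 := upd_sXx'' y hc.1
        have h4 := key y hc.1
        omega
    · have hφy : φ y = y := if_neg hc
      rw [hφy]
      refine ⟨⟨he, hsx⟩, he, ?_⟩
      by_cases hyj : y j = some (x' j)
      · have h4 := key y hyj
        have : ¬ ts < sX x'' y := fun hh => hc ⟨hyj, hh⟩
        omega
      · exact le_trans (mono y hyj) hsx'
  · -- injective
    intro y hy z hz hyz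
    simp only [Finset.coe_filter, Set.mem_setOf_eq, Finset.mem_univ, true_and, hESO] at hy hz
    by_cases hcy : y j = some (x' j) ∧ ts < sX x'' y <;>
      by_cases hcz : z j = some (x' j) ∧ ts < sX x'' z
    · rw [hφ] at hyz
      simp only [if_pos hcy, if_pos hcz] at hyz
      funext i
      by_cases hij : i = j
      · subst hij; rw [hcy.1, hcz.1]
      · have := congrFun hyz i
        rwa [Function.update_of_ne hij, Function.update_of_ne hij] at this
    · exfalso
      rw [hφ] at hyz
      simp only [if_pos hcy, if_neg hcz] at hyz
      -- z = update y j (some (x j)), so sX x' z = sX x' y + 1 > ts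
      have h1 := upd_sXx' y hcy.1
      have h2 := key y hcy.1
      have hz' := hz.2.2
      rw [← hyz] at hz'
      omega
    · exfalso
      rw [hφ] at hyz
      simp only [if_neg hcy, if_pos hcz] at hyz
      have h1 := upd_sXx' z hcz.1
      have h2 := key z hcz.1
      have hy' := hy.2.2
      rw [hyz] at hy'
      omega
    · rw [hφ] at hyz
      simpa only [if_neg hcy, if_neg hcz] using hyz

lemma dist_update {n q : ℕ} (x x' : Fin n → Fin q) (j : Fin n) (hj : x j ≠ x' j) :
    hammingDist x (Function.update x' j (x j)) + 1 = hammingDist x x' := by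
  classical
  have this := offdiag_card (fun i => x i ≠ Function.update x' j (x j) i)
    (fun i => x i ≠ x' i) j (fun i hi => by simp only [Function.update_of_ne hi])
  have h1 : (x j ≠ x' j) = True := by simp [hj]
  have h2 : (x j ≠ Function.update x' j (x j) j) = False := by simp
  simp only [h1, h2, if_true, if_false] at this
  simpa [hammingDist] using this

lemma mainInd (q n te ts : ℕ) (k : ℕ) : ∀ (x1 x2 x3 x4 : Fin n → Fin q),
    hammingDist x1 x2 ≤ hammingDist x3 x4 → hammingDist x3 x4 ≤ hammingDist x1 x2 + k →
    (univ.filter (fun y : Fin n → Option (Fin q) =>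
        EraSubOutput n q te ts x3 y ∧ EraSubOutput n q te ts x4 y)).card ≤
    (univ.filter (fun y : Fin n → Option (Fin q) =>
        EraSubOutput n q te ts x1 y ∧ EraSubOutput n q te ts x2 y)).card := by
  induction k with
  | zero =>
    intro x1 x2 x3 x4 h1 h2
    exact le_of_eq (eqA q n te ts x1 x2 x3 x4 (le_antisymm h1 (by omega)))
  | succ k ih =>
    intro x1 x2 x3 x4 h1 h2
    by_cases hle : hammingDist x3 x4 ≤ hammingDist x1 x2 + k
    · exact ih x1 x2 x3 x4 h1 hle
    · have hpos : 0 < hammingDist x3 x4 := by omega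
      have hne : ∃ j, x3 j ≠ x4 j := by
        by_contra hc
        push_neg at hc
        have : x3 = x4 := funext hc
        rw [this, hammingDist_self] at hpos
        omega
      obtain ⟨j, hj⟩ := hne
      have hd := dist_update x3 x4 j hj
      calc (univ.filter (fun y : Fin n → Option (Fin q) =>
              EraSubOutput n q te ts x3 y ∧ EraSubOutput n q te ts x4 y)).card
          ≤ (univ.filter (fun y : Fin n → Option (Fin q) =>
              EraSubOutput n q te ts x3 y ∧
                EraSubOutput n q te ts (Function.update x4 j (x3 j)) y)).card :=
            stepB q n te ts x3 x4 j hj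
        _ ≤ _ := ih x1 x2 x3 (Function.update x4 j (x3 j)) (by omega) (by omega)

/-- Monotonicity of intersections of erasure-substitution balls: if `d(x1,x2) ≤ d(x3,x4)` then
`|B^{e,s}_{te,ts}(x1) ∩ B^{e,s}_{te,ts}(x2)| ≥ |B^{e,s}_{te,ts}(x3) ∩ B^{e,s}_{te,ts}(x4)|`. -/
theorem stmt6 (q n te ts : ℕ) (x1 x2 x3 x4 : Fin n → Fin q)
    (h : hammingDist x1 x2 ≤ hammingDist x3 x4) :
    (univ.filter (fun y : Fin n → Option (Fin q) =>
        EraSubOutput n q te ts x3 y ∧ EraSubOutput n q te ts x4 y)).card ≤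
    (univ.filter (fun y : Fin n → Option (Fin q) =>
        EraSubOutput n q te ts x1 y ∧ EraSubOutput n q te ts x2 y)).card := by
  exact mainInd q n te ts (hammingDist x3 x4 - hammingDist x1 x2) x1 x2 x3 x4 h (by omega)
end

section
/- Let t = e + ℓ with ℓ ≥ 1, b ≥ 1, q ≥ 2, and n ≥ ℓ - 2 + (ℓ-1)²·2^b·(q-1)^{b-1}. Let Y ⊆ Z_q^n with |Y| ≥ V_q(n, ℓ-1) + 1, all words of Y within Hamming distance t of a word c ∈ Z_q^n. Then for any set D ⊆ [1,n] with |D| = b, there exists y ∈ Y such that |supp(c - y) \ D| ≥ ℓ - 1. -/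
open Finset


private theorem ball_card (q n r : ℕ) (c : Fin n → Fin q) :
    ((univ : Finset (Fin n → Fin q)).filter (fun z => hammingDist c z ≤ r)).card
      ≤ ∑ i ∈ Finset.range (r + 1), (q - 1) ^ i * n.choose i := by
  classical
  set A : Finset (Fin n) → Finset (Fin n → Fin q) :=
    fun S => Fintype.piFinset (fun j => if j ∈ S then ({c j}ᶜ : Finset (Fin q)) else {c j}) with hA
  have hAcard : ∀ S : Finset (Fin n), (A S).card = (q - 1) ^ S.card := by
    intro S
    rw [hA, Fintype.card_piFinset]
    have : ∀ i : Fin n, #(if i ∈ S then ({c i}ᶜ : Finset (Fin q)) else {c i})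
        = if i ∈ S then q - 1 else 1 := by
      intro i
      split <;> simp [Finset.card_compl]
    simp_rw [this]
    rw [Finset.prod_ite_mem, Finset.univ_inter, Finset.prod_const]
  have hsub : ((univ : Finset (Fin n → Fin q)).filter (fun z => hammingDist c z ≤ r))
      ⊆ ((Finset.range (r+1)).biUnion (fun i => Finset.powersetCard i univ)).biUnion A := by
    intro z hz
    simp only [mem_filter, mem_univ, true_and] at hz
    refine Finset.mem_biUnion.2 ⟨univ.filter (fun i => c i ≠ z i), ?_, ?_⟩
    · refine Finset.mem_biUnion.2 ⟨hammingDist c z, by simpa using Nat.lt_succ_of_le hz, ?_⟩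
      simp [Finset.mem_powersetCard, hammingDist]
    · rw [hA]
      simp only [Fintype.mem_piFinset]
      intro j
      by_cases h : c j = z j
      · simp [h]
      · simp [h]
        exact fun e => h e.symm
  calc _ ≤ _ := Finset.card_le_card hsub
    _ ≤ ∑ S ∈ (Finset.range (r+1)).biUnion (fun i => Finset.powersetCard i univ), (A S).card :=
        Finset.card_biUnion_le
    _ = ∑ i ∈ Finset.range (r+1), ∑ S ∈ Finset.powersetCard i (univ : Finset (Fin n)), (A S).card := by
        refine Finset.sum_biUnion ?_
        intro i _ j _ hij
        exact Finset.pairwise_disjoint_powersetCard univ hij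
    _ = ∑ i ∈ Finset.range (r + 1), (q - 1) ^ i * n.choose i := by
        refine Finset.sum_congr rfl fun i _ => ?_
        rw [Finset.sum_congr rfl (fun S hS => ?_), Finset.sum_const, Finset.card_powersetCard,
          smul_eq_mul, Finset.card_univ, Fintype.card_fin, mul_comm]
        rw [hAcard S, (Finset.mem_powersetCard.1 hS).2]

private theorem arith_key (q b m n : ℕ) (hq : 2 ≤ q) (hb : 1 ≤ b)
    (hn : m + (m + 1) ^ 2 * 2 ^ b * (q - 1) ^ (b - 1) ≤ n) :
    q ^ b * ∑ i ∈ Finset.range (m + 1), (q - 1) ^ i * n.choose i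
      ≤ (q - 1) ^ (m + 1) * n.choose (m + 1) := by
  set t : ℕ → ℕ := fun i => (q - 1) ^ i * n.choose i with ht
  have hq1 : 1 ≤ q - 1 := by omega
  have hnm : (m + 1) ^ 2 * 2 ^ b * (q - 1) ^ (b - 1) ≤ n - m := by omega
  have hnm2 : 2 * (m + 1) ^ 2 ≤ n - m := by
    calc 2 * (m + 1) ^ 2 ≤ (m + 1) ^ 2 * 2 ^ b * (q - 1) ^ (b - 1) := by
          have h2 : 2 ≤ 2 ^ b := by
            calc 2 = 2 ^ 1 := rfl
            _ ≤ 2 ^ b := Nat.pow_le_pow_right (by omega) hb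
          calc 2 * (m + 1) ^ 2 = (m + 1) ^ 2 * 2 * 1 := by ring
            _ ≤ (m + 1) ^ 2 * 2 ^ b * (q - 1) ^ (b - 1) :=
                Nat.mul_le_mul (Nat.mul_le_mul_left _ h2) (Nat.one_le_pow _ _ (by omega))
      _ ≤ n - m := hnm
  -- monotonicity of terms up to m
  have step : ∀ i, i < m → t i ≤ t (i + 1) := by
    intro i hi
    apply Nat.le_of_mul_le_mul_right _ (show 0 < i + 1 by omega)
    have hch : n.choose (i + 1) * (i + 1) = n.choose i * (n - i) := Nat.choose_succ_right_eq n i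
    calc t i * (i + 1) = (q - 1) ^ i * (n.choose i * (i + 1)) := by rw [ht]; ring
      _ ≤ (q - 1) ^ i * ((q - 1) * (n.choose i * (n - i))) := by
          apply Nat.mul_le_mul_left
          have hm1 : m + 1 ≤ (m + 1) ^ 2 := by nlinarith
          have : i + 1 ≤ n - i := by omega
          calc n.choose i * (i + 1) ≤ n.choose i * (n - i) := Nat.mul_le_mul_left _ this
            _ ≤ (q - 1) * (n.choose i * (n - i)) := Nat.le_mul_of_pos_left _ (by omega)
      _ = (q - 1) ^ (i + 1) * (n.choose i * (n - i)) := by ring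
      _ = t (i + 1) * (i + 1) := by rw [ht, ← hch]; ring
  have mono : ∀ j ≤ m, ∀ i ≤ j, t i ≤ t j := by
    intro j
    induction j with
    | zero => intro _ i hi; rw [Nat.le_zero.1 hi]
    | succ j ih =>
        intro hj i hi
        rcases Nat.lt_or_ge i (j + 1) with h | h
        · exact le_trans (ih (by omega) i (by omega)) (step j (by omega))
        · have : i = j + 1 := by omega
          simp [this]
  have hsum : ∑ i ∈ Finset.range (m + 1), t i ≤ (m + 1) * t m := by
    have := Finset.sum_le_card_nsmul (Finset.range (m + 1)) t (t m)
      (fun i hi => mono m le_rfl i (by simpa using Nat.lt_succ_iff.mp (Finset.mem_range.1 hi)))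
    simpa using this
  have key : q ^ b * (m + 1) ^ 2 ≤ (q - 1) * (n - m) := by
    calc q ^ b * (m + 1) ^ 2 ≤ (2 * (q - 1)) ^ b * (m + 1) ^ 2 :=
          Nat.mul_le_mul_right _ (Nat.pow_le_pow_left (by omega) b)
      _ = (m + 1) ^ 2 * 2 ^ b * ((q - 1) ^ (b - 1) * (q - 1)) := by
          have hpow : (q - 1) ^ b = (q - 1) ^ (b - 1) * (q - 1) := by
            conv_lhs => rw [show b = (b - 1) + 1 by omega]
            rw [pow_succ]
          rw [mul_pow, hpow]; ring
      _ = (m + 1) ^ 2 * 2 ^ b * (q - 1) ^ (b - 1) * (q - 1) := by ring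
      _ ≤ (n - m) * (q - 1) := Nat.mul_le_mul_right _ hnm
      _ = (q - 1) * (n - m) := by ring
  calc q ^ b * ∑ i ∈ Finset.range (m + 1), t i ≤ q ^ b * ((m + 1) * t m) :=
        Nat.mul_le_mul_left _ hsum
    _ ≤ (q - 1) ^ (m + 1) * n.choose (m + 1) := by
        apply Nat.le_of_mul_le_mul_right _ (show 0 < m + 1 by omega)
        have hch : n.choose (m + 1) * (m + 1) = n.choose m * (n - m) := Nat.choose_succ_right_eq n m
        calc q ^ b * ((m + 1) * t m) * (m + 1)
            = (q ^ b * (m + 1) ^ 2) * ((q - 1) ^ m * n.choose m) := by rw [ht]; ring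
          _ ≤ ((q - 1) * (n - m)) * ((q - 1) ^ m * n.choose m) := Nat.mul_le_mul_right _ key
          _ = (q - 1) ^ (m + 1) * (n.choose m * (n - m)) := by ring
          _ = (q - 1) ^ (m + 1) * n.choose (m + 1) * (m + 1) := by rw [← hch]; ring

/-- Lemma "ℓ-1 kaukana": with `t = e + ℓ`, `n ≥ ℓ-2 + (ℓ-1)²·2^b·(q-1)^{b-1}` and
`|Y| ≥ V_q(n,ℓ-1) + 1` where every word of `Y` is within Hamming distance `t` of `c`,
for any coordinate set `D` of size `b` there is `y ∈ Y` with `|supp(c-y) \ D| ≥ ℓ-1`. -/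
theorem stmt9 (q n e ℓ b t : ℕ) (ht : t = e + ℓ) (hq : 2 ≤ q) (hl : 1 ≤ ℓ) (hb : 1 ≤ b)
    (hn : ℓ - 2 + (ℓ - 1) ^ 2 * 2 ^ b * (q - 1) ^ (b - 1) ≤ n)
    (c : Fin n → Fin q) (Y : Finset (Fin n → Fin q))
    (hY : (∑ i ∈ Finset.range ℓ, (q - 1) ^ i * n.choose i) + 1 ≤ Y.card)
    (hYt : ∀ y ∈ Y, hammingDist c y ≤ t)
    (D : Finset (Fin n)) (hD : D.card = b) :
    ∃ y ∈ Y, ℓ - 1 ≤ ((univ.filter (fun i => c i ≠ y i)) \ D).card := by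
  classical
  have hYne : Y.Nonempty := Finset.card_pos.1 (by omega)
  rcases Nat.lt_or_ge ℓ 2 with hl2 | hl2
  · obtain ⟨y, hy⟩ := hYne
    exact ⟨y, hy, by omega⟩
  obtain ⟨m, rfl⟩ : ∃ m, ℓ = m + 2 := ⟨ℓ - 2, by omega⟩
  by_contra hcon
  push_neg at hcon
  have hcon' : ∀ y ∈ Y, ((univ.filter (fun i => c i ≠ y i)) \ D).card ≤ m := by
    intro y hy
    have := hcon y hy
    omega
  set B : Finset (Fin n → Fin q) :=
    (univ : Finset (Fin n → Fin q)).filter (fun z => hammingDist c z ≤ m) with hB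
  set P : Finset (Fin n → Fin q) :=
    Fintype.piFinset (fun i => if i ∈ D then (univ : Finset (Fin q)) else {c i}) with hP
  have hPcard : P.card = q ^ b := by
    rw [hP, Fintype.card_piFinset]
    have : ∀ i : Fin n, #(if i ∈ D then (univ : Finset (Fin q)) else {c i})
        = if i ∈ D then q else 1 := by
      intro i; split <;> simp
    simp_rw [this]
    rw [Finset.prod_ite_mem, Finset.univ_inter, Finset.prod_const, hD]
  -- injection
  have hinj : Y.card ≤ (P ×ˢ B).card := by
    apply Finset.card_le_card_of_injOn
      (fun y => ((fun i => if i ∈ D then y i else c i), (fun i => if i ∈ D then c i else y i)))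
    · intro y hy
      rw [Finset.mem_coe, Finset.mem_product]
      constructor
      · rw [hP]
        simp only [Fintype.mem_piFinset]
        intro j
        by_cases h : j ∈ D <;> simp [h]
      · rw [hB, Finset.mem_filter]
        refine ⟨Finset.mem_univ _, ?_⟩
        have hset : (univ.filter (fun i => c i ≠ (if i ∈ D then c i else y i)))
            = (univ.filter (fun i => c i ≠ y i)) \ D := by
          ext i
          by_cases h : i ∈ D <;> simp [h, Finset.mem_sdiff]
        rw [hammingDist, hset]
        exact hcon' y hy
    · intro y1 h1 y2 h2 hEq
      simp only [Prod.mk.injEq] at hEq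
      funext i
      by_cases h : i ∈ D
      · have := congrFun hEq.1 i; simpa [h] using this
      · have := congrFun hEq.2 i; simpa [h] using this
  have hBcard : B.card ≤ ∑ i ∈ Finset.range (m + 1), (q - 1) ^ i * n.choose i :=
    ball_card q n m c
  have htot : Y.card ≤ q ^ b * ∑ i ∈ Finset.range (m + 1), (q - 1) ^ i * n.choose i := by
    calc Y.card ≤ (P ×ˢ B).card := hinj
      _ = P.card * B.card := Finset.card_product P B
      _ ≤ q ^ b * ∑ i ∈ Finset.range (m + 1), (q - 1) ^ i * n.choose i := by
          rw [hPcard]; exact Nat.mul_le_mul_left _ hBcard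
  have harith : q ^ b * ∑ i ∈ Finset.range (m + 1), (q - 1) ^ i * n.choose i
      ≤ (q - 1) ^ (m + 1) * n.choose (m + 1) :=
    arith_key q b m n hq hb (by simpa using hn)
  have htop : (q - 1) ^ (m + 1) * n.choose (m + 1)
      ≤ ∑ i ∈ Finset.range (m + 2), (q - 1) ^ i * n.choose i :=
    Finset.single_le_sum (f := fun i => (q - 1) ^ i * n.choose i)
      (fun i _ => Nat.zero_le _) (Finset.mem_range.2 (by omega))
  omega
end

section
/- Counting bound used in Lemma 'l-1 kaukana': if n ≥ ℓ - 2 + (ℓ-1)²·2^b·(q-1)^{b-1}, b ≥ 1, ℓ ≥ 2, q ≥ 2, then Σ_{j=0}^{ℓ-2} Σ_{i=0}^{b} (q-1)^{i+j} C(b,i) C(n-b,j) < V_q(n, ℓ-1), where V_q(n,r) = Σ_{i=0}^{r} (q-1)^i C(n,i). -/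
open Finset

/-- Counting bound: if `n ≥ ℓ-2 + (ℓ-1)²·2^b·(q-1)^{b-1}`, `b ≥ 1`, `ℓ ≥ 2`, then
`Σ_{j=0}^{ℓ-2} Σ_{i=0}^{b} (q-1)^{i+j} C(b,i) C(n-b,j) < V_q(n,ℓ-1)`. -/
theorem stmt10 (q n b ℓ : ℕ) (hq : 2 ≤ q) (hl : 2 ≤ ℓ) (hb : 1 ≤ b)
    (hn : ℓ - 2 + (ℓ - 1) ^ 2 * 2 ^ b * (q - 1) ^ (b - 1) ≤ n) :
    ∑ j ∈ Finset.range (ℓ - 1), ∑ i ∈ Finset.range (b + 1),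
        (q - 1) ^ (i + j) * b.choose i * (n - b).choose j
      < ∑ i ∈ Finset.range ℓ, (q - 1) ^ i * n.choose i := by
  obtain ⟨L, rfl⟩ : ∃ L, ℓ = L + 2 := ⟨ℓ - 2, by omega⟩
  obtain ⟨s, rfl⟩ : ∃ s, q = s + 2 := ⟨q - 2, by omega⟩
  obtain ⟨c, rfl⟩ : ∃ c, b = c + 1 := ⟨b - 1, by omega⟩
  simp only [show L + 2 - 1 = L + 1 from rfl, show L + 2 - 2 = L from rfl,
    show s + 2 - 1 = s + 1 from rfl, show c + 1 - 1 = c from rfl] at hn ⊢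
  set b := c + 1 with hbdef
  set M := (L + 1) * 2 ^ b * (s + 1) ^ c with hM
  have hnM : L + (L + 1) * M ≤ n := by
    have : L + (L + 1) * M = L + (L + 1) ^ 2 * 2 ^ b * (s + 1) ^ c := by
      rw [hM]; ring
    omega
  have hM1 : 0 < M := by positivity
  -- key step: choose ratio bound
  have key : ∀ k, k ≤ L → M * n.choose k ≤ n.choose (k + 1) := by
    intro k hk
    have h1 : n.choose (k + 1) * (k + 1) = n.choose k * (n - k) :=
      Nat.choose_succ_right_eq n k
    have h2 : (L + 1) * M ≤ n - k := by omega
    have h3 : n.choose k * ((L + 1) * M) ≤ n.choose (k + 1) * (L + 1) := by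
      calc n.choose k * ((L + 1) * M) ≤ n.choose k * (n - k) :=
            Nat.mul_le_mul_left _ h2
        _ = n.choose (k + 1) * (k + 1) := h1.symm
        _ ≤ n.choose (k + 1) * (L + 1) := Nat.mul_le_mul_left _ (by omega)
    have h4 : (L + 1) * (M * n.choose k) ≤ (L + 1) * n.choose (k + 1) := by
      nlinarith [h3]
    exact Nat.le_of_mul_le_mul_left h4 (by omega)
  set f : ℕ → ℕ := fun k => (s + 1) ^ k * n.choose k with hf
  have fmono : ∀ k, k ≤ L → f k ≤ f (k + 1) := by
    intro k hk
    have hkey := key k hk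
    simp only [hf]
    calc (s + 1) ^ k * n.choose k ≤ (s + 1) ^ k * (M * n.choose k) :=
          Nat.mul_le_mul_left _ (Nat.le_mul_of_pos_left _ (by omega))
      _ ≤ (s + 1) ^ k * n.choose (k + 1) := Nat.mul_le_mul_left _ hkey
      _ ≤ (s + 1) ^ (k + 1) * n.choose (k + 1) := by
          apply Nat.mul_le_mul_right
          exact Nat.pow_le_pow_right (by omega) (by omega)
  have fmono' : ∀ j k, j ≤ k → k ≤ L + 1 → f j ≤ f k := by
    intro j k hjk hkL
    induction k with
    | zero =>
      have hj0 : j = 0 := by omega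
      subst hj0; exact le_rfl
    | succ m ih =>
      rcases Nat.lt_or_ge j (m + 1) with h | h
      · exact le_trans (ih (by omega) (by omega)) (fmono m (by omega))
      · have : j = m + 1 := by omega
        subst this; exact le_rfl
  have chainB : ∀ j, j ≤ L → (s + 1) * M * f j ≤ f (L + 1) := by
    intro j hj
    have h1 : (s + 1) * M * f j ≤ f (j + 1) := by
      have hkey := key j hj
      simp only [hf]
      calc (s + 1) * M * ((s + 1) ^ j * n.choose j)
          = (s + 1) ^ (j + 1) * (M * n.choose j) := by ring
        _ ≤ (s + 1) ^ (j + 1) * n.choose (j + 1) := Nat.mul_le_mul_left _ hkey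
    exact le_trans h1 (fmono' (j + 1) (L + 1) (by omega) le_rfl)
  have hpow : (L + 1) * (s + 2) ^ b ≤ (s + 1) * M := by
    have h2 : (s + 2) ^ b ≤ (2 * (s + 1)) ^ b := Nat.pow_le_pow_left (by omega) b
    calc (L + 1) * (s + 2) ^ b ≤ (L + 1) * (2 * (s + 1)) ^ b :=
          Nat.mul_le_mul_left _ h2
      _ = (s + 1) * M := by rw [hM, hbdef, mul_pow]; ring
  -- binomial theorem for the inner sum
  have expand : (∑ i ∈ Finset.range (b + 1), (s + 1) ^ i * b.choose i) = (s + 2) ^ b := by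
    have := add_pow (s + 1) 1 b
    simp only [one_pow, mul_one, Nat.cast_id] at this
    rw [show (s + 2 : ℕ) = (s + 1) + 1 from rfl, this]
  have inner : ∀ j, (∑ i ∈ Finset.range (b + 1),
      (s + 1) ^ (i + j) * b.choose i * (n - b).choose j)
      = (s + 2) ^ b * ((s + 1) ^ j * (n - b).choose j) := by
    intro j
    rw [← expand, Finset.sum_mul]
    apply Finset.sum_congr rfl
    intro i _
    ring
  -- term-wise bound with full binomial
  have termle : ∀ j, (s + 2) ^ b * ((s + 1) ^ j * (n - b).choose j)
      ≤ (s + 2) ^ b * f j := by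
    intro j
    apply Nat.mul_le_mul_left
    exact Nat.mul_le_mul_left _ (Nat.choose_le_choose j (Nat.sub_le n b))
  have hS : (∑ j ∈ Finset.range (L + 1), (s + 2) ^ b * f j) ≤ f (L + 1) := by
    have h : (L + 1) * ∑ j ∈ Finset.range (L + 1), (s + 2) ^ b * f j
        ≤ (L + 1) * f (L + 1) := by
      rw [Finset.mul_sum]
      calc (∑ j ∈ Finset.range (L + 1), (L + 1) * ((s + 2) ^ b * f j))
          ≤ ∑ _j ∈ Finset.range (L + 1), f (L + 1) := by
            apply Finset.sum_le_sum
            intro j hj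
            have hj' : j ≤ L := by
              have := Finset.mem_range.mp hj; omega
            calc (L + 1) * ((s + 2) ^ b * f j)
                = ((L + 1) * (s + 2) ^ b) * f j := by ring
              _ ≤ ((s + 1) * M) * f j := Nat.mul_le_mul_right _ hpow
              _ ≤ f (L + 1) := chainB j hj'
        _ = (L + 1) * f (L + 1) := by
            rw [Finset.sum_const, Finset.card_range, smul_eq_mul]
    exact Nat.le_of_mul_le_mul_left h (by omega)
  have hLHS : (∑ j ∈ Finset.range (L + 1), ∑ i ∈ Finset.range (b + 1),
      (s + 1) ^ (i + j) * b.choose i * (n - b).choose j) ≤ f (L + 1) := by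
    calc (∑ j ∈ Finset.range (L + 1), ∑ i ∈ Finset.range (b + 1),
        (s + 1) ^ (i + j) * b.choose i * (n - b).choose j)
        = ∑ j ∈ Finset.range (L + 1), (s + 2) ^ b * ((s + 1) ^ j * (n - b).choose j) := by
          apply Finset.sum_congr rfl; intro j _; exact inner j
      _ ≤ ∑ j ∈ Finset.range (L + 1), (s + 2) ^ b * f j :=
          Finset.sum_le_sum fun j _ => termle j
      _ ≤ f (L + 1) := hS
  have hRHS : (∑ i ∈ Finset.range (L + 2), (s + 1) ^ i * n.choose i)
      = (∑ i ∈ Finset.range (L + 1), f i) + f (L + 1) := by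
    rw [Finset.sum_range_succ]
  have hpos : 1 ≤ ∑ i ∈ Finset.range (L + 1), f i := by
    calc 1 = f 0 := by simp [hf]
      _ ≤ ∑ i ∈ Finset.range (L + 1), f i :=
          Finset.single_le_sum (fun i _ => Nat.zero_le _) (Finset.mem_range.mpr (by omega))
  rw [hRHS]
  omega
end

section
/- Let ℓ ≥ 1, q ≥ 3, t = e + ℓ, let C ⊆ Z_q^n be an e-error-correcting code, and let Y be a set of at least V_q(n, ℓ-1) + 1 distinct words. Suppose w ∈ Z_q^n satisfies d(w, c) ≤ e + 1 for every c ∈ T(Y) = ∩_{y∈Y} B_t(y) ∩ C. Then |T(Y)| ≤ ℓ(q-1) + 1. -/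
open Finset

lemma hammingDist_def {q n : ℕ} (x y : Fin n → Fin q) :
    hammingDist x y = (univ.filter fun i => x i ≠ y i).card := rfl

-- sphere bound
lemma sphere_card_le (q n : ℕ) (w : Fin n → Fin q) (i : ℕ) :
    (univ.filter fun y : Fin n → Fin q => hammingDist w y = i).card
      ≤ (q - 1) ^ i * n.choose i := by
  classical
  have hsub : (univ.filter fun y : Fin n → Fin q => hammingDist w y = i)
      ⊆ (univ.powersetCard i).biUnion
        (fun s => univ.filter fun y : Fin n → Fin q =>
          (univ.filter fun j => w j ≠ y j) = s) := by
    intro y hy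
    simp only [mem_filter, mem_univ, true_and] at hy
    refine mem_biUnion.2 ⟨univ.filter fun j => w j ≠ y j, ?_, ?_⟩
    · exact mem_powersetCard.2 ⟨subset_univ _, hy⟩
    · simp
  have hfiber : ∀ s ∈ univ.powersetCard i,
      (univ.filter fun y : Fin n → Fin q =>
        (univ.filter fun j => w j ≠ y j) = s).card ≤ (q-1)^i := by
    intro s hs
    obtain ⟨-, hcard⟩ := mem_powersetCard.1 hs
    have hle := Finset.card_le_card_of_injOn
      (s := univ.filter fun y : Fin n → Fin q => (univ.filter fun j => w j ≠ y j) = s)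
      (f := fun (y : Fin n → Fin q) => (fun j (_ : j ∈ s) => y j))
      (t := s.pi fun _j => univ.erase (w _j)) ?_ ?_
    · refine hle.trans (le_of_eq ?_)
      rw [Finset.card_pi]
      have : ∀ j ∈ s, (univ.erase (w j)).card = q - 1 := by
        intro j _
        rw [card_erase_of_mem (mem_univ _), card_univ, Fintype.card_fin]
      calc (∏ j ∈ s, (univ.erase (w j)).card) = ∏ _j ∈ s, (q-1) :=
            Finset.prod_congr rfl this
        _ = (q-1)^s.card := Finset.prod_const _
        _ = (q-1)^i := by rw [hcard]
    · intro y hy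
      simp only [mem_coe, mem_filter, mem_univ, true_and] at hy
      rw [mem_coe, Finset.mem_pi]
      intro j hj
      rw [← hy] at hj
      simp only [mem_filter, mem_univ, true_and] at hj
      exact mem_erase.2 ⟨fun h => hj h.symm, mem_univ _⟩
    · intro y1 h1 y2 h2 heq
      simp only [mem_coe, mem_filter, mem_univ, true_and] at h1 h2
      funext j
      by_cases hj : j ∈ s
      · exact congrFun (congrFun heq j) hj
      · rw [← h1] at hj
        have hj1 : w j = y1 j := by
          by_contra hc; exact hj (mem_filter.2 ⟨mem_univ _, hc⟩)
        have hj2 : w j = y2 j := by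
          rw [← h2] at h1
          by_contra hc
          exact hj (by rw [h1]; exact mem_filter.2 ⟨mem_univ _, hc⟩)
        rw [← hj1, ← hj2]
  calc (univ.filter fun y : Fin n → Fin q => hammingDist w y = i).card
      ≤ ((univ.powersetCard i).biUnion _).card := card_le_card hsub
    _ ≤ ∑ s ∈ univ.powersetCard i, (univ.filter fun y : Fin n → Fin q =>
          (univ.filter fun j => w j ≠ y j) = s).card := card_biUnion_le
    _ ≤ ∑ _s ∈ univ.powersetCard i, (q-1)^i := Finset.sum_le_sum hfiber
    _ = (q-1)^i * n.choose i := by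
        rw [Finset.sum_const, Finset.card_powersetCard, card_univ, Fintype.card_fin,
          smul_eq_mul, mul_comm]

lemma ball_card_le (q n R : ℕ) (w : Fin n → Fin q) :
    (univ.filter fun y : Fin n → Fin q => hammingDist w y < R).card
      ≤ ∑ i ∈ Finset.range R, (q - 1) ^ i * n.choose i := by
  classical
  have hsub : (univ.filter fun y : Fin n → Fin q => hammingDist w y < R)
      ⊆ (Finset.range R).biUnion
        (fun i => univ.filter fun y : Fin n → Fin q => hammingDist w y = i) := by
    intro y hy
    simp only [mem_filter, mem_univ, true_and] at hy
    exact mem_biUnion.2 ⟨hammingDist w y, Finset.mem_range.2 hy, by simp⟩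
  calc _ ≤ ((Finset.range R).biUnion _).card := card_le_card hsub
    _ ≤ ∑ i ∈ Finset.range R, (univ.filter fun y : Fin n → Fin q =>
          hammingDist w y = i).card := card_biUnion_le
    _ ≤ _ := Finset.sum_le_sum fun i _ => sphere_card_le q n w i

set_option maxHeartbeats 2000000 in
lemma central (q n e ℓ : ℕ) (hq : 3 ≤ q) (hl : 1 ≤ ℓ)
    (T : Finset (Fin n → Fin q))
    (hmin : ∀ c1 ∈ T, ∀ c2 ∈ T, c1 ≠ c2 → 2*e+1 ≤ hammingDist c1 c2)
    (w y : Fin n → Fin q)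
    (hw : ∀ c ∈ T, hammingDist w c ≤ e+1)
    (hy : ∀ c ∈ T, hammingDist c y ≤ e+ℓ)
    (hm : ℓ ≤ hammingDist w y) :
    T.card ≤ ℓ*(q-1)+1 := by
  classical
  by_contra hNlt
  push_neg at hNlt
  have hN : ℓ*(q-1)+2 ≤ T.card := hNlt
  have hN2 : 2 ≤ T.card := le_trans (by omega) hN
  set m := hammingDist w y with hmdef
  -- slot lemma
  have slot : ∀ c1 ∈ T, ∀ c2 ∈ T, ∀ j : Fin n, c1 j = c2 j → c1 j ≠ w j → c1 = c2 := by
    intro c1 h1 c2 h2 j hj hjw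
    by_contra hne
    have hd := hmin c1 h1 c2 h2 hne
    have hsub : (univ.filter fun i => c1 i ≠ c2 i) ⊆
        ((univ.filter fun i => w i ≠ c1 i) ∪ (univ.filter fun i => w i ≠ c2 i)).erase j := by
      intro i hi
      simp only [mem_filter, mem_univ, true_and] at hi
      refine mem_erase.2 ⟨?_, ?_⟩
      · rintro rfl; exact hi (hj)
      · simp only [mem_union, mem_filter, mem_univ, true_and]
        by_contra hc
        push_neg at hc
        exact hi (hc.1.symm.trans hc.2)
    have hjmem : j ∈ (univ.filter fun i => w i ≠ c1 i) ∩ (univ.filter fun i => w i ≠ c2 i) := by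
      simp only [mem_inter, mem_filter, mem_univ, true_and]
      exact ⟨fun h => hjw h.symm, fun h => hjw (hj.trans h.symm)⟩
    have h1' : (univ.filter fun i => w i ≠ c1 i).card ≤ e + 1 := hw c1 h1
    have h2' : (univ.filter fun i => w i ≠ c2 i).card ≤ e + 1 := hw c2 h2
    have hinter : 1 ≤ ((univ.filter fun i => w i ≠ c1 i) ∩ (univ.filter fun i => w i ≠ c2 i)).card :=
      card_pos.2 ⟨j, hjmem⟩
    have hu := Finset.card_union_add_card_inter (univ.filter fun i => w i ≠ c1 i)
      (univ.filter fun i => w i ≠ c2 i)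
    have hjmem' : j ∈ (univ.filter fun i => w i ≠ c1 i) ∪ (univ.filter fun i => w i ≠ c2 i) :=
      mem_union.2 (Or.inl (mem_inter.1 hjmem).1)
    have h3 : hammingDist c1 c2 ≤
        ((univ.filter fun i => w i ≠ c1 i) ∪ (univ.filter fun i => w i ≠ c2 i)).card - 1 := by
      have := card_le_card hsub
      rwa [card_erase_of_mem hjmem'] at this
    have hpos : 1 ≤ ((univ.filter fun i => w i ≠ c1 i) ∪ (univ.filter fun i => w i ≠ c2 i)).card :=
      card_pos.2 ⟨j, hjmem'⟩
    omega
  -- every codeword has distance ≥ e from w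
  have hceil : ∀ c ∈ T, e ≤ hammingDist w c := by
    intro c hc
    obtain ⟨c', hc', hne⟩ := Finset.exists_mem_ne (show 1 < T.card by omega) c
    have := hmin c' hc' c hc hne
    have ht := hammingDist_triangle c' w c
    have h1 := hw c' hc'
    rw [hammingDist_comm c' w] at ht
    omega
  -- at most one codeword with distance ≤ e from w
  have hsmall : (T.filter fun c => hammingDist w c ≤ e).card ≤ 1 := by
    refine Finset.card_le_one.2 ?_
    intro c1 h1 c2 h2
    simp only [mem_filter] at h1 h2
    by_contra hne
    have := hmin c1 h1.1 c2 h2.1 hne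
    have ht := hammingDist_triangle c1 w c2
    rw [hammingDist_comm c1 w] at ht
    omega
  -- weights
  set ψ : (Fin n → Fin q) → Fin n → ℕ :=
    fun c j => if c j ≠ w j ∧ w j ≠ y j then 1 else 0 with hψ
  set χ : (Fin n → Fin q) → Fin n → ℕ :=
    fun c j => if c j = y j ∧ w j ≠ y j then 1 else 0 with hχ
  -- pointwise identity
  have hpoint : ∀ c : Fin n → Fin q, ∀ j : Fin n,
      ψ c j + χ c j + (if c j ≠ y j then 1 else 0)
        = (if w j ≠ y j then 1 else 0) + (if c j ≠ w j then 1 else 0) := by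
    intro c j
    simp only [hψ, hχ]
    by_cases h1 : w j = y j <;> by_cases h2 : c j = w j <;> by_cases h3 : c j = y j <;>
      simp_all <;> omega
  have hdistsum : ∀ (u v : Fin n → Fin q),
      hammingDist u v = ∑ j, (if u j ≠ v j then 1 else 0) := by
    intro u v
    rw [show hammingDist u v = (univ.filter fun i => u i ≠ v i).card from rfl, card_filter]
  -- codeword identity
  have hid : ∀ c ∈ T, (∑ j, (ψ c j + χ c j)) + hammingDist c y = m + hammingDist w c := by
    intro c _
    have : (∑ j, (ψ c j + χ c j)) + (∑ j, (if c j ≠ y j then 1 else 0))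
        = (∑ j, (if w j ≠ y j then 1 else 0)) + (∑ j, (if c j ≠ w j then 1 else 0)) := by
      rw [← Finset.sum_add_distrib, ← Finset.sum_add_distrib]
      exact Finset.sum_congr rfl fun j _ => hpoint c j
    calc (∑ j, (ψ c j + χ c j)) + hammingDist c y
        = (∑ j, (ψ c j + χ c j)) + ∑ j, (if c j ≠ y j then 1 else 0) := by
          rw [hdistsum c y]
      _ = (∑ j, (if w j ≠ y j then 1 else 0)) + ∑ j, (if c j ≠ w j then 1 else 0) := this
      _ = hammingDist w y + hammingDist c w := by rw [← hdistsum w y, ← hdistsum c w]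
      _ = m + hammingDist w c := by rw [hammingDist_comm c w]
  -- capacities per position
  have cap1 : ∀ j : Fin n, (∑ c ∈ T, ψ c j) ≤ if w j ≠ y j then q - 1 else 0 := by
    intro j
    by_cases hwy : w j = y j
    · simp [hψ, hwy]
    · simp only [hwy, ne_eq, not_false_eq_true, if_true]
      have : (∑ c ∈ T, ψ c j) = (T.filter fun c => c j ≠ w j ∧ w j ≠ y j).card := by
        rw [card_filter]
      rw [this]
      have := Finset.card_le_card_of_injOn (f := fun c : Fin n → Fin q => c j)
        (t := univ.erase (w j))
        (s := T.filter fun c => c j ≠ w j ∧ w j ≠ y j)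
        (fun c hc => by
          simp only [mem_coe, mem_filter] at hc
          exact mem_erase.2 ⟨hc.2.1, mem_univ _⟩)
        (fun c1 h1 c2 h2 heq => by
          simp only [mem_coe, mem_filter] at h1 h2
          exact slot c1 h1.1 c2 h2.1 j heq h1.2.1)
      rwa [card_erase_of_mem (mem_univ _), card_univ, Fintype.card_fin] at this
  have cap2 : ∀ j : Fin n, (∑ c ∈ T, χ c j) ≤ if w j ≠ y j then 1 else 0 := by
    intro j
    by_cases hwy : w j = y j
    · simp [hχ, hwy]
    · simp only [hwy, ne_eq, not_false_eq_true, if_true]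
      have : (∑ c ∈ T, χ c j) = (T.filter fun c => c j = y j ∧ w j ≠ y j).card := by
        rw [card_filter]
      rw [this]
      refine Finset.card_le_one.2 ?_
      intro c1 h1 c2 h2
      simp only [mem_filter] at h1 h2
      exact slot c1 h1.1 c2 h2.1 j (h1.2.1.trans h2.2.1.symm)
        (by rw [h1.2.1]; exact fun h => hwy h.symm)
  -- total capacities
  have hm_eq : m = (univ.filter fun j => w j ≠ y j).card := rfl
  have hPsiTot : ∑ c ∈ T, ∑ j, ψ c j ≤ m * (q-1) := by
    rw [Finset.sum_comm]
    calc (∑ j, ∑ c ∈ T, ψ c j) ≤ ∑ j, (if w j ≠ y j then q - 1 else 0) :=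
          Finset.sum_le_sum fun j _ => cap1 j
      _ = (univ.filter fun j => w j ≠ y j).card * (q-1) := by
          rw [Finset.sum_ite, Finset.sum_const, Finset.sum_const_zero, add_zero, smul_eq_mul]
      _ = m * (q-1) := by rw [← hm_eq]
  have hChiTot : ∑ c ∈ T, ∑ j, χ c j ≤ m := by
    rw [Finset.sum_comm]
    calc (∑ j, ∑ c ∈ T, χ c j) ≤ ∑ j, (if w j ≠ y j then 1 else 0) :=
          Finset.sum_le_sum fun j _ => cap2 j
      _ = m := by rw [hm_eq, card_filter]
  -- case split on m
  rcases Nat.lt_or_ge ℓ m with hml | hml'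
  · -- case m ≥ ℓ+1 : weighted argument
    have hsum : (∑ c ∈ T, ((∑ j, (ψ c j + χ c j)) + hammingDist c y))
        = ∑ c ∈ T, (m + hammingDist w c) := Finset.sum_congr rfl hid
    have hW : ∑ c ∈ T, ∑ j, (ψ c j + χ c j) ≤ m * (q-1) + m := by
      calc ∑ c ∈ T, ∑ j, (ψ c j + χ c j)
          = (∑ c ∈ T, ∑ j, ψ c j) + ∑ c ∈ T, ∑ j, χ c j := by
            rw [← Finset.sum_add_distrib]
            exact Finset.sum_congr rfl fun c _ => Finset.sum_add_distrib
        _ ≤ m * (q-1) + m := Nat.add_le_add hPsiTot hChiTot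
    have hdy : ∑ c ∈ T, hammingDist c y ≤ T.card * (e+ℓ) := by
      calc ∑ c ∈ T, hammingDist c y ≤ ∑ _c ∈ T, (e+ℓ) :=
            Finset.sum_le_sum fun c hc => hy c hc
        _ = T.card * (e+ℓ) := by rw [Finset.sum_const, smul_eq_mul]
    have hdw : T.card * (e+1) ≤ (∑ c ∈ T, hammingDist w c) + 1 := by
      have hpt : ∀ c ∈ T, e + 1 ≤ hammingDist w c + (if hammingDist w c ≤ e then 1 else 0) := by
        intro c hc
        have := hceil c hc
        split_ifs <;> omega
      have h1 : T.card * (e+1)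
          ≤ ∑ c ∈ T, (hammingDist w c + (if hammingDist w c ≤ e then 1 else 0)) := by
        calc T.card * (e+1) = ∑ _c ∈ T, (e+1) := by rw [Finset.sum_const, smul_eq_mul]
          _ ≤ _ := Finset.sum_le_sum hpt
      have hsplit : ∑ c ∈ T, (hammingDist w c + (if hammingDist w c ≤ e then 1 else 0))
          = (∑ c ∈ T, hammingDist w c) + (T.filter fun c => hammingDist w c ≤ e).card := by
        rw [Finset.sum_add_distrib, card_filter]
      rw [hsplit] at h1
      linarith [hsmall]
    have hLHS : ∑ c ∈ T, ((∑ j, (ψ c j + χ c j)) + hammingDist c y)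
        ≤ (m*(q-1)+m) + T.card * (e+ℓ) := by
      rw [Finset.sum_add_distrib]
      exact Nat.add_le_add hW hdy
    have hRHS : T.card * m + T.card * (e+1) ≤ (∑ c ∈ T, (m + hammingDist w c)) + 1 := by
      rw [Finset.sum_add_distrib, Finset.sum_const, smul_eq_mul]
      linarith [hdw]
    have key : T.card * m + T.card * (e+1) ≤ (m*(q-1)+m) + T.card * (e+ℓ) + 1 := by
      rw [hsum] at hLHS
      linarith [hRHS, hLHS]
    -- contradiction by integer arithmetic
    have hq1 : (1:ℕ) ≤ q := by omega
    zify [hq1] at key hN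
    have hml2 : (ℓ:ℤ) + 1 ≤ (m:ℤ) := by exact_mod_cast hml
    have hq2 : (3:ℤ) ≤ (q:ℤ) := by exact_mod_cast hq
    have hl2 : (1:ℤ) ≤ (ℓ:ℤ) := by exact_mod_cast hl
    have hA : (0:ℤ) ≤ ((T.card:ℤ) - ((ℓ:ℤ)*((q:ℤ)-1)+2)) * ((m:ℤ) - (ℓ:ℤ) + 1) := by
      apply mul_nonneg <;> linarith
    have hB : (0:ℤ) ≤ ((m:ℤ) - (ℓ:ℤ) - 1) * (((ℓ:ℤ)-1)*((q:ℤ)-1)+1) := by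
      apply mul_nonneg
      · linarith
      · nlinarith
    have hC : (0:ℤ) ≤ ((ℓ:ℤ)-1)*((q:ℤ)-2) := by
      apply mul_nonneg <;> linarith
    nlinarith [hA, hB, hC, key, hN]
  · -- case m = ℓ
    have hmeq : m = ℓ := le_antisymm hml' hm
    have hwcle : ∀ c ∈ T, (∑ j, ψ c j) = 0 → hammingDist w c ≤ e := by
      intro c hc h0
      have hχψ : ∑ j, χ c j ≤ ∑ j, ψ c j := by
        apply Finset.sum_le_sum
        intro j _
        simp only [hψ, hχ]
        split_ifs with h1 h2
        · omega
        · exact absurd ⟨(by rw [h1.1]; exact fun h => h1.2 h.symm), h1.2⟩ h2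
        · omega
        · omega
      have hid' := hid c hc
      have hsum0 : (∑ j, (ψ c j + χ c j)) = 0 := by
        rw [Finset.sum_add_distrib]
        omega
      have := hy c hc
      omega
    have hT0 : (T.filter fun c => (∑ j, ψ c j) = 0).card ≤ 1 := by
      refine Finset.card_le_one.2 ?_
      intro c1 h1 c2 h2
      simp only [mem_filter] at h1 h2
      by_contra hne
      have := hmin c1 h1.1 c2 h2.1 hne
      have ht := hammingDist_triangle c1 w c2
      rw [hammingDist_comm c1 w] at ht
      have e1 := hwcle c1 h1.1 h1.2
      have e2 := hwcle c2 h2.1 h2.2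
      omega
    have hT1 : (T.filter fun c => ¬((∑ j, ψ c j) = 0)).card ≤ ∑ c ∈ T, ∑ j, ψ c j := by
      calc (T.filter fun c => ¬((∑ j, ψ c j) = 0)).card
          = ∑ _c ∈ T.filter fun c => ¬((∑ j, ψ c j) = 0), 1 := by
            rw [Finset.sum_const, smul_eq_mul, mul_one]
        _ ≤ ∑ c ∈ T.filter fun c => ¬((∑ j, ψ c j) = 0), ∑ j, ψ c j := by
            apply Finset.sum_le_sum
            intro c hc
            simp only [mem_filter] at hc
            omega
        _ ≤ ∑ c ∈ T, ∑ j, ψ c j :=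
            Finset.sum_le_sum_of_subset (Finset.filter_subset _ _)
    have hcardsplit := Finset.card_filter_add_card_filter_not
      (s := T) (p := fun c => (∑ j, ψ c j) = 0)
    rw [hmeq] at hPsiTot
    linarith [hT0, hT1, hPsiTot, hcardsplit, hN]


/-- Lemma "Keskussana": let `ℓ ≥ 1`, `q ≥ 3`, `t = e + ℓ`, `C` an `e`-error-correcting code and
`Y` a set of at least `V_q(n,ℓ-1)+1` distinct words. If `w` satisfies `d(w,c) ≤ e+1` for every
`c ∈ T(Y) = ∩_{y∈Y} B_t(y) ∩ C`, then `|T(Y)| ≤ ℓ(q-1)+1`. -/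
theorem stmt12 (q n e ℓ t : ℕ) (ht : t = e + ℓ) (hq : 3 ≤ q) (hl : 1 ≤ ℓ)
    (C : Finset (Fin n → Fin q))
    (hC : ∀ c1 ∈ C, ∀ c2 ∈ C, c1 ≠ c2 → 2 * e + 1 ≤ hammingDist c1 c2)
    (Y : Finset (Fin n → Fin q))
    (hY : (∑ i ∈ Finset.range ℓ, (q - 1) ^ i * n.choose i) + 1 ≤ Y.card)
    (w : Fin n → Fin q)
    (hw : ∀ c ∈ C.filter (fun c => ∀ y ∈ Y, hammingDist c y ≤ t), hammingDist w c ≤ e + 1) :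
    (C.filter (fun c => ∀ y ∈ Y, hammingDist c y ≤ t)).card ≤ ℓ * (q - 1) + 1 := by
  classical
  have hfar : ∃ y ∈ Y, ℓ ≤ hammingDist w y := by
    by_contra hcon
    push_neg at hcon
    have hsub : Y ⊆ univ.filter fun y : Fin n → Fin q => hammingDist w y < ℓ := by
      intro y hy
      exact mem_filter.2 ⟨mem_univ _, hcon y hy⟩
    have := (card_le_card hsub).trans (ball_card_le q n ℓ w)
    omega
  obtain ⟨y, hyY, hyfar⟩ := hfar
  refine central q n e ℓ hq hl (C.filter (fun c => ∀ y ∈ Y, hammingDist c y ≤ t)) ?_ w y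
    hw ?_ hyfar
  · intro c1 h1 c2 h2 hne
    exact hC c1 (mem_of_mem_filter c1 h1) c2 (mem_of_mem_filter c2 h2) hne
  · intro c hcT
    have := (mem_filter.1 hcT).2 y hyY
    omega
end

section
/- Let ℓ ≥ 1, q ≥ 3, t = e + ℓ, b ≥ (ℓ(q-1)+1)(2e+2), and n ≥ ℓ-2 + (ℓ-1)²·2^b·(q-1)^{b-1}. For any e-error-correcting code C ⊆ Z_q^n and any N ≥ V_q(n, ℓ-1) + 1 channels each introducing at most t substitution errors (with distinct outputs), the maximum list size satisfies L ≤ ℓ(q-1) + 1. -/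
open Finset

private lemma key_id {n q : ℕ} (z a b : Fin n → Fin q) :
    hammingDist a b + ((univ.filter fun k => z k ≠ a k) ∩ (univ.filter fun k => z k ≠ b k)).card
      + (univ.filter fun k => a k = b k ∧ z k ≠ a k).card
      = hammingDist z a + hammingDist z b := by
  have h1 : (univ.filter fun k => z k ≠ a k) ∩ (univ.filter fun k => z k ≠ b k)
      = univ.filter fun k => z k ≠ a k ∧ z k ≠ b k := by
    rw [← Finset.filter_and]
  rw [h1]
  show (univ.filter fun k => a k ≠ b k).card + _ + _ = (univ.filter fun k => z k ≠ a k).card + (univ.filter fun k => z k ≠ b k).card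
  simp only [Finset.card_filter]
  rw [← Finset.sum_add_distrib, ← Finset.sum_add_distrib, ← Finset.sum_add_distrib]
  refine Finset.sum_congr rfl fun k _ => ?_
  by_cases h1 : z k = a k <;> by_cases h2 : z k = b k <;> by_cases h3 : a k = b k <;>
    simp_all <;> omega

private lemma ball_le {n q : ℕ} (z : Fin n → Fin q) (r : ℕ) :
    ((univ : Finset (Fin n → Fin q)).filter fun y => hammingDist z y ≤ r).card
      ≤ ∑ i ∈ Finset.range (r+1), (q-1)^i * n.choose i := by
  classical
  have hsub : ((univ : Finset (Fin n → Fin q)).filter fun y => hammingDist z y ≤ r)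
      ⊆ (Finset.range (r+1)).biUnion (fun i =>
          ((univ : Finset (Fin n)).powersetCard i).biUnion (fun A =>
            Fintype.piFinset (fun k => if k ∈ A then ({z k}ᶜ : Finset (Fin q)) else {z k}))) := by
    intro y hy
    rw [Finset.mem_filter] at hy
    obtain ⟨-, hy⟩ := hy
    rw [Finset.mem_biUnion]
    refine ⟨hammingDist z y, by simp [Nat.lt_succ_iff, hy], ?_⟩
    rw [Finset.mem_biUnion]
    refine ⟨univ.filter fun k => z k ≠ y k, by simp [Finset.mem_powersetCard]; rfl, ?_⟩
    rw [Fintype.mem_piFinset]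
    intro k
    by_cases h : z k = y k <;> simp [h, Ne.symm, ne_comm]
  refine le_trans (Finset.card_le_card hsub) ?_
  refine le_trans (Finset.card_biUnion_le) (Finset.sum_le_sum fun i _ => ?_)
  refine le_trans (Finset.card_biUnion_le) ?_
  have hA : ∀ A ∈ (univ : Finset (Fin n)).powersetCard i,
      (Fintype.piFinset (fun k => if k ∈ A then ({z k}ᶜ : Finset (Fin q)) else {z k})).card
        = (q-1)^i := by
    intro A hA
    rw [Finset.mem_powersetCard] at hA
    rw [Fintype.card_piFinset]
    calc (∏ k, (if k ∈ A then ({z k}ᶜ : Finset (Fin q)) else {z k}).card)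
        = ∏ k, (if k ∈ A then q - 1 else 1) := by
          refine Finset.prod_congr rfl fun k _ => ?_
          by_cases h : k ∈ A <;> simp [h, Finset.card_compl]
      _ = (q-1)^i := by
          rw [Finset.prod_ite_mem]
          simp [hA.2]
  rw [Finset.sum_congr rfl hA, Finset.sum_const, Finset.card_powersetCard]
  simp [mul_comm]

private lemma count_le {n q : ℕ} (W : Finset (Fin n)) (w : Fin n → Fin q) (m : ℕ)
    (Y : Finset (Fin n → Fin q))
    (h : ∀ y ∈ Y, (univ.filter fun k => k ∉ W ∧ y k ≠ w k).card ≤ m) :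
    Y.card ≤ q ^ W.card * ∑ i ∈ Finset.range (m+1), (q-1)^i * n.choose i := by
  classical
  set P : Finset (Fin n → Fin q) := Fintype.piFinset (fun k => if k ∈ W then (univ : Finset (Fin q)) else {w k}) with hP
  set B : Finset (Fin n → Fin q) := (univ : Finset (Fin n → Fin q)).filter (fun v => hammingDist w v ≤ m) with hB
  have hinj : ∀ y ∈ Y, (((fun k => if k ∈ W then y k else w k) : Fin n → Fin q),
      ((fun k => if k ∈ W then w k else y k) : Fin n → Fin q)) ∈ P ×ˢ B := by
    intro y hy
    rw [Finset.mem_product]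
    constructor
    · rw [hP, Fintype.mem_piFinset]
      intro k
      by_cases hk : k ∈ W <;> simp [hk]
    · rw [hB, Finset.mem_filter]
      refine ⟨Finset.mem_univ _, ?_⟩
      refine le_trans (le_of_eq ?_) (h y hy)
      show (univ.filter fun k => w k ≠ if k ∈ W then w k else y k).card = _
      congr 1
      refine Finset.filter_congr fun k _ => ?_
      by_cases hk : k ∈ W <;> simp [hk, ne_comm]
  have hcard : Y.card ≤ (P ×ˢ B).card := by
    refine Finset.card_le_card_of_injOn
      (fun y => (((fun k => if k ∈ W then y k else w k) : Fin n → Fin q),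
        ((fun k => if k ∈ W then w k else y k) : Fin n → Fin q))) (fun y hy => hinj y hy) ?_
    intro y1 h1 y2 h2 heq
    simp only [Prod.mk.injEq] at heq
    funext k
    by_cases hk : k ∈ W
    · have := congr_fun heq.1 k; simpa [hk] using this
    · have := congr_fun heq.2 k; simpa [hk] using this
  refine le_trans hcard ?_
  rw [Finset.card_product]
  refine Nat.mul_le_mul (le_of_eq ?_) (ball_le w m)
  rw [hP, Fintype.card_piFinset]
  calc (∏ k, (if k ∈ W then (univ : Finset (Fin q)) else {w k}).card)
      = ∏ k, (if k ∈ W then q else 1) := by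
        refine Finset.prod_congr rfl fun k _ => ?_
        by_cases hk : k ∈ W <;> simp [hk]
    _ = q ^ W.card := by rw [Finset.prod_ite_mem]; simp

private lemma arith {q b n ℓ : ℕ} (hq : 3 ≤ q) (hl2 : 2 ≤ ℓ) (hb : 6 ≤ b)
    (hn : ℓ - 2 + (ℓ - 1) ^ 2 * 2 ^ b * (q - 1) ^ (b - 1) ≤ n) :
    q ^ b * ∑ i ∈ Finset.range (ℓ-1), (q-1)^i * n.choose i
      ≤ ∑ i ∈ Finset.range ℓ, (q-1)^i * n.choose i := by
  have hbig : (ℓ - 1) ^ 2 * 2 ^ b * (q - 1) ^ (b - 1) ≤ n - (ℓ - 2) := by omega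
  have hnbig : 2048 * (ℓ-1)^2 ≤ n - (ℓ - 2) := by
    refine le_trans ?_ hbig
    have h2 : 2048 ≤ 2^b * (q-1)^(b-1) := by
      calc (2048 : ℕ) = 2^6 * 2^5 := by norm_num
        _ ≤ 2^b * 2^(b-1) := Nat.mul_le_mul (Nat.pow_le_pow_right (by norm_num) hb)
            (Nat.pow_le_pow_right (by norm_num) (by omega))
        _ ≤ 2^b * (q-1)^(b-1) := Nat.mul_le_mul_left _ (Nat.pow_le_pow_left (by omega) _)
    calc 2048 * (ℓ-1)^2 = (ℓ-1)^2 * 2048 := by ring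
      _ ≤ (ℓ-1)^2 * (2^b * (q-1)^(b-1)) := Nat.mul_le_mul_left _ h2
      _ = (ℓ-1)^2 * 2^b * (q-1)^(b-1) := by ring
  have hn' : 2 * ℓ ≤ n := by
    have h2 : 2048 * (ℓ-1) ≤ 2048 * (ℓ-1)^2 :=
      Nat.mul_le_mul_left 2048 (Nat.le_self_pow (by norm_num) _)
    omega
  -- termwise monotonicity
  have hmono : ∀ i, i + 1 ≤ ℓ - 1 → (q-1)^i * n.choose i ≤ (q-1)^(i+1) * n.choose (i+1) := by
    intro i hi
    have hch : n.choose (i+1) * (i+1) = n.choose i * (n - i) := Nat.choose_succ_right_eq n i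
    have h1 : (q-1)^i * n.choose i * (i+1) ≤ (q-1)^(i+1) * n.choose (i+1) * (i+1) := by
      calc (q-1)^i * n.choose i * (i+1) ≤ (q-1)^i * (n.choose i * (n - i)) := by
            have : i + 1 ≤ n - i := by omega
            calc (q-1)^i * n.choose i * (i+1) = (q-1)^i * (n.choose i * (i+1)) := by ring
              _ ≤ (q-1)^i * (n.choose i * (n-i)) :=
                  Nat.mul_le_mul_left _ (Nat.mul_le_mul_left _ this)
        _ = (q-1)^i * (n.choose (i+1) * (i+1)) := by rw [hch]
        _ ≤ (q-1)^(i+1) * n.choose (i+1) * (i+1) := by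
            have : (q-1)^i ≤ (q-1)^(i+1) := Nat.pow_le_pow_right (by omega) (by omega)
            calc (q-1)^i * (n.choose (i+1) * (i+1)) = (q-1)^i * n.choose (i+1) * (i+1) := by ring
              _ ≤ (q-1)^(i+1) * n.choose (i+1) * (i+1) :=
                  Nat.mul_le_mul_right _ (Nat.mul_le_mul_right _ this)
    exact Nat.le_of_mul_le_mul_right h1 (by omega)
  have htop : ∀ i, i ≤ ℓ - 2 → (q-1)^i * n.choose i ≤ (q-1)^(ℓ-2) * n.choose (ℓ-2) := by
    intro i hi
    obtain ⟨d, hd⟩ := Nat.le.dest hi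
    clear hi
    induction d generalizing i with
    | zero => subst hd; simp
    | succ d ih =>
      have h1 : (q-1)^i * n.choose i ≤ (q-1)^(i+1) * n.choose (i+1) := hmono i (by omega)
      exact le_trans h1 (ih (i+1) (by omega))
  have hsum : ∑ i ∈ Finset.range (ℓ-1), (q-1)^i * n.choose i
      ≤ (ℓ-1) * ((q-1)^(ℓ-2) * n.choose (ℓ-2)) := by
    calc ∑ i ∈ Finset.range (ℓ-1), (q-1)^i * n.choose i
        ≤ ∑ _i ∈ Finset.range (ℓ-1), (q-1)^(ℓ-2) * n.choose (ℓ-2) :=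
          Finset.sum_le_sum fun i hi => htop i (by simp at hi; omega)
      _ = (ℓ-1) * ((q-1)^(ℓ-2) * n.choose (ℓ-2)) := by
          rw [Finset.sum_const, Finset.card_range]; simp
  -- main step
  have hq2 : 2 * (q - 1) ≥ q := by omega
  have hpow : q ^ b ≤ 2 ^ b * (q-1) ^ b := by
    calc q ^ b ≤ (2 * (q-1)) ^ b := Nat.pow_le_pow_left (by omega) b
      _ = 2 ^ b * (q-1) ^ b := by rw [Nat.mul_pow]
  have hstep : q ^ b * ((ℓ-1) * ((q-1)^(ℓ-2) * n.choose (ℓ-2)))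
      ≤ (q-1)^(ℓ-1) * n.choose (ℓ-1) := by
    have hch : n.choose (ℓ-1) * (ℓ-1) = n.choose (ℓ-2) * (n - (ℓ-2)) := by
      have := Nat.choose_succ_right_eq n (ℓ-2)
      have h2 : ℓ - 2 + 1 = ℓ - 1 := by omega
      rwa [h2] at this
    have hmul : q ^ b * ((ℓ-1) * ((q-1)^(ℓ-2) * n.choose (ℓ-2))) * (ℓ-1)
        ≤ (q-1)^(ℓ-1) * n.choose (ℓ-1) * (ℓ-1) := by
      calc q ^ b * ((ℓ-1) * ((q-1)^(ℓ-2) * n.choose (ℓ-2))) * (ℓ-1)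
          = (ℓ-1)^2 * q^b * ((q-1)^(ℓ-2) * n.choose (ℓ-2)) := by ring
        _ ≤ ((n - (ℓ-2)) * (q-1)) * ((q-1)^(ℓ-2) * n.choose (ℓ-2)) := by
            refine Nat.mul_le_mul_right _ ?_
            calc (ℓ-1)^2 * q^b ≤ (ℓ-1)^2 * (2^b * (q-1)^b) := Nat.mul_le_mul_left _ hpow
              _ = ((ℓ-1)^2 * 2^b * (q-1)^(b-1)) * (q-1) := by
                  have : (q-1)^b = (q-1)^(b-1) * (q-1) := by
                    rw [← pow_succ]; congr 1; omega
                  rw [this]; ring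
              _ ≤ (n - (ℓ-2)) * (q-1) := Nat.mul_le_mul_right _ hbig
        _ = (q-1)^(ℓ-1) * (n.choose (ℓ-2) * (n - (ℓ-2))) := by
            have : (q-1)^(ℓ-1) = (q-1)^(ℓ-2) * (q-1) := by
              rw [← pow_succ]; congr 1; omega
            rw [this]; ring
        _ = (q-1)^(ℓ-1) * (n.choose (ℓ-1) * (ℓ-1)) := by rw [hch]
        _ = (q-1)^(ℓ-1) * n.choose (ℓ-1) * (ℓ-1) := by ring
    exact Nat.le_of_mul_le_mul_right hmul (by omega)
  calc q ^ b * ∑ i ∈ Finset.range (ℓ-1), (q-1)^i * n.choose i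
      ≤ q ^ b * ((ℓ-1) * ((q-1)^(ℓ-2) * n.choose (ℓ-2))) := Nat.mul_le_mul_left _ hsum
    _ ≤ (q-1)^(ℓ-1) * n.choose (ℓ-1) := hstep
    _ ≤ ∑ i ∈ Finset.range ℓ, (q-1)^i * n.choose i := by
        refine Finset.single_le_sum (f := fun i => (q-1)^i * n.choose i) (fun i _ => Nat.zero_le _) ?_
        simp; omega

private lemma arith_case1 (L Q d : ℕ) :
    ¬ (((L+1)*(Q+2)+2) * ((L+2+d)+1)
        ≤ ((L+1)*(Q+2)+2) * (L+1) + ((L+2+d)*(Q+2) + (L+2+d))) := by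
  have h : ((L+1)*(Q+2)+2) * ((L+2+d)+1)
      = ((L+1)*(Q+2)+2) * (L+1) + ((L+2+d)*(Q+2) + (L+2+d))
        + (L*Q*d + 2*L*d + d + L*Q + L + 2) := by ring
  omega

private lemma arith_case2 (L Q r u : ℕ) :
    ¬ (((L+1)*(Q+2)+1) * (((L+2+r)+(1+u))+1)
        ≤ ((L+1)*(Q+2)+1) * (L+1) + ((L+2+r)*(Q+2) + (L+2+r))) := by
  have h : ((L+1)*(Q+2)+1) * (((L+2+r)+(1+u))+1)
      = ((L+1)*(Q+2)+1) * (L+1) + ((L+2+r)*(Q+2) + (L+2+r))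
        + (L*Q*r + L*Q*u + 2*L*Q + 2*L*r + 2*L*u + 3*L + Q*u + Q + 3*u + 3) := by ring
  omega

private lemma sunflower {n q e ℓ : ℕ} (hq : 3 ≤ q) (hl : 1 ≤ ℓ)
    (S : Finset (Fin n → Fin q)) (hcard : S.card = ℓ * (q-1) + 2)
    (hdist : ∀ c ∈ S, ∀ c' ∈ S, c ≠ c' → 2*e+1 ≤ hammingDist c c')
    (z y : Fin n → Fin q)
    (hz : ∀ c ∈ S, hammingDist z c ≤ e+1)
    (hy : ∀ c ∈ S, hammingDist y c ≤ e+ℓ) :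
    hammingDist z y ≤ ℓ - 1 := by
  classical
  by_contra hcon
  set m := hammingDist z y with hmdef
  have hm : ℓ ≤ m := by omega
  set T : Finset (Fin n) := univ.filter fun k => z k ≠ y k with hTdef
  have hTcard : T.card = m := rfl
  -- pairwise structure
  have hpair : ∀ c ∈ S, ∀ c' ∈ S, c ≠ c' →
      ((univ.filter fun k => z k ≠ c k) ∩ (univ.filter fun k => z k ≠ c' k)).card
        + (univ.filter fun k => c k = c' k ∧ z k ≠ c k).card + (2*e+1)
      ≤ hammingDist z c + hammingDist z c' := by
    intro c hc c' hc' hne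
    have h1 := key_id z c c'
    have h2 := hdist c hc c' hc' hne
    omega
  set good : Finset (Fin n → Fin q) := S.filter fun c => hammingDist z c = e+1 with hgdef
  set bad : Finset (Fin n → Fin q) := S \ good with hbdef
  have hgoodS : good ⊆ S := Finset.filter_subset _ _
  have hbadcard : bad.card ≤ 1 := by
    rw [Finset.card_le_one]
    intro c hc c' hc'
    by_contra hne
    have hcS : c ∈ S := (Finset.mem_sdiff.1 hc).1
    have hc'S : c' ∈ S := (Finset.mem_sdiff.1 hc').1
    have hce : hammingDist z c ≤ e := by
      have h1 := hz c hcS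
      have h2 : ¬ (hammingDist z c = e + 1) := by
        intro h; exact (Finset.mem_sdiff.1 hc).2 (Finset.mem_filter.2 ⟨hcS, h⟩)
      omega
    have hc'e : hammingDist z c' ≤ e := by
      have h1 := hz c' hc'S
      have h2 : ¬ (hammingDist z c' = e + 1) := by
        intro h; exact (Finset.mem_sdiff.1 hc').2 (Finset.mem_filter.2 ⟨hc'S, h⟩)
      omega
    have htri : hammingDist c c' ≤ hammingDist z c + hammingDist z c' :=
      hammingDist_triangle_left c c' z
    have := hdist c hcS c' hc'S hne
    omega
  have hcardsplit : (S \ good).card + good.card = S.card :=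
    Finset.card_sdiff_add_card_eq_card hgoodS
  have hG : ℓ * (q-1) + 1 ≤ good.card := by
    rw [hbdef] at hbadcard; omega
  -- value injectivity among good codewords
  have hvinj : ∀ c ∈ good, ∀ c' ∈ good, ∀ k, z k ≠ c k → z k ≠ c' k → c k = c' k → c = c' := by
    intro c hc c' hc' k h1 h2 h3
    by_contra hne
    have hcS := hgoodS hc
    have hc'S := hgoodS hc'
    have hp := hpair c hcS c' hc'S hne
    have hge : hammingDist z c = e + 1 := (Finset.mem_filter.1 hc).2
    have hg'e : hammingDist z c' = e + 1 := (Finset.mem_filter.1 hc').2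
    have hk1 : k ∈ (univ.filter fun k => z k ≠ c k) ∩ (univ.filter fun k => z k ≠ c' k) := by
      simp only [Finset.mem_inter, Finset.mem_filter, Finset.mem_univ, true_and]
      exact ⟨h1, h2⟩
    have hk2 : k ∈ univ.filter fun k => c k = c' k ∧ z k ≠ c k := by
      simp only [Finset.mem_filter, Finset.mem_univ, true_and]
      exact ⟨h3, h1⟩
    have hc1 : 1 ≤ ((univ.filter fun k => z k ≠ c k) ∩ (univ.filter fun k => z k ≠ c' k)).card :=
      Finset.card_pos.2 ⟨k, hk1⟩
    have hc2 : 1 ≤ (univ.filter fun k => c k = c' k ∧ z k ≠ c k).card :=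
      Finset.card_pos.2 ⟨k, hk2⟩
    omega
  -- the per-codeword identity
  have hphi : ∀ c ∈ S, m + hammingDist z c
      = hammingDist y c + (T ∩ (univ.filter fun k => z k ≠ c k)).card
        + (univ.filter fun k => y k = c k ∧ z k ≠ y k).card := by
    intro c hc
    have h0 := key_id z y c
    rw [← hTdef] at h0
    omega
  have hAsub : ∀ c : Fin n → Fin q,
      (univ.filter fun k => y k = c k ∧ z k ≠ y k) ⊆ T ∩ (univ.filter fun k => z k ≠ c k) := by
    intro c k hk
    rw [Finset.mem_filter] at hk
    obtain ⟨-, h1, h2⟩ := hk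
    rw [Finset.mem_inter, hTdef]
    constructor
    · simp [h2]
    · simp [h1 ▸ h2]
  have hphiIneq : ∀ c ∈ good, m + 1 ≤ ℓ + ((T ∩ (univ.filter fun k => z k ≠ c k)).card
      + (univ.filter fun k => y k = c k ∧ z k ≠ y k).card) := by
    intro c hc
    have h1 := hphi c (hgoodS hc)
    have h2 : hammingDist z c = e + 1 := (Finset.mem_filter.1 hc).2
    have h3 := hy c (hgoodS hc)
    omega
  have hIpos : ∀ c ∈ good, 1 ≤ (T ∩ (univ.filter fun k => z k ≠ c k)).card := by
    intro c hc
    have h1 := hphiIneq c hc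
    have h2 := Finset.card_le_card (hAsub c)
    omega
  -- sum swaps
  have hinterT : ∀ c : Fin n → Fin q,
      T ∩ (univ.filter fun k => z k ≠ c k) = T.filter fun k => z k ≠ c k := by
    intro c; ext k
    simp [hTdef, Finset.mem_filter, and_assoc]
  have hAT : (∀ c : Fin n → Fin q,
      (univ.filter fun k => y k = c k ∧ z k ≠ y k) = T.filter fun k => y k = c k) := by
    intro c; ext k
    simp [hTdef, Finset.mem_filter]
    tauto
  have hswap1 : ∑ c ∈ good, (T ∩ (univ.filter fun k => z k ≠ c k)).card
      = ∑ k ∈ T, (good.filter fun c => z k ≠ c k).card := by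
    have h1 : ∀ c ∈ good, (T ∩ (univ.filter fun k => z k ≠ c k)).card
        = ∑ k ∈ T, if z k ≠ c k then 1 else 0 := by
      intro c _; rw [hinterT c, Finset.card_filter]
    rw [Finset.sum_congr rfl h1, Finset.sum_comm]
    exact Finset.sum_congr rfl fun k _ => (Finset.card_filter _ _).symm
  have hswap2 : ∑ c ∈ good, (univ.filter fun k => y k = c k ∧ z k ≠ y k).card
      = ∑ k ∈ T, (good.filter fun c => y k = c k).card := by
    have h1 : ∀ c ∈ good, (univ.filter fun k => y k = c k ∧ z k ≠ y k).card
        = ∑ k ∈ T, if y k = c k then 1 else 0 := by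
      intro c _; rw [hAT c, Finset.card_filter]
    rw [Finset.sum_congr rfl h1, Finset.sum_comm]
    exact Finset.sum_congr rfl fun k _ => (Finset.card_filter _ _).symm
  -- per-coordinate bounds
  have hk1 : ∀ k ∈ T, (good.filter fun c => z k ≠ c k).card ≤ q - 1 := by
    intro k _
    have : (good.filter fun c => z k ≠ c k).card ≤ ({z k}ᶜ : Finset (Fin q)).card := by
      refine Finset.card_le_card_of_injOn (fun c => c k) ?_ ?_
      · intro c hc
        rw [Finset.mem_coe, Finset.mem_filter] at hc
        simp [Finset.mem_compl, Ne.symm hc.2]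
      · intro c hc c' hc' heq
        rw [Finset.coe_filter, Set.mem_setOf_eq] at hc hc'
        exact hvinj c (hc.1) c' (hc'.1) k hc.2 hc'.2 heq
    rwa [Finset.card_compl, Finset.card_singleton, Fintype.card_fin] at this
  have hk2 : ∀ k ∈ T, (good.filter fun c => y k = c k).card ≤ 1 := by
    intro k hk
    rw [Finset.card_le_one]
    intro c hc c' hc'
    rw [Finset.mem_filter] at hc hc'
    have hzk : z k ≠ y k := by
      rw [hTdef, Finset.mem_filter] at hk; exact hk.2
    refine hvinj c hc.1 c' hc'.1 k ?_ ?_ (hc.2.symm.trans hc'.2)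
    · exact fun h => hzk (h.trans hc.2.symm)
    · exact fun h => hzk (h.trans hc'.2.symm)
  -- master summation lemmas (kept as ∀-statements so that `omega` ignores them)
  have hhit_master : ∀ f : Fin n → ℕ,
      (∀ k ∈ T, (good.filter fun c => z k ≠ c k).card ≤ f k) →
      good.card ≤ ∑ k ∈ T, f k := by
    intro f hf
    have h0 : good.card = ∑ _c ∈ good, 1 := by rw [Finset.sum_const, smul_eq_mul, mul_one]
    calc good.card = ∑ _c ∈ good, 1 := h0
      _ ≤ ∑ c ∈ good, (T ∩ (univ.filter fun k => z k ≠ c k)).card := Finset.sum_le_sum hIpos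
      _ = ∑ k ∈ T, (good.filter fun c => z k ≠ c k).card := hswap1
      _ ≤ ∑ k ∈ T, f k := Finset.sum_le_sum hf
  have hsum_master : ∀ f : Fin n → ℕ,
      (∀ k ∈ T, (good.filter fun c => z k ≠ c k).card
        + (good.filter fun c => y k = c k).card ≤ f k) →
      good.card * (m + 1) ≤ good.card * ℓ + ∑ k ∈ T, f k := by
    intro f hf
    have h1 : ∑ c ∈ good, (m+1) ≤ ∑ c ∈ good, (ℓ + ((T ∩ (univ.filter fun k => z k ≠ c k)).card
        + (univ.filter fun k => y k = c k ∧ z k ≠ y k).card)) :=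
      Finset.sum_le_sum hphiIneq
    simp only [Finset.sum_add_distrib, Finset.sum_const, smul_eq_mul] at h1
    rw [hswap1, hswap2] at h1
    rw [mul_add]
    refine le_trans h1 (Nat.add_le_add_left ?_ _)
    rw [← Finset.sum_add_distrib]
    exact Finset.sum_le_sum hf
  clear hswap1 hswap2
  have hq1 : q - 1 + 1 = q := by omega
  obtain ⟨L, hL⟩ : ∃ L, ℓ = L + 1 := ⟨ℓ - 1, by omega⟩
  obtain ⟨Q, hQ⟩ : ∃ Q, q - 1 = Q + 2 := ⟨q - 3, by omega⟩
  by_cases hbade : bad = ∅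
  -- CASE 1 : no exceptional codeword
  · have hgood_eq : good = S := by
      rw [hbdef] at hbade
      exact Finset.eq_of_subset_of_card_le hgoodS (by
        have h5 := Finset.card_sdiff_add_card_eq_card hgoodS
        rw [hbade] at h5; simp at h5; omega)
    have hGG : good.card = ℓ * (q-1) + 2 := by rw [hgood_eq, hcard]
    have hGS : good.card ≤ m * (q-1) := by
      refine le_trans (hhit_master (fun _ => q - 1) hk1) ?_
      rw [Finset.sum_const, hTcard, smul_eq_mul]
    have hfin : good.card * (m + 1) ≤ good.card * ℓ + m * q := by
      refine le_trans (hsum_master (fun _ => q) ?_) ?_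
      · intro k hk
        show (good.filter fun c => z k ≠ c k).card + (good.filter fun c => y k = c k).card ≤ q
        have h1 := hk1 k hk
        have h2 := hk2 k hk
        generalize (good.filter fun c => z k ≠ c k).card = a at h1 ⊢
        generalize (good.filter fun c => y k = c k).card = b at h2 ⊢
        omega
      · rw [Finset.sum_const, hTcard, smul_eq_mul]
    have hm1 : ℓ + 1 ≤ m := by
      by_contra hmle
      have h2 : m ≤ ℓ := by omega
      have h3 : m * (q-1) ≤ ℓ * (q-1) := Nat.mul_le_mul_right _ h2
      omega
    obtain ⟨d, hd⟩ : ∃ d, m = L + 2 + d := ⟨m - (L+2), by omega⟩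
    refine arith_case1 L Q d ?_
    have hfin2 : good.card * (m + 1) ≤ good.card * ℓ + (m * (q-1) + m) := by
      have hmq : m * q = m * (q-1) + m := by
        calc m * q = m * ((q-1) + 1) := by rw [hq1]
          _ = m * (q-1) + m := by ring
      omega
    rw [hGG, hL, hQ, hd] at hfin2
    exact hfin2
  -- CASE 2 : one exceptional codeword c₀
  · obtain ⟨c₀, hc₀⟩ : ∃ c₀, bad = {c₀} := by
      have h1 : bad.card = 1 := by
        have := Finset.card_pos.2 (Finset.nonempty_of_ne_empty hbade)
        omega
      exact Finset.card_eq_one.1 h1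
    have hc₀S : c₀ ∈ S := by
      have : c₀ ∈ bad := by rw [hc₀]; exact Finset.mem_singleton_self _
      exact (Finset.mem_sdiff.1 this).1
    have hc₀good : c₀ ∉ good := by
      have : c₀ ∈ bad := by rw [hc₀]; exact Finset.mem_singleton_self _
      exact (Finset.mem_sdiff.1 this).2
    have hc₀e : hammingDist z c₀ ≤ e := by
      have h1 := hz c₀ hc₀S
      have h2 : ¬ (hammingDist z c₀ = e + 1) := fun h => hc₀good (Finset.mem_filter.2 ⟨hc₀S, h⟩)
      omega
    have hGG : good.card = ℓ * (q-1) + 1 := by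
      rw [hbdef] at hc₀
      have h2 : (S \ good).card = 1 := by rw [hc₀]; simp
      omega
    have hc₀elow : e ≤ hammingDist z c₀ := by
      obtain ⟨c₁, hc₁⟩ : good.Nonempty := Finset.card_pos.1 (by omega)
      have hc₁S := hgoodS hc₁
      have hne : c₁ ≠ c₀ := fun h => hc₀good (h ▸ hc₁)
      have h1 := hdist c₁ hc₁S c₀ hc₀S hne
      have h2 : hammingDist c₁ c₀ ≤ hammingDist z c₁ + hammingDist z c₀ :=
        hammingDist_triangle_left c₁ c₀ z
      have h3 : hammingDist z c₁ = e + 1 := (Finset.mem_filter.1 hc₁).2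
      omega
    -- disjointness of supports : good codewords never differ from z where c₀ does
    have hdisj : ∀ c ∈ good, ∀ k, z k ≠ c k → z k ≠ c₀ k → False := by
      intro c hc k h1 h2
      have hcS := hgoodS hc
      have hne : c ≠ c₀ := fun h => hc₀good (h ▸ hc)
      have hp := hpair c hcS c₀ hc₀S hne
      have hge : hammingDist z c = e + 1 := (Finset.mem_filter.1 hc).2
      have hk1' : k ∈ (univ.filter fun k => z k ≠ c k) ∩ (univ.filter fun k => z k ≠ c₀ k) := by
        simp only [Finset.mem_inter, Finset.mem_filter, Finset.mem_univ, true_and]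
        exact ⟨h1, h2⟩
      have hc1 : 1 ≤ ((univ.filter fun k => z k ≠ c k) ∩ (univ.filter fun k => z k ≠ c₀ k)).card :=
        Finset.card_pos.2 ⟨k, hk1'⟩
      omega
    -- split T
    set T0 : Finset (Fin n) := T.filter (fun k => z k ≠ c₀ k) with hT0def
    set T1 : Finset (Fin n) := T.filter (fun k => ¬ (z k ≠ c₀ k)) with hT1def
    have hsplit : T0.card + T1.card = m := by
      rw [hT0def, hT1def, Finset.card_filter_add_card_filter_not, hTcard]
    -- per-coordinate counts vanish where c₀ differs from z
    have hvan1 : ∀ k ∈ T, z k ≠ c₀ k → (good.filter fun c => z k ≠ c k) = ∅ := by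
      intro k _ hzc₀
      rw [Finset.filter_eq_empty_iff]
      intro c hc hzc
      exact hdisj c hc k hzc hzc₀
    have hvan2 : ∀ k ∈ T, z k ≠ c₀ k → (good.filter fun c => y k = c k) = ∅ := by
      intro k hk hzc₀
      rw [Finset.filter_eq_empty_iff]
      intro c hc hyc
      rw [hTdef, Finset.mem_filter] at hk
      exact hdisj c hc k (fun h => hk.2 (h.trans hyc.symm)) hzc₀
    have hsumIte : ∀ B : ℕ, (∑ k ∈ T, if z k ≠ c₀ k then 0 else B) = T1.card * B := by
      intro B
      rw [Finset.sum_ite, Finset.sum_const, Finset.sum_const]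
      simp [hT1def, smul_eq_mul]
    have hGS : good.card ≤ T1.card * (q-1) := by
      refine le_trans (hhit_master (fun k => if z k ≠ c₀ k then 0 else q - 1) ?_) ?_
      · intro k hk
        by_cases hzc₀ : z k ≠ c₀ k
        · rw [hvan1 k hk hzc₀]; simp [hzc₀]
        · simp only [hzc₀, if_false]
          exact hk1 k hk
      · rw [hsumIte]
    have hfin : good.card * (m + 1) ≤ good.card * ℓ + T1.card * q := by
      refine le_trans (hsum_master (fun k => if z k ≠ c₀ k then 0 else q) ?_) ?_
      · intro k hk
        by_cases hzc₀ : z k ≠ c₀ k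
        · rw [hvan1 k hk hzc₀, hvan2 k hk hzc₀]; simp [hzc₀]
        · simp only [hzc₀, if_false]
          show (good.filter fun c => z k ≠ c k).card + (good.filter fun c => y k = c k).card ≤ q
          have h1 := hk1 k hk
          have h2 := hk2 k hk
          generalize (good.filter fun c => z k ≠ c k).card = a at h1 ⊢
          generalize (good.filter fun c => y k = c k).card = b at h2 ⊢
          omega
      · rw [hsumIte]
    have ha1 : ℓ + 1 ≤ T1.card := by
      by_contra hmle
      have h2 : T1.card ≤ ℓ := by omega
      have h3 : T1.card * (q-1) ≤ ℓ * (q-1) := Nat.mul_le_mul_right _ h2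
      omega
    -- m₀ ≥ 1
    have hphic₀ := hphi c₀ hc₀S
    have hT0I : (T ∩ (univ.filter fun k => z k ≠ c₀ k)) = T0 := by
      rw [hT0def]; ext k; simp [Finset.mem_filter, and_assoc]
    have hAc₀ := Finset.card_le_card (hAsub c₀)
    have hm0pos : 1 ≤ T0.card := by
      have hyc₀ := hy c₀ hc₀S
      rw [hT0I] at hphic₀ hAc₀
      omega
    obtain ⟨u, hu⟩ : ∃ u, T0.card = 1 + u := ⟨T0.card - 1, by omega⟩
    obtain ⟨r, hr⟩ : ∃ r, T1.card = L + 2 + r := ⟨T1.card - (L+2), by omega⟩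
    refine arith_case2 L Q r u ?_
    have hfin2 : good.card * (m + 1) ≤ good.card * ℓ + (T1.card * (q-1) + T1.card) := by
      have hmq : T1.card * q = T1.card * (q-1) + T1.card := by
        calc T1.card * q = T1.card * ((q-1) + 1) := by rw [hq1]
          _ = T1.card * (q-1) + T1.card := by ring
      omega
    have hmeq : m = (L + 2 + r) + (1 + u) := by omega
    rw [hGG, hL, hQ, hr, hmeq] at hfin2
    exact hfin2

private lemma far_contra {n q b ℓ : ℕ} (hq : 3 ≤ q) (hl2 : 2 ≤ ℓ) (hb6 : 6 ≤ b)
    (hn : ℓ - 2 + (ℓ - 1) ^ 2 * 2 ^ b * (q - 1) ^ (b - 1) ≤ n)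
    (Y : Finset (Fin n → Fin q))
    (hY : (∑ i ∈ Finset.range ℓ, (q - 1) ^ i * n.choose i) + 1 ≤ Y.card)
    (W : Finset (Fin n)) (hW : W.card ≤ b) (w : Fin n → Fin q)
    (ho : ∀ y ∈ Y, (univ.filter fun k => k ∉ W ∧ y k ≠ w k).card ≤ ℓ - 2) : False := by
  have h1 := count_le W w (ℓ-2) Y ho
  have h2 : ℓ - 2 + 1 = ℓ - 1 := by omega
  rw [h2] at h1
  have h3 : q ^ W.card ≤ q ^ b := Nat.pow_le_pow_right (by omega) hW
  have h4 : Y.card ≤ q ^ b * ∑ i ∈ Finset.range (ℓ-1), (q-1)^i * n.choose i :=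
    le_trans h1 (Nat.mul_le_mul_right _ h3)
  have hsum : (∑ i ∈ Finset.range ℓ, (q-1)^i * n.choose i) + 1
      ≤ ∑ i ∈ Finset.range ℓ, (q-1)^i * n.choose i :=
    le_trans hY (le_trans h4 (arith hq hl2 hb6 hn))
  exact Nat.not_succ_le_self _ hsum

private lemma step1 {n q e ℓ b : ℕ} (hq : 3 ≤ q) (hl : 1 ≤ ℓ)
    (hb : (ℓ * (q - 1) + 1) * (2 * e + 2) ≤ b)
    (hn : ℓ - 2 + (ℓ - 1) ^ 2 * 2 ^ b * (q - 1) ^ (b - 1) ≤ n)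
    (hb6 : 6 ≤ b)
    (Y : Finset (Fin n → Fin q))
    (hY : (∑ i ∈ Finset.range ℓ, (q - 1) ^ i * n.choose i) + 1 ≤ Y.card)
    (c c' : Fin n → Fin q)
    (hc : ∀ y ∈ Y, hammingDist c y ≤ e + ℓ) (hc' : ∀ y ∈ Y, hammingDist c' y ≤ e + ℓ) :
    hammingDist c c' ≤ 2 * e + 2 := by
  classical
  by_contra hd
  have hδ : 2 * e + 3 ≤ hammingDist c c' := by omega
  have hYpos : 1 ≤ Y.card := le_trans (Nat.le_add_left 1 _) hY
  obtain ⟨y₀, hy₀⟩ := Finset.card_pos.1 (by omega : 0 < Y.card)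
  -- per-output inequality
  have hineq : ∀ y ∈ Y, hammingDist c c'
      + 2 * (univ.filter fun k => c k = c' k ∧ y k ≠ c k).card ≤ 2 * (e + ℓ) := by
    intro y hy
    have hkid := key_id y c c'
    have hsub : (univ.filter fun k => c k = c' k ∧ y k ≠ c k)
        ⊆ (univ.filter fun k => y k ≠ c k) ∩ (univ.filter fun k => y k ≠ c' k) := by
      intro k hk
      rw [Finset.mem_filter] at hk
      rw [Finset.mem_inter]
      refine ⟨by simp [hk.2.2], by simp [hk.2.1 ▸ hk.2.2]⟩
    have hsc := Finset.card_le_card hsub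
    have h1 : hammingDist y c ≤ e + ℓ := by rw [hammingDist_comm]; exact hc y hy
    have h2 : hammingDist y c' ≤ e + ℓ := by rw [hammingDist_comm]; exact hc' y hy
    omega
  -- ℓ ≥ 2
  have hl2 : 2 ≤ ℓ := by
    have h1 := hineq y₀ hy₀
    omega
  -- apply the counting bound
  have hWcard : (univ.filter fun k => c k ≠ c' k).card ≤ b := by
    have h0 : (univ.filter fun k => c k ≠ c' k).card = hammingDist c c' := rfl
    have h1 : hammingDist c c' ≤ hammingDist c y₀ + hammingDist y₀ c' :=
      hammingDist_triangle c y₀ c'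
    have h2 : hammingDist y₀ c' = hammingDist c' y₀ := hammingDist_comm _ _
    have h3 : hammingDist c c' ≤ 2 * (e + ℓ) := by
      have := hc y₀ hy₀; have := hc' y₀ hy₀; omega
    have h4 : 2 * ℓ ≤ ℓ * (q - 1) := by
      calc 2 * ℓ = ℓ * 2 := by ring
        _ ≤ ℓ * (q-1) := Nat.mul_le_mul_left _ (by omega)
    have h5 : (2 * ℓ + 1) * (2 * e + 2) ≤ (ℓ * (q - 1) + 1) * (2 * e + 2) :=
      Nat.mul_le_mul_right _ (by omega)
    have h6 : (2 * ℓ + 1) * (2 * e + 2) = 4*ℓ*e + 4*ℓ + 2*e + 2 := by ring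
    have h7 : 2 * (e + ℓ) ≤ 4*ℓ*e + 4*ℓ + 2*e + 2 := by
      have : 0 ≤ 4*ℓ*e := Nat.zero_le _
      omega
    omega
  refine far_contra hq hl2 hb6 hn Y hY (univ.filter fun k => c k ≠ c' k) hWcard c ?_
  intro y hy
  have h1 := hineq y hy
  have heq : (univ.filter fun k => k ∉ (univ.filter fun k => c k ≠ c' k) ∧ y k ≠ c k)
      = (univ.filter fun k => c k = c' k ∧ y k ≠ c k) := by
    ext k
    simp only [Finset.mem_filter, Finset.mem_univ, true_and]
    constructor
    · rintro ⟨hk1, hk2⟩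
      exact ⟨by by_contra hne; exact hk1 (by simp [hne]), hk2⟩
    · rintro ⟨hk1, hk2⟩
      exact ⟨by simp [hk1], hk2⟩
  rw [heq]
  omega

/-- Theorem "Listapituus": let `ℓ ≥ 1`, `q ≥ 3`, `t = e + ℓ`, `b ≥ (ℓ(q-1)+1)(2e+2)` and
`n ≥ ℓ-2 + (ℓ-1)²·2^b·(q-1)^{b-1}`. For any `e`-error-correcting code `C ⊆ (Z_q)^n` and any set
`Y` of at least `V_q(n,ℓ-1)+1` distinct output words obtained from a transmitted codeword
`x ∈ C` by at most `t` substitutions per channel, the list size satisfies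
`|T(Y)| ≤ ℓ(q-1)+1`. -/
theorem stmt13 (q n e ℓ t b : ℕ) (ht : t = e + ℓ) (hq : 3 ≤ q) (hl : 1 ≤ ℓ)
    (hb : (ℓ * (q - 1) + 1) * (2 * e + 2) ≤ b)
    (hn : ℓ - 2 + (ℓ - 1) ^ 2 * 2 ^ b * (q - 1) ^ (b - 1) ≤ n)
    (C : Finset (Fin n → Fin q))
    (hC : ∀ c1 ∈ C, ∀ c2 ∈ C, c1 ≠ c2 → 2 * e + 1 ≤ hammingDist c1 c2)
    (Y : Finset (Fin n → Fin q))
    (hY : (∑ i ∈ Finset.range ℓ, (q - 1) ^ i * n.choose i) + 1 ≤ Y.card)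
    (x : Fin n → Fin q) (hx : x ∈ C) (hxY : ∀ y ∈ Y, hammingDist x y ≤ t) :
    (C.filter (fun c => ∀ y ∈ Y, hammingDist c y ≤ t)).card ≤ ℓ * (q - 1) + 1 := by
  classical
  by_contra hcon
  push_neg at hcon
  set F := C.filter (fun c => ∀ y ∈ Y, hammingDist c y ≤ t) with hF
  have hcon2 : ℓ * (q - 1) + 2 ≤ F.card := hcon
  -- basic facts
  have hb6 : 6 ≤ b := by
    have h1 : 2 ≤ ℓ * (q-1) := by
      calc (2:ℕ) = 1 * 2 := by norm_num
        _ ≤ ℓ * (q-1) := Nat.mul_le_mul hl (by omega)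
    have h2 : 3 * 2 ≤ (ℓ * (q - 1) + 1) * (2 * e + 2) :=
      Nat.mul_le_mul (by omega) (by omega)
    omega
  have hFY : ∀ c ∈ F, ∀ y ∈ Y, hammingDist c y ≤ e + ℓ := by
    intro c hc y hy
    have := (Finset.mem_filter.1 hc).2 y hy
    omega
  have hxF : x ∈ F := Finset.mem_filter.2 ⟨hx, hxY⟩
  have herase : ℓ * (q - 1) + 1 ≤ (F.erase x).card := by
    rw [Finset.card_erase_of_mem hxF]; omega
  obtain ⟨S₀, hS₀sub, hS₀card⟩ := Finset.exists_subset_card_eq herase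
  have hxS₀ : x ∉ S₀ := fun h => (Finset.mem_erase.1 (hS₀sub h)).1 rfl
  set S := insert x S₀ with hS
  have hScard : S.card = ℓ * (q - 1) + 2 := by
    rw [hS, Finset.card_insert_of_notMem hxS₀, hS₀card]
  have hSF : S ⊆ F := by
    intro c hc
    rcases Finset.mem_insert.1 hc with h | h
    · exact h ▸ hxF
    · exact Finset.erase_subset _ _ (hS₀sub h)
  have hSC : S ⊆ C := le_trans hSF (Finset.filter_subset _ _)
  have hSY : ∀ c ∈ S, ∀ y ∈ Y, hammingDist c y ≤ e + ℓ := fun c hc => hFY c (hSF hc)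
  have hSdist : ∀ c ∈ S, ∀ c' ∈ S, c ≠ c' → 2*e+1 ≤ hammingDist c c' :=
    fun c hc c' hc' => hC c (hSC hc) c' (hSC hc')
  -- the union of supports U
  have hstep1 : ∀ c ∈ F, hammingDist x c ≤ 2 * e + 2 := by
    intro c hc
    refine step1 hq hl hb hn hb6 Y hY x c ?_ (hFY c hc)
    intro y hy
    have := hxY y hy; omega
  set U : Finset (Fin n) := S.biUnion (fun c => univ.filter fun k => x k ≠ c k) with hU
  have hUb : U.card ≤ b := by
    refine le_trans (Finset.card_biUnion_le) ?_
    rw [hS, Finset.sum_insert hxS₀]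
    have h0 : (univ.filter fun k => x k ≠ x k).card = 0 := by simp
    have h1 : ∀ c ∈ S₀, (univ.filter fun k => x k ≠ c k).card ≤ 2*e+2 := by
      intro c hc
      exact hstep1 c (Finset.erase_subset _ _ (hS₀sub hc))
    have h2 : ∑ c ∈ S₀, (univ.filter fun k => x k ≠ c k).card ≤ S₀.card * (2*e+2) := by
      calc ∑ c ∈ S₀, (univ.filter fun k => x k ≠ c k).card ≤ ∑ _c ∈ S₀, (2*e+2) :=
            Finset.sum_le_sum h1
        _ = S₀.card * (2*e+2) := by rw [Finset.sum_const, smul_eq_mul]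
    calc (univ.filter fun k => x k ≠ x k).card + ∑ c ∈ S₀, (univ.filter fun k => x k ≠ c k).card
        = ∑ c ∈ S₀, (univ.filter fun k => x k ≠ c k).card := by rw [h0, Nat.zero_add]
      _ ≤ S₀.card * (2*e+2) := h2
      _ = (ℓ * (q - 1) + 1) * (2 * e + 2) := by rw [hS₀card]
      _ ≤ b := hb
  have hoffU : ∀ c ∈ S, ∀ k, k ∉ U → x k = c k := by
    intro c hc k hk
    by_contra hne
    exact hk (Finset.mem_biUnion.2 ⟨c, hc, Finset.mem_filter.2 ⟨Finset.mem_univ _, hne⟩⟩)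
  by_cases hzex : ∃ z, ∀ c ∈ S, hammingDist z c ≤ e + 1
  -- CASE A : deep center exists ⇒ Y is inside a small ball
  · obtain ⟨z, hz⟩ := hzex
    have hball : ∀ y ∈ Y, hammingDist z y ≤ ℓ - 1 := by
      intro y hy
      refine sunflower hq hl S hScard hSdist z y hz ?_
      intro c hc
      rw [hammingDist_comm]
      exact hSY c hc y hy
    have hsub : Y ⊆ (univ.filter fun y' => hammingDist z y' ≤ ℓ - 1) :=
      fun y hy => Finset.mem_filter.2 ⟨Finset.mem_univ _, hball y hy⟩
    have h1 : Y.card ≤ ∑ i ∈ Finset.range (ℓ-1+1), (q-1)^i * n.choose i :=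
      le_trans (Finset.card_le_card hsub) (ball_le z (ℓ-1))
    have h2 : ℓ - 1 + 1 = ℓ := by omega
    rw [h2] at h1
    exact Nat.not_succ_le_self _ (le_trans hY h1)
  -- CASE B : no deep center
  · push_neg at hzex
    have hkey : ∀ y ∈ Y, e + 2 + (univ.filter fun k => k ∉ U ∧ y k ≠ x k).card ≤ e + ℓ := by
      intro y hy
      obtain ⟨c, hcS, hfar⟩ := hzex (fun k => if k ∈ U then y k else x k)
      have hid1 : hammingDist (fun k => if k ∈ U then y k else x k) c
          = (univ.filter fun k => k ∈ U ∧ c k ≠ y k).card := by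
        show (univ.filter fun k => (if k ∈ U then y k else x k) ≠ c k).card = _
        congr 1
        refine Finset.filter_congr fun k _ => ?_
        by_cases hk : k ∈ U
        · simp [hk, ne_comm]
        · simp [hk, (hoffU c hcS k hk)]
      have hid2 : hammingDist c y = (univ.filter fun k => k ∈ U ∧ c k ≠ y k).card
          + (univ.filter fun k => k ∉ U ∧ y k ≠ x k).card := by
        have hsplit : hammingDist c y
            = ((univ.filter fun k => c k ≠ y k).filter (fun k => k ∈ U)).card
              + ((univ.filter fun k => c k ≠ y k).filter (fun k => k ∉ U)).card := by
          rw [Finset.card_filter_add_card_filter_not]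
          rfl
        have ha : ((univ.filter fun k => c k ≠ y k).filter (fun k => k ∈ U))
            = univ.filter fun k => k ∈ U ∧ c k ≠ y k := by
          rw [Finset.filter_filter]
          refine Finset.filter_congr fun k _ => by tauto
        have hb' : ((univ.filter fun k => c k ≠ y k).filter (fun k => k ∉ U))
            = univ.filter fun k => k ∉ U ∧ y k ≠ x k := by
          rw [Finset.filter_filter]
          refine Finset.filter_congr fun k _ => ?_
          constructor
          · rintro ⟨h1, h2⟩
            exact ⟨h2, fun h => h1 ((hoffU c hcS k h2).symm ▸ h.symm ▸ rfl)⟩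
          · rintro ⟨h1, h2⟩
            refine ⟨fun h => h2 ?_, h1⟩
            rw [← h, ← hoffU c hcS k h1]
        rw [hsplit, ha, hb']
      have h3 : hammingDist c y ≤ e + ℓ := hSY c hcS y hy
      rw [hid1] at hfar
      omega
    have hl2 : 2 ≤ ℓ := by
      have hYpos : 1 ≤ Y.card := le_trans (Nat.le_add_left 1 _) hY
      obtain ⟨y₀, hy₀⟩ := Finset.card_pos.1 (by omega : 0 < Y.card)
      have := hkey y₀ hy₀
      omega
    refine far_contra hq hl2 hb6 hn Y hY U hUb x ?_
    intro y hy
    have := hkey y hy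
    omega
end

section
/- Lower bound on list size: let t = e + ℓ, n ≥ e(q-1)ℓ + t, and N ≤ V_q(n, ℓ-1) + 1. Then there exists an e-error-correcting code C ⊆ Z_q^n and a set Y of N distinct words such that |∩_{y∈Y} B_t(y) ∩ C| ≥ (q-1)ℓ + 1; hence L ≥ (q-1)ℓ + 1. -/
open Finset
open Fin.NatCast

/-- codeword `k` of the explicit code. -/
def cwd (q n e ℓ : ℕ) [NeZero q] (k : ℕ) : Fin n → Fin q := fun i =>
  if k < (q-1)*ℓ ∧ i.val = k / (q-1) then ((k % (q-1) + 1 : ℕ) : Fin q)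
  else if ℓ + k*e ≤ i.val ∧ i.val < ℓ + k*e + e then (1:Fin q) else 0

section cw
variable {q n e ℓ : ℕ} [NeZero q] (hq : 2 ≤ q)
include hq

lemma val_head (k : ℕ) : ((k % (q-1) + 1 : ℕ) : Fin q).val = k % (q-1) + 1 :=
  Fin.val_cast_of_lt (by have := Nat.mod_lt k (show 0 < q-1 by omega); omega)

lemma val_one_q : ((1 : Fin q) : ℕ) = 1 := by
  rw [Fin.val_one']; exact Nat.mod_eq_of_lt (by omega)

omit hq in
lemma cwd_norm_le (k : ℕ) : hammingNorm (cwd q n e ℓ k) ≤ e + 1 := by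
  have h0 : hammingNorm (cwd q n e ℓ k) = (univ.filter fun i => cwd q n e ℓ k i ≠ 0).card := rfl
  rw [h0, ← Finset.card_image_of_injective _ Fin.val_injective]
  calc ((univ.filter fun i => cwd q n e ℓ k i ≠ 0).image Fin.val).card
      ≤ (insert (k / (q-1)) (Finset.Ico (ℓ + k*e) (ℓ + k*e + e))).card := by
        apply Finset.card_le_card
        intro m hm
        simp only [Finset.mem_image, mem_filter, mem_univ, true_and] at hm
        obtain ⟨i, hi, rfl⟩ := hm
        unfold cwd at hi
        split_ifs at hi with h1 h2
        · exact Finset.mem_insert.mpr (Or.inl h1.2)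
        · exact Finset.mem_insert.mpr (Or.inr (Finset.mem_Ico.mpr h2))
        · exact absurd rfl hi
    _ ≤ e + 1 := by
        refine (Finset.card_insert_le _ _).trans ?_
        rw [Nat.card_Ico]; omega

omit hq in
lemma cwd_dist_small (k : ℕ) (y : Fin n → Fin q) (hy : hammingNorm y ≤ ℓ - 1)
    (hl : 1 ≤ ℓ) : hammingDist (cwd q n e ℓ k) y ≤ e + ℓ := by
  calc hammingDist (cwd q n e ℓ k) y
      ≤ hammingDist (cwd q n e ℓ k) 0 + hammingDist 0 y := hammingDist_triangle _ _ _
    _ = hammingNorm (cwd q n e ℓ k) + hammingNorm y := by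
        rw [hammingDist_zero_right, hammingDist_zero_left]
    _ ≤ (e + 1) + (ℓ - 1) := Nat.add_le_add (cwd_norm_le k) hy
    _ ≤ e + ℓ := by omega

omit hq in
lemma cwd_dist_y0 (k : ℕ)
    (y0 : Fin n → Fin q) (hy0' : ∀ i : Fin n, ¬ i.val < ℓ → y0 i = 0) :
    hammingDist (cwd q n e ℓ k) y0 ≤ ℓ + e := by
  have h0 : hammingDist (cwd q n e ℓ k) y0
      = (univ.filter fun i => cwd q n e ℓ k i ≠ y0 i).card := rfl
  rw [h0, ← Finset.card_image_of_injective _ Fin.val_injective]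
  calc ((univ.filter fun i => cwd q n e ℓ k i ≠ y0 i).image Fin.val).card
      ≤ (Finset.range ℓ ∪ Finset.Ico (ℓ + k*e) (ℓ + k*e + e)).card := by
        apply Finset.card_le_card
        intro m hm
        simp only [Finset.mem_image, mem_filter, mem_univ, true_and] at hm
        obtain ⟨i, hi, rfl⟩ := hm
        by_cases hlt : i.val < ℓ
        · exact Finset.mem_union_left _ (Finset.mem_range.mpr hlt)
        · refine Finset.mem_union_right _ (Finset.mem_Ico.mpr ?_)
          rw [hy0' i hlt] at hi
          unfold cwd at hi
          split_ifs at hi with h1 h2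
          · exfalso
            apply hlt
            rw [h1.2]
            exact Nat.div_lt_of_lt_mul h1.1
          · exact h2
          · exact absurd rfl hi
    _ ≤ ℓ + e := by
        refine (Finset.card_union_le _ _).trans ?_
        rw [Finset.card_range, Nat.card_Ico]; omega

lemma cwd_dist_pair (hl : 1 ≤ ℓ) (hn : e * (q - 1) * ℓ + (e + ℓ) ≤ n)
    (k₁ k₂ : ℕ) (h12 : k₁ < k₂) (h2 : k₂ ≤ (q-1)*ℓ) :
    2*e + 1 ≤ hammingDist (cwd q n e ℓ k₁) (cwd q n e ℓ k₂) := by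
  have hk₁ : k₁ < (q-1)*ℓ := lt_of_lt_of_le h12 h2
  have hpos : 0 < q - 1 := by omega
  have hh₁ : k₁ / (q-1) < ℓ := Nat.div_lt_of_lt_mul hk₁
  have hln : ℓ ≤ n := by nlinarith
  have hbn : ℓ + k₂*e + e ≤ n := by
    have h3 : k₂ * e ≤ ((q-1)*ℓ) * e := Nat.mul_le_mul_right e h2
    nlinarith
  set D : Finset ℕ :=
    insert (k₁/(q-1)) (Finset.Ico (ℓ + k₁*e) (ℓ + k₁*e + e) ∪ Finset.Ico (ℓ + k₂*e) (ℓ + k₂*e + e))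
    with hD
  have hblocks : ℓ + k₁*e + e ≤ ℓ + k₂*e := by
    have h4 : (k₁+1)*e ≤ k₂*e := Nat.mul_le_mul_right e h12
    have h5 : (k₁+1)*e = k₁*e + e := by ring
    omega
  have hcardD : D.card = 2*e + 1 := by
    rw [hD, Finset.card_insert_of_notMem, Finset.card_union_of_disjoint]
    · rw [Nat.card_Ico, Nat.card_Ico]; omega
    · rw [Finset.disjoint_left]
      intro a ha hb
      rw [Finset.mem_Ico] at ha hb
      omega
    · intro hmem
      rw [Finset.mem_union, Finset.mem_Ico, Finset.mem_Ico] at hmem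
      omega
  have hsub : D ⊆ (univ.filter fun i => cwd q n e ℓ k₁ i ≠ cwd q n e ℓ k₂ i).image Fin.val := by
    intro m hm
    rw [hD, Finset.mem_insert, Finset.mem_union, Finset.mem_Ico, Finset.mem_Ico] at hm
    have hmn : m < n := by rcases hm with rfl | hm | hm <;> omega
    refine Finset.mem_image.mpr ⟨⟨m, hmn⟩, Finset.mem_filter.mpr ⟨mem_univ _, ?_⟩, rfl⟩
    rcases hm with rfl | hm | hm
    · -- head position
      have e1 : cwd q n e ℓ k₁ ⟨k₁/(q-1), hmn⟩ = ((k₁ % (q-1) + 1 : ℕ) : Fin q) := by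
        unfold cwd; exact if_pos ⟨hk₁, rfl⟩
      rw [e1]
      by_cases hc : k₂ < (q-1)*ℓ ∧ k₁/(q-1) = k₂/(q-1)
      · have e2 : cwd q n e ℓ k₂ ⟨k₁/(q-1), hmn⟩ = ((k₂ % (q-1) + 1 : ℕ) : Fin q) := by
          unfold cwd; exact if_pos ⟨hc.1, hc.2⟩
        rw [e2]
        intro hEq
        have hv := congrArg Fin.val hEq
        rw [val_head hq, val_head hq] at hv
        have hmod : k₁ % (q-1) = k₂ % (q-1) := by omega
        have h₁' := Nat.div_add_mod k₁ (q-1)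
        have h₂' := Nat.div_add_mod k₂ (q-1)
        rw [hc.2, hmod] at h₁'
        omega
      · have e2 : cwd q n e ℓ k₂ ⟨k₁/(q-1), hmn⟩ = 0 := by
          unfold cwd
          rw [if_neg, if_neg]
          · rintro ⟨hmm, -⟩
            simp only [Fin.val_mk] at hmm
            omega
          · rintro ⟨hcc1, hcc2⟩
            simp only [Fin.val_mk] at hcc2
            exact hc ⟨hcc1, hcc2⟩
        rw [e2]
        intro hEq
        have hv := congrArg Fin.val hEq
        rw [val_head hq] at hv
        simp at hv
    · -- block of k₁
      have e1 : cwd q n e ℓ k₁ ⟨m, hmn⟩ = 1 := by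
        unfold cwd
        rw [if_neg, if_pos hm]
        rintro ⟨-, hmm⟩
        simp only [Fin.val_mk] at hmm
        omega
      have e2 : cwd q n e ℓ k₂ ⟨m, hmn⟩ = 0 := by
        unfold cwd
        rw [if_neg, if_neg]
        · rintro ⟨hmm, -⟩
          simp only [Fin.val_mk] at hmm
          omega
        · rintro ⟨hk2, hmm⟩
          simp only [Fin.val_mk] at hmm
          have := Nat.div_lt_of_lt_mul hk2
          omega
      rw [e1, e2]
      intro hEq
      have hv := congrArg Fin.val hEq
      rw [val_one_q hq] at hv
      simp at hv
    · -- block of k₂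
      have e1 : cwd q n e ℓ k₁ ⟨m, hmn⟩ = 0 := by
        unfold cwd
        rw [if_neg, if_neg]
        · rintro ⟨-, hmm⟩
          simp only [Fin.val_mk] at hmm
          omega
        · rintro ⟨-, hmm⟩
          simp only [Fin.val_mk] at hmm
          omega
      have e2 : cwd q n e ℓ k₂ ⟨m, hmn⟩ = 1 := by
        unfold cwd
        rw [if_neg, if_pos hm]
        rintro ⟨hk2, hmm⟩
        simp only [Fin.val_mk] at hmm
        have := Nat.div_lt_of_lt_mul hk2
        omega
      rw [e1, e2]
      intro hEq
      have hv := congrArg Fin.val hEq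
      rw [val_one_q hq] at hv
      simp at hv
  calc 2*e+1 = D.card := hcardD.symm
    _ ≤ ((univ.filter fun i => cwd q n e ℓ k₁ i ≠ cwd q n e ℓ k₂ i).image Fin.val).card :=
        Finset.card_le_card hsub
    _ = hammingDist (cwd q n e ℓ k₁) (cwd q n e ℓ k₂) := by
        rw [Finset.card_image_of_injective _ Fin.val_injective]; rfl

end cw
lemma card_fixed_support (q n : ℕ) [NeZero q] (s : Finset (Fin n)) :
    (univ.filter fun x : Fin n → Fin q => (univ.filter fun i => x i ≠ 0) = s).card
      = (q - 1) ^ s.card := by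
  have hcard : Fintype.card {v : Fin q // v ≠ 0} = q - 1 := by
    simp [Fintype.card_subtype_compl]
  rw [show ((q-1)^s.card) = Fintype.card (∀ _ : s, {v : Fin q // v ≠ 0}) by
    simp [Fintype.card_pi, hcard]]
  rw [← Finset.card_univ]
  have key : ∀ x : Fin n → Fin q, x ∈ (univ.filter fun x : Fin n → Fin q =>
      (univ.filter fun i => x i ≠ 0) = s) → ∀ i : Fin n, x i ≠ 0 ↔ i ∈ s := by
    intro x hx i
    simp only [mem_filter, mem_univ, true_and] at hx
    rw [← hx, mem_filter]
    simp
  refine Finset.card_bij'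
    (fun x hx => fun i : s => (⟨x i, (key x hx i).mpr i.2⟩ : {v : Fin q // v ≠ 0}))
    (fun f _ => fun i : Fin n => if h : i ∈ s then (f ⟨i, h⟩ : Fin q) else 0)
    (fun x hx => mem_univ _) ?_ ?_ ?_
  · intro f hf
    simp only [mem_filter, mem_univ, true_and]
    ext i
    simp only [mem_filter, mem_univ, true_and]
    constructor
    · intro h
      by_contra hi
      simp [hi] at h
    · intro hi
      simp only [hi, dif_pos]
      exact (f ⟨i, hi⟩).2
  · intro x hx
    funext i
    by_cases h : i ∈ s
    · simp [h]
    · simp only [h, dif_neg, not_false_iff]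
      by_contra hne
      exact h ((key x hx i).mp (Ne.symm hne))
  · intro f hf
    funext i
    ext
    simp [i.2]

lemma card_norm_ball (q n r : ℕ) [NeZero q] :
    (univ.filter fun x : Fin n → Fin q => hammingNorm x ≤ r).card
      = ∑ i ∈ range (r+1), (q-1)^i * n.choose i := by
  have h1 : (univ.filter fun x : Fin n → Fin q => hammingNorm x ≤ r)
      = (range (r+1)).biUnion (fun i => univ.filter fun x => hammingNorm x = i) := by
    ext x
    simp only [mem_filter, mem_univ, true_and, mem_biUnion, mem_range, Nat.lt_succ_iff]
    constructor
    · exact fun h => ⟨_, h, rfl⟩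
    · rintro ⟨i, hi, rfl⟩; exact hi
  rw [h1, card_biUnion]
  · refine Finset.sum_congr rfl fun i _ => ?_
    have h2 : (univ.filter fun x : Fin n → Fin q => hammingNorm x = i)
        = (Finset.powersetCard i (univ : Finset (Fin n))).biUnion
            (fun s => univ.filter fun x => (univ.filter fun j => x j ≠ 0) = s) := by
      ext x
      simp only [mem_filter, mem_univ, true_and, mem_biUnion, Finset.mem_powersetCard]
      constructor
      · intro h
        exact ⟨_, ⟨subset_univ _, h⟩, rfl⟩
      · rintro ⟨s, ⟨-, hs⟩, rfl⟩
        exact hs ▸ rfl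
    rw [h2, card_biUnion]
    · rw [Finset.sum_congr rfl (fun s hs => by
        rw [card_fixed_support q n s, (Finset.mem_powersetCard.mp hs).2])]
      rw [Finset.sum_const, Finset.card_powersetCard, card_univ, Fintype.card_fin,
        smul_eq_mul, mul_comm]
    · intro s hs u hu hsu
      simp only [Finset.disjoint_left, mem_filter, mem_univ, true_and]
      rintro x rfl h2
      exact hsu h2
  · intro a ha b hb hab
    simp only [Finset.disjoint_left, mem_filter, mem_univ, true_and]
    rintro x rfl h2
    exact hab h2

/-- Theorem "ell(q-1) list" (lower bound): with `t = e + ℓ`, `n ≥ e(q-1)ℓ + t` and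
`N ≤ V_q(n,ℓ-1) + 1`, there exist an `e`-error-correcting code `C ⊆ (Z_q)^n` and a set `Y` of
`N` distinct words such that `|∩_{y∈Y} B_t(y) ∩ C| ≥ (q-1)ℓ + 1`; hence `L ≥ (q-1)ℓ + 1`. -/
theorem stmt14 (q n e ℓ t N : ℕ) (ht : t = e + ℓ) (hq : 2 ≤ q) (hl : 1 ≤ ℓ)
    (hn : e * (q - 1) * ℓ + t ≤ n)
    (hN : N ≤ (∑ i ∈ Finset.range ℓ, (q - 1) ^ i * n.choose i) + 1) :
    ∃ C : Finset (Fin n → Fin q),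
      (∀ c1 ∈ C, ∀ c2 ∈ C, c1 ≠ c2 → 2 * e + 1 ≤ hammingDist c1 c2) ∧
      ∃ Y : Finset (Fin n → Fin q), Y.card = N ∧
        (q - 1) * ℓ + 1 ≤ (C.filter (fun c => ∀ y ∈ Y, hammingDist c y ≤ t)).card := by
  haveI : NeZero q := ⟨by omega⟩
  have hn' : e * (q - 1) * ℓ + (e + ℓ) ≤ n := by omega
  have hln : ℓ ≤ n := by omega
  have h10 : (1 : Fin q) ≠ 0 := by
    intro h
    have hv := congrArg Fin.val h
    rw [val_one_q hq] at hv
    simp at hv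
  -- the special word y0 and the ball B
  set y0 : Fin n → Fin q := (fun i => if i.val < ℓ then 1 else 0) with hy0def
  set B : Finset (Fin n → Fin q) := univ.filter (fun x => hammingNorm x ≤ ℓ - 1) with hBdef
  have hBcard : B.card = ∑ i ∈ Finset.range ℓ, (q - 1) ^ i * n.choose i := by
    have h := card_norm_ball q n (ℓ - 1)
    have hr : ℓ - 1 + 1 = ℓ := by omega
    rw [hr] at h
    exact h
  have hy0norm : hammingNorm y0 = ℓ := by
    have himg : (univ.filter fun i : Fin n => y0 i ≠ 0).image Fin.val = Finset.range ℓ := by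
      ext m
      simp only [Finset.mem_image, mem_filter, mem_univ, true_and, Finset.mem_range]
      constructor
      · rintro ⟨i, hi, rfl⟩
        by_contra hlt
        rw [hy0def] at hi
        simp only [if_neg hlt] at hi
        exact hi rfl
      · intro hm
        refine ⟨⟨m, lt_of_lt_of_le hm hln⟩, ?_, rfl⟩
        rw [hy0def]
        simp only [Fin.val_mk, if_pos hm]
        exact h10
    have h0 : hammingNorm y0 = (univ.filter fun i : Fin n => y0 i ≠ 0).card := rfl
    rw [h0, ← Finset.card_image_of_injective _ Fin.val_injective, himg, Finset.card_range]
  have hy0B : y0 ∉ B := by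
    rw [hBdef, mem_filter]
    rintro ⟨-, hB2⟩
    rw [hy0norm] at hB2
    omega
  -- choose Y
  have hScard : (insert y0 B).card = (∑ i ∈ Finset.range ℓ, (q - 1) ^ i * n.choose i) + 1 := by
    rw [Finset.card_insert_of_notMem hy0B, hBcard]
  obtain ⟨Y, hYS, hYcard⟩ := Finset.exists_subset_card_eq (hScard ▸ hN :
    N ≤ (insert y0 B).card)
  -- the code C
  refine ⟨(Finset.range ((q-1)*ℓ+1)).image (cwd q n e ℓ), ?_, Y, hYcard, ?_⟩
  · -- minimum distance
    intro c1 hc1 c2 hc2 hne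
    obtain ⟨k₁, hk₁, rfl⟩ := Finset.mem_image.mp hc1
    obtain ⟨k₂, hk₂, rfl⟩ := Finset.mem_image.mp hc2
    rw [Finset.mem_range] at hk₁ hk₂
    rcases lt_trichotomy k₁ k₂ with h | h | h
    · exact cwd_dist_pair hq hl hn' k₁ k₂ h (by omega)
    · exact absurd (h ▸ rfl) hne
    · rw [hammingDist_comm]
      exact cwd_dist_pair hq hl hn' k₂ k₁ h (by omega)
  · -- the filter is everything
    have hfil : ((Finset.range ((q-1)*ℓ+1)).image (cwd q n e ℓ)).filter
        (fun c => ∀ y ∈ Y, hammingDist c y ≤ t) = (Finset.range ((q-1)*ℓ+1)).image (cwd q n e ℓ) := by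
      apply Finset.filter_true_of_mem
      intro c hc y hy
      obtain ⟨k, hk, rfl⟩ := Finset.mem_image.mp hc
      rcases Finset.mem_insert.mp (hYS hy) with rfl | hyB
      · calc hammingDist (cwd q n e ℓ k) y0 ≤ ℓ + e :=
              cwd_dist_y0 k y0 (fun i hi => by rw [hy0def]; simp only [if_neg hi])
          _ = t := by omega
      · rw [hBdef, mem_filter] at hyB
        calc hammingDist (cwd q n e ℓ k) y ≤ e + ℓ := cwd_dist_small k y hyB.2 hl
          _ = t := by omega
    rw [hfil, Finset.card_image_of_injOn, Finset.card_range]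
    intro k₁ h₁ k₂ h₂ hEq
    simp only [Finset.coe_range, Set.mem_Iio] at h₁ h₂
    by_contra hne
    rcases lt_or_gt_of_ne hne with h | h
    · have := cwd_dist_pair hq hl hn' k₁ k₂ h (by omega)
      rw [hEq, hammingDist_self] at this
      omega
    · have := cwd_dist_pair hq hl hn' k₂ k₁ h (by omega)
      rw [← hEq, hammingDist_self] at this
      omega
end
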